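/- arXiv:2303.11451 — 4 statements merged into one kernel-verified Lean document; each statement's English description precedes it below -/
import Mathlib

section
/- Let α be a countable ordinal with ω ≤ α. If the index poset I is α-wqo and each poset P_i (i ∈ I, each with least element 0_i) is α-wqo, then the Dress–Schiffels product ⊗^{DS}_{i∈I} P_i is α-wqo. -/
universe u v

open Set

/-- `r` is an initial segment of `X ⊆ ℕ`: `r ⊆ X` and every element of `X` not in `r`
is greater than every element of `r`. -/
def NatInitSeg (r : Finset ℕ) (X : Set ℕ) : Prop :=
  ↑r ⊆ X ∧ ∀ x ∈ X, x ∉ r → ∀ y ∈ r, y < x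

/-- `B` is a barrier: an infinite inclusion-antichain of finite subsets of `ℕ` such that
every infinite subset of the base has an initial segment in `B`. -/
def IsBarrier (B : Set (Finset ℕ)) : Prop :=
  B.Infinite ∧
  (∀ x ∈ B, ∀ y ∈ B, x ⊆ y → x = y) ∧
  (∀ X : Set ℕ, X ⊆ (⋃ b ∈ B, (↑b : Set ℕ)) → X.Infinite → ∃ r ∈ B, NatInitSeg r X)

/-- `t` is a proper initial segment of the finite set `s`. -/
def FinsetProperInitSeg (t s : Finset ℕ) : Prop :=
  t ⊆ s ∧ t ≠ s ∧ ∀ x ∈ s, x ∉ t → ∀ y ∈ t, y < x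

/-- The shift-extension relation `r ◁ s`: `min r < min s` and `r \ {min r}` is a proper
initial segment of `s`. -/
def ShiftExt (r s : Finset ℕ) : Prop :=
  ∃ m ∈ r, (∀ x ∈ r, m ≤ x) ∧ (∀ y ∈ s, m < y) ∧ FinsetProperInitSeg (r.erase m) s

/-- A map `f` from a barrier `B` into `X` is good for the relation `le`. -/
def GoodOn {X : Type*} (le : X → X → Prop) (B : Set (Finset ℕ)) (f : Finset ℕ → X) : Prop :=
  ∃ s ∈ B, ∃ t ∈ B, ShiftExt s t ∧ le (f s) (f t)

/-- Well quasi-order for a relation: every `ℕ`-sequence is good. -/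
def IsWqoRel {X : Type*} (le : X → X → Prop) : Prop :=
  ∀ p : ℕ → X, ∃ i j : ℕ, i < j ∧ le (p i) (p j)

/-- Better quasi-order: every map from every barrier is good. -/
def IsBqoRel {X : Type*} (le : X → X → Prop) : Prop :=
  ∀ B : Set (Finset ℕ), IsBarrier B → ∀ f : Finset ℕ → X, GoodOn le B f

/-- The (strict) lexicographic order on finite subsets of `ℕ`:
`r < s` iff `r ≠ s` and the least element of the symmetric difference belongs to `r`. -/
def FinsetLexLt (r s : Finset ℕ) : Prop :=
  r ≠ s ∧ ∀ m ∈ symmDiff r s, (∀ x ∈ symmDiff r s, m ≤ x) → m ∈ r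

/-- The barrier `B` has lexicographic order type `≤ α`: there is a lex-strictly-increasing
ordinal-valued function on `B` bounded by `α`. -/
def BarrierTypeLE (B : Set (Finset ℕ)) (α : Ordinal.{0}) : Prop :=
  ∃ g : Finset ℕ → Ordinal.{0}, (∀ b ∈ B, g b < α) ∧
    ∀ b₁ ∈ B, ∀ b₂ ∈ B, FinsetLexLt b₁ b₂ → g b₁ < g b₂

/-- `α`-wqo: every map from a barrier of order type `≤ α` is good. -/
def IsAlphaWqoRel {X : Type*} (le : X → X → Prop) (α : Ordinal.{0}) : Prop :=
  ∀ B : Set (Finset ℕ), IsBarrier B → BarrierTypeLE B α →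
    ∀ f : Finset ℕ → X, GoodOn le B f

/-- `σ`-bqo: a wqo which is a countable union of sets, each bqo in the induced order. -/
def IsSigmaBqoRel {X : Type*} (le : X → X → Prop) : Prop :=
  IsWqoRel le ∧
  ∃ S : ℕ → Set X, (⋃ n, S n) = Set.univ ∧
    ∀ n, IsBqoRel (fun x y : S n => le x.1 y.1)

/-- Sequences of length `α` from `P`. -/
abbrev OrdSeq (P : Type u) (α : Ordinal.{0}) := {β : Ordinal.{0} // β < α} → P

/-- The embeddability quasi-order on `P^α`. -/
def OrdSeqLE {P : Type u} [Preorder P] {α : Ordinal.{0}} (f g : OrdSeq P α) : Prop :=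
  ∃ ρ : {β : Ordinal.{0} // β < α} → {β : Ordinal.{0} // β < α},
    StrictMono ρ ∧ ∀ γ, f γ ≤ g (ρ γ)

/-- Sequences of length `< α` from `P`. -/
abbrev OrdSeqLt (P : Type u) (α : Ordinal.{0}) :=
  Σ β : {β : Ordinal.{0} // β < α}, ({γ : Ordinal.{0} // γ < β.1} → P)

/-- The embeddability quasi-order on `P^{<α}`. -/
def OrdSeqLtLE {P : Type u} [Preorder P] {α : Ordinal.{0}} (f g : OrdSeqLt P α) : Prop :=
  ∃ ρ : {γ : Ordinal.{0} // γ < f.1.1} → {γ : Ordinal.{0} // γ < g.1.1},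
    StrictMono ρ ∧ ∀ δ, f.2 δ ≤ g.2 (ρ δ)

/-- The Dress–Schiffels relation: `f ≤DS g` iff `f i < g i` for every `i` maximal in
`Δ(f,g) = {j | f j ≠ g j}`. -/
def DSle {I : Type u} [PartialOrder I] {P : I → Type v} [∀ i, PartialOrder (P i)]
    (f g : ∀ i, P i) : Prop :=
  ∀ i : I, Maximal (fun j => f j ≠ g j) i → f i < g i

/-- The underlying set of the Dress–Schiffels product: finitely supported functions. -/
abbrev DSProd (I : Type u) [PartialOrder I] (P : I → Type v) [∀ i, PartialOrder (P i)]
    [∀ i, OrderBot (P i)] :=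
  {f : ∀ i, P i // {i | f i ≠ ⊥}.Finite}

namespace DS10

/-- `C` is a front on the infinite set `S`. -/
def FrontOn (C : Set (Finset ℕ)) (S : Set ℕ) : Prop :=
  (∀ b ∈ C, ↑b ⊆ S) ∧ (∀ x ∈ C, ∀ y ∈ C, x ⊆ y → x = y) ∧
  (∀ X : Set ℕ, X ⊆ S → X.Infinite → ∃ r ∈ C, NatInitSeg r X)

lemma initSeg_full {r : Finset ℕ} {X : Set ℕ} (h : NatInitSeg r X) {x y : ℕ}
    (hx : x ∈ X) (hy : y ∈ r) (hxy : x ≤ y) : x ∈ r := by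
  by_contra hxr
  exact absurd hxy (not_le.2 (h.2 x hx hxr y hy))

lemma initSeg_comparable {r r' : Finset ℕ} {X : Set ℕ}
    (h : NatInitSeg r X) (h' : NatInitSeg r' X) : r ⊆ r' ∨ r' ⊆ r := by
  by_cases hc : r ⊆ r'
  · exact Or.inl hc
  · right
    obtain ⟨a, har, har'⟩ := Finset.not_subset.1 hc
    intro b hbr'
    by_contra hbr
    have h1 := h.2 b (h'.1 hbr') hbr a har
    have h2 := h'.2 a (h.1 har) har' b hbr'
    omega

lemma initSeg_unique {C : Set (Finset ℕ)} {S : Set ℕ} (hC : FrontOn C S)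
    {r r' : Finset ℕ} {X : Set ℕ} (hr : r ∈ C) (hr' : r' ∈ C)
    (h : NatInitSeg r X) (h' : NatInitSeg r' X) : r = r' := by
  rcases initSeg_comparable h h' with hh | hh
  · exact hC.2.1 r hr r' hr' hh
  · exact (hC.2.1 r' hr' r hr hh).symm

lemma front_not_empty_mem {B : Set (Finset ℕ)} (hB : B.Infinite)
    (hanti : ∀ x ∈ B, ∀ y ∈ B, x ⊆ y → x = y) : ∅ ∉ B := by
  intro h
  apply hB
  have : B ⊆ {∅} := by
    intro y hy
    have := hanti ∅ h y hy (Finset.empty_subset y)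
    simp [← this]
  exact Set.Finite.subset (Set.finite_singleton _) this

lemma subFront {C : Set (Finset ℕ)} {S X : Set ℕ} (hC : FrontOn C S) (hX : X ⊆ S) :
    FrontOn {b ∈ C | ↑b ⊆ X} X := by
  refine ⟨fun b hb => hb.2, fun x hx y hy hxy => hC.2.1 x hx.1 y hy.1 hxy, ?_⟩
  intro Y hYX hYinf
  obtain ⟨r, hrC, hr⟩ := hC.2.2 Y (hYX.trans hX) hYinf
  exact ⟨r, ⟨hrC, hr.1.trans hYX⟩, hr⟩

lemma front_infinite {C : Set (Finset ℕ)} {S : Set ℕ} (hC : FrontOn C S)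
    (hS : S.Infinite) (h0 : ∅ ∉ C) : C.Infinite := by
  intro hfin
  have hT : (⋃ b ∈ C, (↑b : Set ℕ)).Finite := hfin.biUnion (fun b _ => b.finite_toSet)
  have hXinf : (S \ ⋃ b ∈ C, (↑b : Set ℕ)).Infinite := hS.diff hT
  obtain ⟨r, hrC, hr⟩ := hC.2.2 _ Set.diff_subset hXinf
  rcases Finset.eq_empty_or_nonempty r with rfl | ⟨a, ha⟩
  · exact h0 hrC
  · have := hr.1 (Finset.mem_coe.2 ha)
    exact this.2 (Set.mem_biUnion hrC (Finset.mem_coe.2 ha))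

lemma front_isBarrier {C : Set (Finset ℕ)} {S : Set ℕ} (hC : FrontOn C S)
    (hS : S.Infinite) (h0 : ∅ ∉ C) : IsBarrier C := by
  refine ⟨front_infinite hC hS h0, hC.2.1, ?_⟩
  intro X hXsub hXinf
  refine hC.2.2 X ?_ hXinf
  intro x hx
  obtain ⟨b, hb, hxb⟩ := by simpa using hXsub hx
  exact hC.1 b hb hxb

lemma lexLt_union {r d d' : Finset ℕ} (hdisj : ∀ y ∈ r, ∀ x ∈ d ∪ d', y < x)
    (h : FinsetLexLt d d') : FinsetLexLt (r ∪ d) (r ∪ d') := by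
  have hrd : ∀ x, x ∈ r → x ∈ d → False := fun x hxr hxd =>
    lt_irrefl x (hdisj x hxr x (Finset.mem_union_left _ hxd))
  have hrd' : ∀ x, x ∈ r → x ∈ d' → False := fun x hxr hxd =>
    lt_irrefl x (hdisj x hxr x (Finset.mem_union_right _ hxd))
  have hsymm : symmDiff (r ∪ d) (r ∪ d') = symmDiff d d' := by
    ext x
    simp only [Finset.mem_symmDiff, Finset.mem_union]
    constructor
    · rintro (⟨hx1, hx2⟩ | ⟨hx1, hx2⟩)
      · rcases hx1 with hx1 | hx1
        · exact absurd (Or.inl hx1) hx2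
        · by_cases hxd' : x ∈ d'
          · exact absurd (Or.inr hxd') hx2
          · exact Or.inl ⟨hx1, hxd'⟩
      · rcases hx1 with hx1 | hx1
        · exact absurd (Or.inl hx1) hx2
        · by_cases hxd : x ∈ d
          · exact absurd (Or.inr hxd) hx2
          · exact Or.inr ⟨hx1, hxd⟩
    · rintro (⟨hx1, hx2⟩ | ⟨hx1, hx2⟩)
      · refine Or.inl ⟨Or.inr hx1, ?_⟩
        rintro (hxr | hxd')
        · exact hrd x hxr hx1
        · exact hx2 hxd'
      · refine Or.inr ⟨Or.inr hx1, ?_⟩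
        rintro (hxr | hxd)
        · exact hrd' x hxr hx1
        · exact hx2 hxd
  constructor
  · intro heq
    apply h.1
    ext x
    constructor
    · intro hx
      have : x ∈ r ∪ d' := heq ▸ Finset.mem_union_right _ hx
      rcases Finset.mem_union.1 this with hh | hh
      · exact absurd hx (fun c => hrd x hh c)
      · exact hh
    · intro hx
      have : x ∈ r ∪ d := heq ▸ Finset.mem_union_right _ hx
      rcases Finset.mem_union.1 this with hh | hh
      · exact absurd hx (fun c => hrd' x hh c)
      · exact hh
  · intro m hm hmin
    rw [hsymm] at hm hmin
    exact Finset.mem_union_right _ (h.2 m hm hmin)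

lemma lexLt_insert {a : ℕ} {d d' : Finset ℕ} (hd : ∀ x ∈ d, a < x) (hd' : ∀ x ∈ d', a < x)
    (h : FinsetLexLt d d') : FinsetLexLt (insert a d) (insert a d') := by
  have := lexLt_union (r := {a}) (d := d) (d' := d')
    (fun y hy x hx => by
      rcases Finset.mem_union.1 hx with hh | hh
      · exact (Finset.mem_singleton.1 hy) ▸ hd x hh
      · exact (Finset.mem_singleton.1 hy) ▸ hd' x hh) h
  simpa using this

/-- An element `b` of a front which begins strictly above `a`, lex-dominates
anything containing `a` whose other elements are above `a`. -/
lemma lexLt_of_min_lt {b b' : Finset ℕ} {a : ℕ} (hab : a ∈ b)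
    (hb : ∀ x ∈ b, a ≤ x) (hb' : ∀ x ∈ b', a < x) : FinsetLexLt b b' := by
  have hab' : a ∉ b' := fun h => lt_irrefl a (hb' a h)
  have hasy : a ∈ symmDiff b b' := Finset.mem_symmDiff.2 (Or.inl ⟨hab, hab'⟩)
  constructor
  · intro heq; exact hab' (heq ▸ hab)
  · intro m hm hmin
    have hma : m ≤ a := hmin a hasy
    have : a ≤ m := by
      rcases Finset.mem_symmDiff.1 hm with ⟨h1, _⟩ | ⟨h1, _⟩
      · exact hb m h1
      · exact le_of_lt (hb' m h1)
    have : m = a := le_antisymm hma this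
    rw [this]; exact hab

/-- The generic successor construction: if `s ∈ C` and `Z` is an infinite subset of `S`
lying entirely above `s`, then the initial segment of `(s.erase (min s)) ∪ Z` in `C`
is a shift-extension of `s`. -/
lemma exists_succ {C : Set (Finset ℕ)} {S : Set ℕ} (hC : FrontOn C S) (h0 : ∅ ∉ C)
    {s : Finset ℕ} (hs : s ∈ C) {Z : Set ℕ} (hZS : Z ⊆ S) (hZinf : Z.Infinite)
    (hZgt : ∀ z ∈ Z, ∀ y ∈ s, y < z) (hsne : s.Nonempty) :
    ∀ v ∈ C, NatInitSeg v (↑(s.erase (s.min' hsne)) ∪ Z) →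
      ShiftExt s v ∧ ↑(s.erase (s.min' hsne)) ⊆ v := by
  intro v hvC hv
  set m := s.min' hsne with hm
  set r := s.erase m with hrdef
  have hrs : r ⊆ s := Finset.erase_subset _ _
  have hmem : m ∈ s := s.min'_mem hsne
  have hvnr : ¬ (v ⊆ r) := by
    intro hsub
    have : v = s := hC.2.1 v hvC s hs (hsub.trans hrs)
    have : m ∈ r := by rw [← this] at hmem; exact hsub hmem
    exact (Finset.notMem_erase m s) this
  have hrv : r ⊆ v := by
    by_contra hc
    obtain ⟨a, har, hav⟩ := Finset.not_subset.1 hc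
    apply hvnr
    intro y hyv
    have hyU : (y : ℕ) ∈ (↑r : Set ℕ) ∪ Z := hv.1 (Finset.mem_coe.2 hyv)
    have hya : y < a := hv.2 a (Or.inl (Finset.mem_coe.2 har)) hav y hyv
    rcases hyU with hy | hy
    · exact Finset.mem_coe.1 hy
    · exact absurd (hZgt y hy a (hrs har)) (by omega)
  have hrnev : r ≠ v := by
    intro heq
    exact hvnr (heq ▸ Finset.Subset.refl r)
  refine ⟨⟨m, hmem, fun x hx => s.min'_le x hx, ?_, ?_⟩, hrv⟩
  · -- all elements of v exceed m
    intro y hyv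
    rcases hv.1 (Finset.mem_coe.2 hyv) with hy | hy
    · have hyr : y ∈ r := Finset.mem_coe.1 hy
      have hys : y ∈ s := hrs hyr
      have : y ≠ m := Finset.ne_of_mem_erase hyr
      exact lt_of_le_of_ne (s.min'_le y hys) (Ne.symm this)
    · exact hZgt y hy m hmem
  · refine ⟨hrv, hrnev, ?_⟩
    intro x hxv hxr y hyr
    rcases hv.1 (Finset.mem_coe.2 hxv) with hx | hx
    · exact absurd (Finset.mem_coe.1 hx) hxr
    · exact hZgt x hx y (hrs hyr)

/-- Nash–Williams partition theorem for fronts carrying a lex-embedding into the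
ordinals: every finite colouring is constant on a sub-front. -/
theorem NW {k : ℕ} (β : Ordinal.{0}) :
    ∀ (S : Set ℕ) (C : Set (Finset ℕ)) (g : Finset ℕ → Ordinal.{0}) (c : Finset ℕ → Fin k),
    S.Infinite → FrontOn C S →
    (∀ b ∈ C, g b < β) →
    (∀ b₁ ∈ C, ∀ b₂ ∈ C, FinsetLexLt b₁ b₂ → g b₁ < g b₂) →
    ∃ X, X ⊆ S ∧ X.Infinite ∧ ∃ v : Fin k, ∀ b ∈ C, ↑b ⊆ X → c b = v := by
  induction β using Ordinal.induction with
  | _ β IH =>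
    intro S C g c hS hC hgb hgm
    rcases Nat.eq_zero_or_pos k with hk | hk
    · subst hk; exact (c ∅).elim0
    by_cases h0 : ∅ ∈ C
    · refine ⟨S, subset_rfl, hS, c ∅, fun b hb _ => ?_⟩
      have : (∅ : Finset ℕ) = b := hC.2.1 ∅ h0 b hb (Finset.empty_subset b)
      rw [← this]
    -- main case: all elements of C are nonempty
    have StepEx : ∀ Y : Set ℕ, Y ⊆ S → Y.Infinite →
        ∃ (X' : Set ℕ) (v : Fin k), X' ⊆ Y ∧ sInf Y ∉ X' ∧ X'.Infinite ∧
          ∀ b ∈ C, sInf Y ∈ b → ↑b ⊆ insert (sInf Y) X' → c b = v := by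
      intro Y hYS hYinf
      set a := sInf Y with ha
      have haY : a ∈ Y := Nat.sInf_mem hYinf.nonempty
      have hge : ∀ y ∈ Y, a ≤ y := fun y hy => Nat.sInf_le hy
      set Y' := Y \ {a} with hY'
      have hY'inf : Y'.Infinite := hYinf.diff (Set.finite_singleton a)
      have hY'S : Y' ⊆ S := Set.diff_subset.trans hYS
      have hY'gt : ∀ y ∈ Y', a < y := by
        intro y hy
        exact lt_of_le_of_ne (hge y hy.1) (fun h => hy.2 (by simp [← h]))
      set D := {d : Finset ℕ | insert a d ∈ C ∧ a ∉ d ∧ ↑d ⊆ Y'} with hD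
      have hDfront : FrontOn D Y' := by
        refine ⟨fun d hd => hd.2.2, ?_, ?_⟩
        · intro x hx y hy hxy
          have : insert a x = insert a y :=
            hC.2.1 _ hx.1 _ hy.1 (Finset.insert_subset_insert a hxy)
          have := congrArg (fun u => Finset.erase u a) this
          simpa [Finset.erase_insert hx.2.1, Finset.erase_insert hy.2.1] using this
        · intro Z hZY' hZinf
          have hWS : ({a} : Set ℕ) ∪ Z ⊆ S := by
            intro x hx
            rcases hx with hx | hx
            · simp only [Set.mem_singleton_iff] at hx; exact hYS (hx ▸ haY)
            · exact hY'S (hZY' hx)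
          obtain ⟨b, hbC, hbseg⟩ := hC.2.2 _ hWS (hZinf.mono Set.subset_union_right)
          have hbne : b.Nonempty := Finset.nonempty_iff_ne_empty.2 (fun h => h0 (h ▸ hbC))
          have hab : a ∈ b := by
            by_contra hab
            obtain ⟨y, hy⟩ := hbne
            have hyW := hbseg.1 (Finset.mem_coe.2 hy)
            have hya : y < a := hbseg.2 a (Or.inl rfl) hab y hy
            rcases hyW with hyW | hyW
            · simp only [Set.mem_singleton_iff] at hyW; omega
            · exact absurd (hY'gt y (hZY' hyW)) (by omega)
          refine ⟨b.erase a, ⟨?_, Finset.notMem_erase a b, ?_⟩, ?_, ?_⟩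
          · rwa [Finset.insert_erase hab]
          · intro x hx
            have hxb := Finset.mem_of_mem_erase (Finset.mem_coe.1 hx)
            have hxa := Finset.ne_of_mem_erase (Finset.mem_coe.1 hx)
            rcases hbseg.1 (Finset.mem_coe.2 hxb) with h | h
            · simp only [Set.mem_singleton_iff] at h; exact absurd h hxa
            · exact hZY' h
          · intro x hx
            have hxb := Finset.mem_of_mem_erase (Finset.mem_coe.1 hx)
            have hxa := Finset.ne_of_mem_erase (Finset.mem_coe.1 hx)
            rcases hbseg.1 (Finset.mem_coe.2 hxb) with h | h
            · simp only [Set.mem_singleton_iff] at h; exact absurd h hxa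
            · exact h
          · intro x hxZ hxd y hyd
            have hxa : x ≠ a := fun h => (hY'gt x (hZY' hxZ)).ne' (by rw [h])
            have hxb : x ∉ b := by
              intro hxb
              exact hxd (Finset.mem_erase.2 ⟨hxa, hxb⟩)
            exact hbseg.2 x (Or.inr hxZ) hxb y (Finset.mem_of_mem_erase hyd)
      obtain ⟨bb, hbbC, hbbseg⟩ := hC.2.2 Y' hY'S hY'inf
      have hbbgt : ∀ x ∈ bb, a < x := fun x hx => hY'gt x (hbbseg.1 (Finset.mem_coe.2 hx))
      have hDbound : ∀ d ∈ D, g (insert a d) < g bb := by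
        intro d hd
        refine hgm _ hd.1 _ hbbC (lexLt_of_min_lt (Finset.mem_insert_self a d) ?_ hbbgt)
        intro x hx
        rcases Finset.mem_insert.1 hx with h | h
        · omega
        · exact le_of_lt (hY'gt x (hd.2.2 (Finset.mem_coe.2 h)))
      have hDmono : ∀ d₁ ∈ D, ∀ d₂ ∈ D, FinsetLexLt d₁ d₂ →
          g (insert a d₁) < g (insert a d₂) := by
        intro d₁ hd₁ d₂ hd₂ hlex
        refine hgm _ hd₁.1 _ hd₂.1 (lexLt_insert ?_ ?_ hlex)
        · exact fun x hx => hY'gt x (hd₁.2.2 (Finset.mem_coe.2 hx))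
        · exact fun x hx => hY'gt x (hd₂.2.2 (Finset.mem_coe.2 hx))
      obtain ⟨X', hX'Y', hX'inf, v, hv⟩ :=
        IH (g bb) (hgb bb hbbC) Y' D (fun d => g (insert a d)) (fun d => c (insert a d))
          hY'inf hDfront hDbound hDmono
      refine ⟨X', v, hX'Y'.trans Set.diff_subset, fun h => (hX'Y' h).2 rfl, hX'inf, ?_⟩
      intro b hbC hab hbsub
      have hd : b.erase a ∈ D := by
        refine ⟨by rwa [Finset.insert_erase hab], Finset.notMem_erase a b, ?_⟩
        intro x hx
        have hxb := Finset.mem_of_mem_erase (Finset.mem_coe.1 hx)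
        have hxa := Finset.ne_of_mem_erase (Finset.mem_coe.1 hx)
        rcases hbsub (Finset.mem_coe.2 hxb) with h | h
        · exact absurd h hxa
        · exact hX'Y' h
      have hsub : ↑(b.erase a) ⊆ X' := by
        intro x hx
        have hxb := Finset.mem_of_mem_erase (Finset.mem_coe.1 hx)
        have hxa := Finset.ne_of_mem_erase (Finset.mem_coe.1 hx)
        rcases hbsub (Finset.mem_coe.2 hxb) with h | h
        · exact absurd h hxa
        · exact h
      have := hv (b.erase a) hd hsub
      rwa [Finset.insert_erase hab] at this
    -- extract functions by choice
    choose X' vv hsub hnotmem hinf hcol using StepEx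
    -- the fusion sequence
    let q : ℕ → {Y : Set ℕ // Y ⊆ S ∧ Y.Infinite} := fun n =>
      Nat.rec ⟨S, subset_rfl, hS⟩
        (fun _ p => ⟨X' p.1 p.2.1 p.2.2,
          (hsub p.1 p.2.1 p.2.2).trans p.2.1, hinf p.1 p.2.1 p.2.2⟩) n
    let a : ℕ → ℕ := fun n => sInf (q n).1
    have hqsucc : ∀ n, (q (n+1)).1 ⊆ (q n).1 ∧ a n ∉ (q (n+1)).1 :=
      fun n => ⟨hsub _ _ _, hnotmem _ _ _⟩
    have hstage : ∀ n, ∀ b ∈ C, a n ∈ b → ↑b ⊆ insert (a n) (q (n+1)).1 → c b = vv (q n).1 (q n).2.1 (q n).2.2 :=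
      fun n => hcol _ _ _
    have hmono : ∀ n m, n ≤ m → (q m).1 ⊆ (q n).1 := by
      intro n m hnm
      induction m with
      | zero => simp_all
      | succ m ih =>
        rcases Nat.lt_or_ge n (m+1) with h | h
        · exact (hqsucc m).1.trans (ih (Nat.lt_succ_iff.1 h))
        · have : n = m + 1 := le_antisymm hnm h
          subst this; exact subset_rfl
    have haq : ∀ n, a n ∈ (q n).1 := fun n => Nat.sInf_mem (q n).2.2.nonempty
    have hamono : StrictMono a := by
      apply strictMono_nat_of_lt_succ
      intro n
      have h1 : a (n+1) ∈ (q n).1 := (hqsucc n).1 (haq (n+1))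
      have h2 : a n ≤ a (n+1) := Nat.sInf_le h1
      have h3 : a n ≠ a (n+1) := by
        intro h
        exact (hqsucc n).2 (h ▸ haq (n+1))
      omega
    set w : ℕ → Fin k := fun n => vv (q n).1 (q n).2.1 (q n).2.2 with hw
    have hpigeon : ∃ v : Fin k, {n : ℕ | w n = v}.Infinite := by
      by_contra hcon
      push_neg at hcon
      replace hcon : ∀ v : Fin k, {n : ℕ | w n = v}.Finite := fun v => by simpa using hcon v
      have : (Set.univ : Set ℕ) ⊆ ⋃ v : Fin k, {n | w n = v} :=
        fun n _ => Set.mem_iUnion.2 ⟨w n, rfl⟩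
      exact Set.infinite_univ ((Set.finite_iUnion hcon).subset this)
    obtain ⟨v, hvinf⟩ := hpigeon
    refine ⟨a '' {n | w n = v}, ?_, hvinf.image (hamono.injective.injOn), v, ?_⟩
    · rintro x ⟨n, _, rfl⟩
      exact (q n).2.1 (haq n)
    · intro b hbC hbX
      have hbne : b.Nonempty := Finset.nonempty_iff_ne_empty.2 (fun h => h0 (h ▸ hbC))
      obtain ⟨n, hnv, hna⟩ := hbX (Finset.mem_coe.2 (b.min'_mem hbne))
      have hsubb : ↑b ⊆ insert (a n) (q (n+1)).1 := by
        intro x hxb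
        obtain ⟨l, hlv, hla⟩ := hbX hxb
        by_cases hxan : x = a n
        · exact hxan ▸ Set.mem_insert _ _
        · have h1 : a n ≤ x := hna ▸ b.min'_le x (Finset.mem_coe.1 hxb)
          have h2 : a n < x := lt_of_le_of_ne h1 (Ne.symm hxan)
          have h3 : n < l := hamono.lt_iff_lt.1 (by omega)
          exact Set.mem_insert_of_mem _ (hmono (n+1) l h3 (hla ▸ haq l))
      have := hstage n b hbC (by rw [hna]; exact b.min'_mem hbne) hsubb
      rw [this]
      exact hnv

lemma shiftExt_nonempty {s t : Finset ℕ} (h : ShiftExt s t) : s.Nonempty := by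
  obtain ⟨m, hm, -⟩ := h
  exact ⟨m, hm⟩

lemma shiftExt_elim {s t : Finset ℕ} (h : ShiftExt s t) (hsne : s.Nonempty) :
    (∀ y ∈ t, s.min' hsne < y) ∧ FinsetProperInitSeg (s.erase (s.min' hsne)) t := by
  obtain ⟨m, hm, hmin, hty, hprop⟩ := h
  have hmeq : m = s.min' hsne :=
    le_antisymm (hmin _ (s.min'_mem hsne)) (s.min'_le m hm)
  rw [← hmeq]
  exact ⟨hty, hprop⟩

lemma newpart_gt {s t : Finset ℕ} (h : ShiftExt s t) :
    ∀ z ∈ t \ s, ∀ y ∈ s, y < z := by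
  obtain ⟨m, hm, hmin, hty, hprop⟩ := h
  intro z hz y hy
  have hzt : z ∈ t := (Finset.mem_sdiff.1 hz).1
  have hzs : z ∉ s := (Finset.mem_sdiff.1 hz).2
  by_cases hym : y = m
  · exact hym ▸ hty z hzt
  · exact hprop.2.2 z hzt (fun hc => hzs (Finset.mem_of_mem_erase hc)) y
      (Finset.mem_erase.2 ⟨hym, hy⟩)

lemma sdiff_erase_min {s t : Finset ℕ} (h : ShiftExt s t) (hsne : s.Nonempty) :
    t \ (s.erase (s.min' hsne)) = t \ s := by
  have h2 := (shiftExt_elim h hsne).1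
  ext x
  simp only [Finset.mem_sdiff, Finset.mem_erase]
  constructor
  · rintro ⟨hxt, hxr⟩
    refine ⟨hxt, fun hxs => ?_⟩
    by_cases hxm : x = s.min' hsne
    · exact absurd (h2 x hxt) (by omega)
    · exact hxr ⟨hxm, hxs⟩
  · rintro ⟨hxt, hxs⟩
    exact ⟨hxt, fun hc => hxs hc.2⟩

/-- Stabilize the colouring `t ↦ col s t` of the shift-extensions of a single `s`. -/
lemma singleStab {C : Set (Finset ℕ)} {S : Set ℕ} {α : Ordinal.{0}}
    {g : Finset ℕ → Ordinal.{0}}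
    (hC : FrontOn C S) (h0 : ∅ ∉ C)
    (hgb : ∀ b ∈ C, g b < α)
    (hgm : ∀ b₁ ∈ C, ∀ b₂ ∈ C, FinsetLexLt b₁ b₂ → g b₁ < g b₂)
    (K : Finset ℕ → ℕ) (col : Finset ℕ → Finset ℕ → ℕ)
    (hcol : ∀ s ∈ C, ∀ t ∈ C, ShiftExt s t → col s t < K s)
    {s : Finset ℕ} (hs : s ∈ C) {Y : Set ℕ} (hYS : Y ⊆ S) (hYinf : Y.Infinite)
    (hYgt : ∀ y ∈ Y, ∀ e ∈ s, e < y) :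
    ∃ Y', Y' ⊆ Y ∧ Y'.Infinite ∧ ∃ v, v < K s ∧
      ∀ t ∈ C, ShiftExt s t → ↑(t \ s) ⊆ Y' → col s t = v := by
  classical
  have hsne : s.Nonempty := Finset.nonempty_iff_ne_empty.2 (fun h => h0 (h ▸ hs))
  set m := s.min' hsne with hm
  set r := s.erase m with hr
  have hrs : r ⊆ s := Finset.erase_subset _ _
  -- the derived front
  set D := {d : Finset ℕ | ∃ t, t ∈ C ∧ ShiftExt s t ∧ r ⊆ t ∧
      (↑t : Set ℕ) ⊆ ↑r ∪ Y ∧ d = t \ r} with hD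
  -- producing members of D from infinite subsets of Y
  have hprod : ∀ Z : Set ℕ, Z ⊆ Y → Z.Infinite →
      ∃ t ∈ C, ShiftExt s t ∧ r ⊆ t ∧ (↑t : Set ℕ) ⊆ ↑r ∪ Z ∧
        NatInitSeg (t \ r) Z := by
    intro Z hZY hZinf
    have hZS : Z ⊆ S := hZY.trans hYS
    have hZgt : ∀ z ∈ Z, ∀ y ∈ s, y < z := fun z hz => hYgt z (hZY hz)
    have hUS : (↑r : Set ℕ) ∪ Z ⊆ S := by
      intro u hu
      rcases hu with hu | hu
      · exact hC.1 s hs (Finset.coe_subset.2 hrs hu)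
      · exact hZS hu
    obtain ⟨t, htC, htseg⟩ := hC.2.2 _ hUS (hZinf.mono Set.subset_union_right)
    obtain ⟨hshift, hrt'⟩ := exists_succ hC h0 hs hZS hZinf hZgt hsne t htC htseg
    have hrt : r ⊆ t := Finset.coe_subset.1 hrt'
    refine ⟨t, htC, hshift, hrt, htseg.1.trans (by rfl), ?_, ?_⟩
    · intro x hx
      have hxt := Finset.mem_sdiff.1 (Finset.mem_coe.1 hx)
      have hxr : x ∉ r := hxt.2
      rcases htseg.1 (Finset.mem_coe.2 hxt.1) with h | h
      · exact absurd (Finset.mem_coe.1 h) hxr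
      · exact h
    · intro x hxZ hxd y hyd
      have hxr : x ∉ r := by
        intro hc
        exact absurd (hYgt x (hZY hxZ) x (hrs hc)) (lt_irrefl x)
      have hxt : x ∉ t := by
        intro hc
        exact hxd (Finset.mem_sdiff.2 ⟨hc, hxr⟩)
      exact htseg.2 x (Or.inr hxZ) hxt y (Finset.mem_sdiff.1 hyd).1
  have hDfront : FrontOn D Y := by
    refine ⟨?_, ?_, ?_⟩
    · rintro d ⟨t, htC, hshift, hrt, htsub, rfl⟩
      intro x hx
      have hxt := Finset.mem_sdiff.1 (Finset.mem_coe.1 hx)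
      rcases htsub (Finset.mem_coe.2 hxt.1) with h | h
      · exact absurd (Finset.mem_coe.1 h) hxt.2
      · exact h
    · rintro d₁ ⟨t₁, ht₁C, _, hrt₁, _, rfl⟩ d₂ ⟨t₂, ht₂C, _, hrt₂, _, rfl⟩ hsub
      have h1 : t₁ = r ∪ (t₁ \ r) := (Finset.union_sdiff_of_subset hrt₁).symm
      have h2 : t₂ = r ∪ (t₂ \ r) := (Finset.union_sdiff_of_subset hrt₂).symm
      have : t₁ ⊆ t₂ := by
        rw [h1, h2]
        exact Finset.union_subset_union_right hsub
      have heq : t₁ = t₂ := hC.2.1 _ ht₁C _ ht₂C this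
      rw [heq]
    · intro Z hZY hZinf
      obtain ⟨t, htC, hshift, hrt, htsub, hseg⟩ := hprod Z hZY hZinf
      exact ⟨t \ r, ⟨t, htC, hshift, hrt,
        htsub.trans (Set.union_subset_union_right _ hZY), rfl⟩, hseg⟩
  -- positivity of K s
  obtain ⟨t₀, ht₀C, ht₀shift, _, _, _⟩ := hprod Y subset_rfl hYinf
  have hKpos : 0 < K s := lt_of_le_of_lt (Nat.zero_le _) (hcol s hs t₀ ht₀C ht₀shift)
  -- colouring and embedding on D
  set cD : Finset ℕ → Fin (K s) := fun d =>
    if h : col s (r ∪ d) < K s then ⟨col s (r ∪ d), h⟩ else ⟨0, hKpos⟩ with hcD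
  have hDbound : ∀ d ∈ D, g (r ∪ d) < α := by
    rintro d ⟨t, htC, _, hrt, _, rfl⟩
    rw [Finset.union_sdiff_of_subset hrt]
    exact hgb t htC
  have hDmono : ∀ d₁ ∈ D, ∀ d₂ ∈ D, FinsetLexLt d₁ d₂ → g (r ∪ d₁) < g (r ∪ d₂) := by
    intro d₁ hd₁ d₂ hd₂ hlex
    obtain ⟨t₁, ht₁C, _, hrt₁, _, hd₁eq⟩ := hd₁
    obtain ⟨t₂, ht₂C, _, hrt₂, _, hd₂eq⟩ := hd₂
    have hu₁ : r ∪ d₁ = t₁ := by rw [hd₁eq]; exact Finset.union_sdiff_of_subset hrt₁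
    have hu₂ : r ∪ d₂ = t₂ := by rw [hd₂eq]; exact Finset.union_sdiff_of_subset hrt₂
    have hdisj : ∀ y ∈ r, ∀ x ∈ d₁ ∪ d₂, y < x := by
      intro y hy x hx
      have hxY : x ∈ Y := by
        rcases Finset.mem_union.1 hx with h | h
        · exact hDfront.1 d₁ ⟨t₁, ht₁C, ‹_›, hrt₁, ‹_›, hd₁eq⟩ (Finset.mem_coe.2 h)
        · exact hDfront.1 d₂ ⟨t₂, ht₂C, ‹_›, hrt₂, ‹_›, hd₂eq⟩ (Finset.mem_coe.2 h)
      exact hYgt x hxY y (hrs hy)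
    have := lexLt_union hdisj hlex
    rw [hu₁, hu₂] at this ⊢
    exact hgm _ ht₁C _ ht₂C this
  obtain ⟨X', hX'Y, hX'inf, v, hv⟩ :=
    NW α Y D (fun d => g (r ∪ d)) cD hYinf hDfront hDbound hDmono
  refine ⟨X', hX'Y, hX'inf, v.1, v.2, ?_⟩
  intro t htC hshift hsub
  have h2 := shiftExt_elim hshift hsne
  have hrt : r ⊆ t := h2.2.1
  have hdiff : t \ r = t \ s := sdiff_erase_min hshift hsne
  have htsub : (↑t : Set ℕ) ⊆ ↑r ∪ X' := by
    intro x hx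
    by_cases hxr : x ∈ r
    · exact Or.inl (Finset.mem_coe.2 hxr)
    · refine Or.inr (hsub ?_)
      have hxt := Finset.mem_coe.1 hx
      have hxs : x ∉ s := by
        intro hxs
        by_cases hxm : x = m
        · exact absurd (h2.1 x hxt) (by rw [hxm]; exact lt_irrefl m)
        · exact hxr (Finset.mem_erase.2 ⟨hxm, hxs⟩)
      exact Finset.mem_coe.2 (Finset.mem_sdiff.2 ⟨hxt, hxs⟩)
  have hdD : t \ r ∈ D :=
    ⟨t, htC, hshift, hrt, htsub.trans (Set.union_subset_union_right _ hX'Y), rfl⟩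
  have hdX : ↑(t \ r) ⊆ X' := by rw [hdiff]; exact hsub
  have := hv (t \ r) hdD hdX
  rw [hcD] at this
  simp only [Finset.union_sdiff_of_subset hrt] at this
  rw [dif_pos (hcol s hs t htC hshift)] at this
  exact congrArg Fin.val this

lemma foldStab {C : Set (Finset ℕ)} {S : Set ℕ} {α : Ordinal.{0}}
    {g : Finset ℕ → Ordinal.{0}}
    (hC : FrontOn C S) (h0 : ∅ ∉ C)
    (hgb : ∀ b ∈ C, g b < α)
    (hgm : ∀ b₁ ∈ C, ∀ b₂ ∈ C, FinsetLexLt b₁ b₂ → g b₁ < g b₂)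
    (K : Finset ℕ → ℕ) (col : Finset ℕ → Finset ℕ → ℕ)
    (hcol : ∀ s ∈ C, ∀ t ∈ C, ShiftExt s t → col s t < K s) :
    ∀ (l : List (Finset ℕ)) (Y : Set ℕ), Y ⊆ S → Y.Infinite →
      (∀ y ∈ Y, ∀ s ∈ l, ∀ e ∈ s, e < y) →
      ∃ Y', Y' ⊆ Y ∧ Y'.Infinite ∧ ∀ s ∈ l, s ∈ C → ∃ v, v < K s ∧
        ∀ t ∈ C, ShiftExt s t → ↑(t \ s) ⊆ Y' → col s t = v := by
  intro l
  induction l with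
  | nil =>
    intro Y hYS hYinf _
    exact ⟨Y, subset_rfl, hYinf, fun s hs => absurd hs List.not_mem_nil⟩
  | cons s l ih =>
    intro Y hYS hYinf hYgt
    by_cases hsC : s ∈ C
    · obtain ⟨Y₁, hY₁Y, hY₁inf, v, hvK, hvstab⟩ :=
        singleStab hC h0 hgb hgm K col hcol hsC hYS hYinf
          (fun y hy => hYgt y hy s List.mem_cons_self)
      obtain ⟨Y', hY'Y₁, hY'inf, hstab⟩ := ih Y₁ (hY₁Y.trans hYS) hY₁inf
        (fun y hy u hu => hYgt y (hY₁Y hy) u (List.mem_cons_of_mem s hu))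
      refine ⟨Y', hY'Y₁.trans hY₁Y, hY'inf, ?_⟩
      intro u hu huC
      rcases List.mem_cons.1 hu with rfl | hu
      · exact ⟨v, hvK, fun t htC hsh hsub => hvstab t htC hsh (hsub.trans hY'Y₁)⟩
      · exact hstab u hu huC
    · obtain ⟨Y', hY'Y, hY'inf, hstab⟩ := ih Y hYS hYinf
        (fun y hy u hu => hYgt y hy u (List.mem_cons_of_mem s hu))
      refine ⟨Y', hY'Y, hY'inf, ?_⟩
      intro u hu huC
      rcases List.mem_cons.1 hu with rfl | hu
      · exact absurd huC hsC
      · exact hstab u hu huC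

/-- The fusion lemma: one can shrink the base so that the colouring of the
shift-pairs depends only on the first coordinate. -/
lemma GSL {C : Set (Finset ℕ)} {S : Set ℕ} {α : Ordinal.{0}}
    {g : Finset ℕ → Ordinal.{0}}
    (hC : FrontOn C S) (hS : S.Infinite) (h0 : ∅ ∉ C)
    (hgb : ∀ b ∈ C, g b < α)
    (hgm : ∀ b₁ ∈ C, ∀ b₂ ∈ C, FinsetLexLt b₁ b₂ → g b₁ < g b₂)
    (K : Finset ℕ → ℕ) (col : Finset ℕ → Finset ℕ → ℕ)
    (hcol : ∀ s ∈ C, ∀ t ∈ C, ShiftExt s t → col s t < K s) :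
    ∃ X, X ⊆ S ∧ X.Infinite ∧ ∀ s ∈ C, ↑s ⊆ X → ∃ v, v < K s ∧
      ∀ t ∈ C, ShiftExt s t → ↑t ⊆ X → col s t = v := by
  classical
  -- invariant
  let Inv : Finset ℕ → Set ℕ → Prop := fun E Y =>
    (∀ e ∈ E, ∀ y ∈ Y, e < y) ∧
    (∀ s ∈ C, s ⊆ E → ∃ v, v < K s ∧
      ∀ t ∈ C, ShiftExt s t → ↑(t \ s) ⊆ Y → col s t = v)
  have hstep : ∀ E : Finset ℕ, ∀ Y : Set ℕ, Y ⊆ S → Y.Infinite → Inv E Y →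
      ∃ Y' : Set ℕ, Y' ⊆ Y \ {sInf Y} ∧ Y'.Infinite ∧
        Inv (insert (sInf Y) E) Y' := by
    intro E Y hYS hYinf hinv
    set x := sInf Y with hx
    have hxY : x ∈ Y := Nat.sInf_mem hYinf.nonempty
    have hY1inf : (Y \ {x}).Infinite := hYinf.diff (Set.finite_singleton x)
    have hY1gt : ∀ y ∈ Y \ {x}, x < y :=
      fun y hy => lt_of_le_of_ne (Nat.sInf_le hy.1) (fun h => hy.2 (by simp [← h]))
    have hlow : ∀ y ∈ Y \ {x}, ∀ s ∈ (insert x E).powerset.toList, ∀ e ∈ s, e < y := by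
      intro y hyY1 s hsl e hes
      have hsE : s ⊆ insert x E := Finset.mem_powerset.1 (Finset.mem_toList.1 hsl)
      rcases Finset.mem_insert.1 (hsE hes) with rfl | heE
      · exact hY1gt y hyY1
      · exact hinv.1 e heE y hyY1.1
    obtain ⟨Y', hY'Y1, hY'inf, hstab⟩ :=
      foldStab hC h0 hgb hgm K col hcol ((insert x E).powerset.toList)
        (Y \ {x}) (Set.diff_subset.trans hYS) hY1inf hlow
    refine ⟨Y', hY'Y1, hY'inf, ?_, ?_⟩
    · intro e heE y hyY'
      have hyY1 := hY'Y1 hyY'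
      rcases Finset.mem_insert.1 heE with rfl | heE
      · exact hY1gt y hyY1
      · exact hinv.1 e heE y hyY1.1
    · intro s hsC hsE
      by_cases hsold : s ⊆ E
      · obtain ⟨v, hvK, hvs⟩ := hinv.2 s hsC hsold
        exact ⟨v, hvK, fun t htC hsh hsub =>
          hvs t htC hsh (hsub.trans (hY'Y1.trans Set.diff_subset))⟩
      · have hmem : s ∈ (insert x E).powerset.toList :=
          Finset.mem_toList.2 (Finset.mem_powerset.2 hsE)
        exact hstab s hmem hsC
  -- build the fusion sequence
  have hinit : Inv ∅ S := by
    constructor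
    · intro e he; exact absurd he (Finset.notMem_empty e)
    · intro s hsC hsE
      have : s = ∅ := Finset.subset_empty.1 hsE
      exact absurd hsC (this ▸ h0)
  have hstep' : ∀ p : {p : Finset ℕ × Set ℕ // p.2 ⊆ S ∧ p.2.Infinite ∧ Inv p.1 p.2},
      ∃ q : {p : Finset ℕ × Set ℕ // p.2 ⊆ S ∧ p.2.Infinite ∧ Inv p.1 p.2},
        q.1.1 = insert (sInf p.1.2) p.1.1 ∧ q.1.2 ⊆ p.1.2 \ {sInf p.1.2} := by
    rintro ⟨⟨E, Y⟩, hYS, hYinf, hinv⟩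
    obtain ⟨Y', h1, h2, h3⟩ := hstep E Y hYS hYinf hinv
    exact ⟨⟨⟨insert (sInf Y) E, Y'⟩, (h1.trans Set.diff_subset).trans hYS, h2, h3⟩,
      rfl, h1⟩
  choose nxt hnxt using hstep'
  set p : ℕ → {p : Finset ℕ × Set ℕ // p.2 ⊆ S ∧ p.2.Infinite ∧ Inv p.1 p.2} :=
    fun n => Nat.rec ⟨⟨∅, S⟩, subset_rfl, hS, hinit⟩ (fun _ q => nxt q) n with hp
  set xs : ℕ → ℕ := fun n => sInf (p n).1.2 with hxs
  have hpsucc : ∀ n, (p (n+1)).1.1 = insert (xs n) (p n).1.1 ∧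
      (p (n+1)).1.2 ⊆ (p n).1.2 \ {xs n} := fun n => hnxt (p n)
  have hYmono : ∀ n m, n ≤ m → (p m).1.2 ⊆ (p n).1.2 := by
    intro n m hnm
    induction m with
    | zero =>
      have hn0 : n = 0 := Nat.le_zero.1 hnm
      subst hn0; exact subset_rfl
    | succ m ih =>
      rcases Nat.lt_or_ge n (m+1) with h | h
      · exact ((hpsucc m).2.trans Set.diff_subset).trans (ih (Nat.lt_succ_iff.1 h))
      · have : n = m + 1 := le_antisymm hnm h
        subst this; exact subset_rfl
  have hxmem : ∀ n, xs n ∈ (p n).1.2 := fun n => Nat.sInf_mem (p n).2.2.1.nonempty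
  have hxmono : StrictMono xs := by
    apply strictMono_nat_of_lt_succ
    intro n
    have h1 : xs (n+1) ∈ (p n).1.2 \ {xs n} := (hpsucc n).2 (hxmem (n+1))
    have h2 : xs n ≤ xs (n+1) := Nat.sInf_le h1.1
    have h3 : xs (n+1) ≠ xs n := fun h => h1.2 (by simp [h])
    omega
  have hEmem : ∀ m n, m < n → xs m ∈ (p n).1.1 := by
    intro m n hmn
    induction n with
    | zero => omega
    | succ n ih =>
      rw [(hpsucc n).1]
      rcases Nat.lt_or_ge m n with h | h
      · exact Finset.mem_insert_of_mem (ih h)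
      · have : m = n := by omega
        subst this; exact Finset.mem_insert_self _ _
  refine ⟨Set.range xs, ?_, Set.infinite_range_of_injective hxmono.injective, ?_⟩
  · rintro y ⟨n, rfl⟩
    exact (p n).2.1 (hxmem n)
  · intro s hsC hsX
    have hsne : s.Nonempty := Finset.nonempty_iff_ne_empty.2 (fun h => h0 (h ▸ hsC))
    obtain ⟨n, hn⟩ := hsX (Finset.mem_coe.2 (s.max'_mem hsne))
    have hsE : s ⊆ (p (n+1)).1.1 := by
      intro e hes
      obtain ⟨l, hl⟩ := hsX (Finset.mem_coe.2 hes)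
      have hle : xs l ≤ xs n := by rw [hn, hl]; exact s.le_max' e hes
      have hln : l ≤ n := hxmono.le_iff_le.1 hle
      rw [← hl]
      exact hEmem l (n+1) (by omega)
    obtain ⟨v, hvK, hvs⟩ := (p (n+1)).2.2.2.2 s hsC hsE
    refine ⟨v, hvK, ?_⟩
    intro t htC hsh htX
    refine hvs t htC hsh ?_
    intro z hz
    have hzt := Finset.mem_coe.1 hz
    obtain ⟨l, hl⟩ := htX (Finset.mem_coe.2 (Finset.mem_sdiff.1 hzt).1)
    have hgt : xs n < z := by
      rw [hn]
      exact newpart_gt hsh z hzt (s.max' hsne) (s.max'_mem hsne)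
    have hnl : n < l := hxmono.lt_iff_lt.1 (by omega)
    exact hYmono (n+1) l hnl (hl ▸ hxmem l)

/-- Every element of a front has a shift-extension in the front. -/
lemma exists_shiftExt {C : Set (Finset ℕ)} {S : Set ℕ}
    (hC : FrontOn C S) (hS : S.Infinite) (h0 : ∅ ∉ C) {u : Finset ℕ} (hu : u ∈ C) :
    ∃ v ∈ C, ShiftExt u v := by
  have hune : u.Nonempty := Finset.nonempty_iff_ne_empty.2 (fun h => h0 (h ▸ hu))
  set Z := S ∩ {z | u.max' hune < z} with hZ
  have hZS : Z ⊆ S := Set.inter_subset_left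
  have hZinf : Z.Infinite := by
    have : S \ Set.Iic (u.max' hune) ⊆ Z := by
      intro z hz
      exact ⟨hz.1, by simpa using hz.2⟩
    exact ((hS.diff (Set.finite_Iic _))).mono this
  have hZgt : ∀ z ∈ Z, ∀ y ∈ u, y < z :=
    fun z hz y hy => lt_of_le_of_lt (u.le_max' y hy) hz.2
  have hUS : (↑(u.erase (u.min' hune)) : Set ℕ) ∪ Z ⊆ S := by
    intro x hx
    rcases hx with hx | hx
    · exact hC.1 u hu (Finset.coe_subset.2 (Finset.erase_subset _ _) hx)
    · exact hZS hx
  obtain ⟨v, hvC, hvseg⟩ := hC.2.2 _ hUS (hZinf.mono Set.subset_union_right)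
  exact ⟨v, hvC, (exists_succ hC h0 hu hZS hZinf hZgt hune v hvC hvseg).1⟩

/-- An infinite shift-chain in a front. -/
lemma exists_chain {C : Set (Finset ℕ)} {S : Set ℕ}
    (hC : FrontOn C S) (hS : S.Infinite) (h0 : ∅ ∉ C) :
    ∃ u : ℕ → Finset ℕ, (∀ k, u k ∈ C) ∧ ∀ k, ShiftExt (u k) (u (k+1)) := by
  have hstep : ∀ p : {u : Finset ℕ // u ∈ C}, ∃ q : {u : Finset ℕ // u ∈ C},
      ShiftExt p.1 q.1 := by
    rintro ⟨u, hu⟩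
    obtain ⟨v, hvC, hsh⟩ := exists_shiftExt hC hS h0 hu
    exact ⟨⟨v, hvC⟩, hsh⟩
  choose nxt hnxt using hstep
  obtain ⟨u₀, hu₀C, -⟩ := hC.2.2 S subset_rfl hS
  set u : ℕ → {u : Finset ℕ // u ∈ C} :=
    fun n => Nat.rec ⟨u₀, hu₀C⟩ (fun _ p => nxt p) n with hu
  exact ⟨fun k => (u k).1, fun k => (u k).2, fun k => hnxt (u k)⟩

/-- One step of the connectivity argument. -/
lemma connStep {C : Set (Finset ℕ)} {S : Set ℕ}
    (hC : FrontOn C S) (h0 : ∅ ∉ C)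
    {r : Finset ℕ} (hrne : r.Nonempty) (hrS : ↑r ⊆ S)
    {Z : Set ℕ} (hZS : Z ⊆ S) (hZinf : Z.Infinite) (hlow : ∀ z ∈ Z, ∀ y ∈ r, y < z)
    {w : Finset ℕ} (hw : w ∈ C) (hwseg : NatInitSeg w (↑r ∪ Z)) :
    ∃ w' ∈ C, ShiftExt w w' ∧ NatInitSeg w' (↑(r.erase (r.min' hrne)) ∪ Z) := by
  classical
  have hwne : w.Nonempty := Finset.nonempty_iff_ne_empty.2 (fun h => h0 (h ▸ hw))
  set m := r.min' hrne with hm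
  have hmU : (m : ℕ) ∈ (↑r : Set ℕ) ∪ Z := Or.inl (Finset.mem_coe.2 (r.min'_mem hrne))
  have hmle : ∀ x ∈ (↑r : Set ℕ) ∪ Z, m ≤ x := by
    intro x hx
    rcases hx with hx | hx
    · exact r.min'_le x (Finset.mem_coe.1 hx)
    · exact le_of_lt (hlow x hx m (r.min'_mem hrne))
  have hmw : m ∈ w := by
    obtain ⟨y, hy⟩ := hwne
    exact initSeg_full hwseg hmU hy (hmle y (hwseg.1 (Finset.mem_coe.2 hy)))
  have hwmin : w.min' hwne = m :=
    le_antisymm (w.min'_le m hmw)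
      (hmle _ (hwseg.1 (Finset.mem_coe.2 (w.min'_mem hwne))))
  set M := w.max' hwne with hM
  set Z' := ((↑r : Set ℕ) ∪ Z) ∩ {z | M < z} with hZ'
  have hZ'S : Z' ⊆ S := by
    intro z hz
    rcases hz.1 with h | h
    · exact hrS h
    · exact hZS h
  have hZ'inf : Z'.Infinite := by
    have : Z \ Set.Iic M ⊆ Z' := by
      intro z hz
      exact ⟨Or.inr hz.1, by simpa using hz.2⟩
    exact (hZinf.diff (Set.finite_Iic _)).mono this
  have hZ'gt : ∀ z ∈ Z', ∀ y ∈ w, y < z :=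
    fun z hz y hy => lt_of_le_of_lt (w.le_max' y hy) hz.2
  have hUS : (↑(w.erase (w.min' hwne)) : Set ℕ) ∪ Z' ⊆ S := by
    intro x hx
    rcases hx with hx | hx
    · exact hC.1 w hw (Finset.coe_subset.2 (Finset.erase_subset _ _) hx)
    · exact hZ'S hx
  obtain ⟨v, hvC, hvseg⟩ := hC.2.2 _ hUS (hZ'inf.mono Set.subset_union_right)
  obtain ⟨hshift, -⟩ := exists_succ hC h0 hw hZ'S hZ'inf hZ'gt hwne v hvC hvseg
  -- the ambient set of v equals the target set
  have hEq : (↑(w.erase (w.min' hwne)) : Set ℕ) ∪ Z' = ↑(r.erase m) ∪ Z := by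
    ext x
    constructor
    · intro hx
      rcases hx with hx | hx
      · have hxw : x ∈ w := Finset.mem_of_mem_erase (Finset.mem_coe.1 hx)
        have hxm : x ≠ m := by
          have := Finset.ne_of_mem_erase (Finset.mem_coe.1 hx)
          rwa [hwmin] at this
        rcases hwseg.1 (Finset.mem_coe.2 hxw) with h | h
        · exact Or.inl (Finset.mem_coe.2
            (Finset.mem_erase.2 ⟨hxm, Finset.mem_coe.1 h⟩))
        · exact Or.inr h
      · rcases hx.1 with h | h
        · have hxm : x ≠ m := by
            have : m ≤ M := w.le_max' m hmw
            intro hc; subst hc; exact absurd hx.2 (by simpa using this)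
          exact Or.inl (Finset.mem_coe.2
            (Finset.mem_erase.2 ⟨hxm, Finset.mem_coe.1 h⟩))
        · exact Or.inr h
    · intro hx
      have hxU : x ∈ (↑r : Set ℕ) ∪ Z := by
        rcases hx with hx | hx
        · exact Or.inl (Finset.coe_subset.2 (Finset.erase_subset _ _) hx)
        · exact Or.inr hx
      have hxm : x ≠ m := by
        rcases hx with hx | hx
        · exact Finset.ne_of_mem_erase (Finset.mem_coe.1 hx)
        · intro hc
          have := hlow x hx m (r.min'_mem hrne)
          omega
      by_cases hxM : x ≤ M
      · have hxw : x ∈ w := initSeg_full hwseg hxU (w.max'_mem hwne) hxM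
        refine Or.inl (Finset.mem_coe.2 (Finset.mem_erase.2 ⟨?_, hxw⟩))
        rwa [hwmin]
      · exact Or.inr ⟨hxU, by simpa using hxM⟩
  rw [hEq] at hvseg
  exact ⟨v, hvC, hshift, hvseg⟩

/-- Functions constant on shift-pairs are constant on the whole front. -/
lemma conn {C : Set (Finset ℕ)} {S : Set ℕ} {σ : Type*}
    (hC : FrontOn C S) (hS : S.Infinite) (h0 : ∅ ∉ C)
    (φ : Finset ℕ → σ)
    (hsp : ∀ s ∈ C, ∀ t ∈ C, ShiftExt s t → φ s = φ t) :
    ∀ s ∈ C, ∀ t ∈ C, φ s = φ t := by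
  classical
  -- part A : descending through a finite prefix
  have connA : ∀ n (r : Finset ℕ), r.card ≤ n → ↑r ⊆ S →
      ∀ Z : Set ℕ, Z ⊆ S → Z.Infinite → (∀ z ∈ Z, ∀ y ∈ r, y < z) →
      ∀ w ∈ C, NatInitSeg w (↑r ∪ Z) → ∀ z ∈ C, NatInitSeg z Z → φ w = φ z := by
    intro n
    induction n with
    | zero =>
      intro r hcard hrS Z hZS hZinf hlow w hw hwseg z hz hzseg
      have : r = ∅ := Finset.card_eq_zero.1 (Nat.le_zero.1 hcard)
      subst this
      simp only [Finset.coe_empty, Set.empty_union] at hwseg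
      rw [initSeg_unique hC hw hz hwseg hzseg]
    | succ n ih =>
      intro r hcard hrS Z hZS hZinf hlow w hw hwseg z hz hzseg
      rcases Finset.eq_empty_or_nonempty r with rfl | hrne
      · simp only [Finset.coe_empty, Set.empty_union] at hwseg
        rw [initSeg_unique hC hw hz hwseg hzseg]
      · obtain ⟨w', hw'C, hshift, hw'seg⟩ :=
          connStep hC h0 hrne hrS hZS hZinf hlow hw hwseg
        have h1 : φ w = φ w' := hsp w hw w' hw'C hshift
        have h2 : φ w' = φ z := by
          refine ih (r.erase (r.min' hrne)) ?_ ?_ Z hZS hZinf ?_ w' hw'C hw'seg z hz hzseg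
          · have := Finset.card_erase_of_mem (r.min'_mem hrne)
            omega
          · exact (Finset.coe_subset.2 (Finset.erase_subset _ _)).trans hrS
          · exact fun zz hzz y hy => hlow zz hzz y (Finset.mem_of_mem_erase hy)
        rw [h1, h2]
  -- part B : moving along the tails
  have connB : ∀ a b : ℕ, a ≤ b → ∀ w ∈ C, NatInitSeg w (S ∩ {x | a < x}) →
      ∀ z ∈ C, NatInitSeg z (S ∩ {x | b < x}) → φ w = φ z := by
    intro a b hab
    induction b with
    | zero =>
      intro w hw hwseg z hz hzseg
      have : a = 0 := Nat.le_zero.1 hab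
      subst this
      rw [initSeg_unique hC hw hz hwseg hzseg]
    | succ b ihb =>
      rcases Nat.lt_or_ge a (b+1) with h | h
      · intro w hw hwseg z hz hzseg
        have hab' : a ≤ b := Nat.lt_succ_iff.1 h
        have hTinf : (S ∩ {x | b < x}).Infinite := by
          have : S \ Set.Iic b ⊆ S ∩ {x | b < x} := by
            intro x hx
            exact ⟨hx.1, by simpa using hx.2⟩
          exact (hS.diff (Set.finite_Iic _)).mono this
        obtain ⟨wb, hwbC, hwbseg⟩ := hC.2.2 (S ∩ {x | b < x}) Set.inter_subset_left hTinf
        have h1 : φ w = φ wb := ihb hab' w hw hwseg wb hwbC hwbseg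
        -- one more step from the `b`-tail to the `b+1`-tail
        by_cases hbS : (b+1) ∈ S
        · have hsplit : S ∩ {x | b < x} = ↑({b+1} : Finset ℕ) ∪ (S ∩ {x | b+1 < x}) := by
            ext x
            simp only [Set.mem_inter_iff, Set.mem_setOf_eq, Finset.coe_singleton,
              Set.mem_union, Set.mem_singleton_iff]
            constructor
            · rintro ⟨hxS, hxb⟩
              rcases Nat.lt_or_ge (b+1) x with hh | hh
              · exact Or.inr ⟨hxS, hh⟩
              · exact Or.inl (by omega)
            · rintro (rfl | ⟨hxS, hxb⟩)
              · exact ⟨hbS, by omega⟩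
              · exact ⟨hxS, by omega⟩
          rw [hsplit] at hwbseg
          obtain ⟨w', hw'C, hshift, hw'seg⟩ :=
            connStep hC h0 (Finset.singleton_nonempty (b+1))
              (by simpa using hbS) Set.inter_subset_left
              (by
                have : S \ Set.Iic (b+1) ⊆ S ∩ {x | b+1 < x} := by
                  intro x hx
                  exact ⟨hx.1, by simpa using hx.2⟩
                exact (hS.diff (Set.finite_Iic _)).mono this)
              (by
                intro zz hzz y hy
                simp only [Finset.mem_singleton] at hy
                subst hy
                exact hzz.2)
              hwbC hwbseg
          have hmin : ({b+1} : Finset ℕ).min' (Finset.singleton_nonempty _) = b+1 := by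
            simp
          rw [hmin] at hw'seg
          simp only [Finset.erase_singleton, Finset.coe_empty, Set.empty_union] at hw'seg
          have h2 : φ wb = φ w' := hsp wb hwbC w' hw'C hshift
          have h3 : w' = z := initSeg_unique hC hw'C hz hw'seg hzseg
          rw [h1, h2, h3]
        · have hsame : S ∩ {x | b < x} = S ∩ {x | b+1 < x} := by
            ext x
            simp only [Set.mem_inter_iff, Set.mem_setOf_eq]
            constructor
            · rintro ⟨hxS, hxb⟩
              refine ⟨hxS, ?_⟩
              rcases Nat.lt_or_ge (b+1) x with hh | hh
              · exact hh
              · have : x = b+1 := by omega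
                exact absurd (this ▸ hxS) hbS
            · rintro ⟨hxS, hxb⟩
              exact ⟨hxS, by omega⟩
          rw [hsame] at hwbseg
          rw [h1, initSeg_unique hC hwbC hz hwbseg hzseg]
      · intro w hw hwseg z hz hzseg
        have : a = b+1 := by omega
        subst this
        rw [initSeg_unique hC hw hz hwseg hzseg]
  -- main argument
  intro s hs t ht
  have key : ∀ u ∈ C, ∀ hune : u.Nonempty, ∀ z ∈ C,
      NatInitSeg z (S ∩ {x | u.max' hune < x}) → φ u = φ z := by
    intro u hu hune z hz hzseg
    set M := u.max' hune with hM
    have huseg : NatInitSeg u (↑u ∪ (S ∩ {x | M < x})) := by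
      constructor
      · intro x hx; exact Or.inl hx
      · intro x hx hxu y hyu
        rcases hx with hx | hx
        · exact absurd (Finset.mem_coe.1 hx) hxu
        · exact lt_of_le_of_lt (u.le_max' y hyu) hx.2
    exact connA u.card u le_rfl (hC.1 u hu) (S ∩ {x | M < x}) Set.inter_subset_left
      (by
        have : S \ Set.Iic M ⊆ S ∩ {x | M < x} := by
          intro x hx
          exact ⟨hx.1, by simpa using hx.2⟩
        exact (hS.diff (Set.finite_Iic _)).mono this)
      (fun zz hzz y hy => lt_of_le_of_lt (u.le_max' y hy) hzz.2)
      u hu huseg z hz hzseg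
  have hsne : s.Nonempty := Finset.nonempty_iff_ne_empty.2 (fun h => h0 (h ▸ hs))
  have htne : t.Nonempty := Finset.nonempty_iff_ne_empty.2 (fun h => h0 (h ▸ ht))
  have hTinf : ∀ M : ℕ, (S ∩ {x | M < x}).Infinite := by
    intro M
    have : S \ Set.Iic M ⊆ S ∩ {x | M < x} := by
      intro x hx
      exact ⟨hx.1, by simpa using hx.2⟩
    exact (hS.diff (Set.finite_Iic _)).mono this
  obtain ⟨zs, hzsC, hzsseg⟩ := hC.2.2 (S ∩ {x | s.max' hsne < x})
    Set.inter_subset_left (hTinf _)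
  obtain ⟨zt, hztC, hztseg⟩ := hC.2.2 (S ∩ {x | t.max' htne < x})
    Set.inter_subset_left (hTinf _)
  have h1 : φ s = φ zs := key s hs hsne zs hzsC hzsseg
  have h2 : φ t = φ zt := key t ht htne zt hztC hztseg
  rcases le_total (s.max' hsne) (t.max' htne) with hle | hle
  · have h3 : φ zs = φ zt := connB _ _ hle zs hzsC hzsseg zt hztC hztseg
    rw [h1, h3, ← h2]
  · have h3 : φ zt = φ zs := connB _ _ hle zt hztC hztseg zs hzsC hzsseg
    rw [h1, ← h3, ← h2]

end DS10

/-- For a countable ordinal `α ≥ ω`: if `I` is `α`-wqo and every `P i` is `α`-wqo, then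
the Dress–Schiffels product is `α`-wqo. -/
theorem stmt_10 {I : Type u} [PartialOrder I] {P : I → Type v} [∀ i, PartialOrder (P i)]
    [∀ i, OrderBot (P i)] (α : Ordinal.{0})
    (hαω : Ordinal.omega0 ≤ α) (hαc : α.card ≤ Cardinal.aleph0)
    (hI : IsAlphaWqoRel ((· ≤ ·) : I → I → Prop) α)
    (hP : ∀ i, IsAlphaWqoRel ((· ≤ ·) : P i → P i → Prop) α) :
    IsAlphaWqoRel (fun f g : DSProd I P => DSle f.1 g.1) α := by
  classical
  intro B hBar hType F
  by_contra hbad0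
  have hbad : ∀ s ∈ B, ∀ t ∈ B, ShiftExt s t → ¬ DSle (F s).1 (F t).1 := by
    intro s hs t ht hsh hds
    exact hbad0 ⟨s, hs, t, ht, hsh, hds⟩
  obtain ⟨g, hgα, hgm⟩ := hType
  set S := ⋃ b ∈ B, (↑b : Set ℕ) with hSdef
  have hFront : DS10.FrontOn B S :=
    ⟨fun b hb x hx => Set.mem_biUnion hb hx, hBar.2.1, hBar.2.2⟩
  have h0 : ∅ ∉ B := DS10.front_not_empty_mem hBar.1 hBar.2.1
  have hSinf : S.Infinite := by
    intro hSfin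
    apply hBar.1
    have hfin : {t : Set ℕ | t ⊆ S}.Finite := hSfin.finite_subsets
    have : B ⊆ (fun b : Finset ℕ => (↑b : Set ℕ)) ⁻¹' {t : Set ℕ | t ⊆ S} :=
      fun b hb => hFront.1 b hb
    exact (hfin.preimage Finset.coe_injective.injOn).subset this
  -- the empty index type
  by_cases hIempty : IsEmpty I
  · obtain ⟨s, hsB, -⟩ := hFront.2.2 S subset_rfl hSinf
    obtain ⟨t, htB, hsh⟩ := DS10.exists_shiftExt hFront hSinf h0 hsB
    exact hbad s hsB t htB hsh (fun i _ => (hIempty.false i).elim)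
  have hInh : Nonempty I := not_isEmpty_iff.1 hIempty
  obtain ⟨idef⟩ := hInh
  -- step A : make all supports nonempty
  set nn : Finset ℕ → ℕ := fun s => (F s).2.toFinset.card with hnn
  set c1 : Finset ℕ → Fin 2 := fun s => if nn s = 0 then 0 else 1 with hc1
  obtain ⟨X₀, hX₀S, hX₀inf, v₀, hv₀⟩ := DS10.NW α S B g c1 hSinf hFront hgα hgm
  set B₀ := {b ∈ B | (↑b : Set ℕ) ⊆ X₀} with hB₀
  have hFront₀ : DS10.FrontOn B₀ X₀ := DS10.subFront hFront hX₀S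
  have h0₀ : ∅ ∉ B₀ := fun h => h0 h.1
  by_cases hv0 : v₀ = 0
  · -- all supports over X₀ are empty : immediate good pair
    obtain ⟨s, hsB, hseg⟩ := hFront₀.2.2 X₀ subset_rfl hX₀inf
    obtain ⟨t, htB, hsh⟩ := DS10.exists_shiftExt hFront₀ hX₀inf h0₀ hsB
    have hzero : ∀ b ∈ B₀, nn b = 0 := by
      intro b hb
      have := hv₀ b hb.1 hb.2
      rw [hc1] at this
      simp only at this
      by_contra hnb
      rw [if_neg hnb, hv0] at this
      exact absurd this (by decide)
    have hbots : ∀ b ∈ B₀, ∀ i, (F b).1 i = ⊥ := by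
      intro b hb i
      by_contra hne
      have hi : i ∈ (F b).2.toFinset := (Set.Finite.mem_toFinset _).2 hne
      have := Finset.card_eq_zero.1 (hzero b hb)
      rw [this] at hi
      exact absurd hi (Finset.notMem_empty i)
    refine hbad s hsB.1 t htB.1 hsh ?_
    intro i hmax
    exact absurd (by rw [hbots s hsB i, hbots t htB i]) hmax.1
  have hpos : ∀ b ∈ B₀, 0 < nn b := by
    intro b hb
    have := hv₀ b hb.1 hb.2
    rw [hc1] at this
    simp only at this
    by_contra hnb
    push_neg at hnb
    rw [if_pos (Nat.le_zero.1 hnb)] at this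
    exact hv0 this.symm
  -- step B : stabilized witnesses of badness
  set L : Finset ℕ → List I := fun s => (F s).2.toFinset.toList with hL
  have witEx : ∀ s ∈ B, ∀ t ∈ B, ShiftExt s t →
      ∃ j, j < (L s).length ∧
        Maximal (fun i => (F s).1 i ≠ (F t).1 i) ((L s).getD j idef) ∧
        ¬ ((F s).1 ((L s).getD j idef) < (F t).1 ((L s).getD j idef)) := by
    intro s hs t ht hsh
    have hnd := hbad s hs t ht hsh
    simp only [DSle] at hnd
    push_neg at hnd
    obtain ⟨i, hmax, hnlt⟩ := hnd
    have hisupp : (F s).1 i ≠ ⊥ := by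
      intro hib
      have hne : (F s).1 i ≠ (F t).1 i := hmax.1
      rw [hib] at hne
      exact hnlt (by rw [hib]; exact (Ne.symm hne).bot_lt)
    have hiL : i ∈ L s := by
      rw [hL]
      simp only [Finset.mem_toList, Set.Finite.mem_toFinset]
      exact hisupp
    obtain ⟨j, hjlen, hjget⟩ := List.mem_iff_getElem.1 hiL
    refine ⟨j, hjlen, ?_, ?_⟩
    · rw [List.getD_eq_getElem _ _ hjlen, hjget]; exact hmax
    · rw [List.getD_eq_getElem _ _ hjlen, hjget]; exact hnlt
  set col₁ : Finset ℕ → Finset ℕ → ℕ := fun s t =>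
    if h : s ∈ B ∧ t ∈ B ∧ ShiftExt s t then (witEx s h.1 t h.2.1 h.2.2).choose
    else 0 with hcol₁
  set K₁ : Finset ℕ → ℕ := fun s => (L s).length with hK₁
  have hcolK : ∀ s ∈ B₀, ∀ t ∈ B₀, ShiftExt s t → col₁ s t < K₁ s := by
    intro s hs t ht hsh
    rw [hcol₁]
    simp only
    rw [dif_pos ⟨hs.1, ht.1, hsh⟩]
    exact (witEx s hs.1 t ht.1 hsh).choose_spec.1
  have hgα₀ : ∀ b ∈ B₀, g b < α := fun b hb => hgα b hb.1
  have hgm₀ : ∀ b₁ ∈ B₀, ∀ b₂ ∈ B₀, FinsetLexLt b₁ b₂ → g b₁ < g b₂ :=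
    fun b₁ h₁ b₂ h₂ => hgm b₁ h₁.1 b₂ h₂.1
  obtain ⟨X₁, hX₁X₀, hX₁inf, hstab₁⟩ :=
    DS10.GSL hFront₀ hX₀inf h0₀ hgα₀ hgm₀ K₁ col₁ hcolK
  set wit : Finset ℕ → ℕ := fun s =>
    if h : s ∈ B ∧ (↑s : Set ℕ) ⊆ X₁ then
      (hstab₁ s ⟨h.1, h.2.trans hX₁X₀⟩ h.2).choose
    else 0 with hwit
  set istar : Finset ℕ → I := fun s => (L s).getD (wit s) idef with histar
  -- basic properties of istar
  have hwitlt : ∀ s ∈ B, (↑s : Set ℕ) ⊆ X₁ → wit s < K₁ s := by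
    intro s hs hsX
    rw [hwit]; simp only
    rw [dif_pos ⟨hs, hsX⟩]
    exact (hstab₁ s ⟨hs, hsX.trans hX₁X₀⟩ hsX).choose_spec.1
  have hsupp : ∀ s ∈ B, (↑s : Set ℕ) ⊆ X₁ → (F s).1 (istar s) ≠ ⊥ := by
    intro s hs hsX
    have hlt : wit s < (L s).length := hwitlt s hs hsX
    have : istar s ∈ L s := by
      rw [histar]; simp only
      rw [List.getD_eq_getElem _ _ hlt]
      exact List.getElem_mem _
    rw [hL] at this
    simp only [Finset.mem_toList, Set.Finite.mem_toFinset] at this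
    exact this
  have hPairProp : ∀ s, s ∈ B → (↑s : Set ℕ) ⊆ X₁ → ∀ t, t ∈ B → (↑t : Set ℕ) ⊆ X₁ →
      ShiftExt s t →
      Maximal (fun i => (F s).1 i ≠ (F t).1 i) (istar s) ∧
      ¬ ((F s).1 (istar s) < (F t).1 (istar s)) := by
    intro s hs hsX t ht htX hsh
    have hspec := (hstab₁ s ⟨hs, hsX.trans hX₁X₀⟩ hsX).choose_spec
    have hcolv : col₁ s t = wit s := by
      rw [hwit]; simp only
      rw [dif_pos ⟨hs, hsX⟩]
      exact hspec.2 t ⟨ht, htX.trans hX₁X₀⟩ hsh htX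
    have hwspec := (witEx s hs t ht hsh).choose_spec
    have hcoldef : col₁ s t = (witEx s hs t ht hsh).choose := by
      rw [hcol₁]; simp only
      rw [dif_pos ⟨hs, ht, hsh⟩]
    have : istar s = (L s).getD ((witEx s hs t ht hsh).choose) idef := by
      rw [histar]; simp only
      rw [← hcoldef, hcolv]
    rw [this]
    exact ⟨hwspec.2.1, hwspec.2.2⟩
  -- step C : stabilize the comparison colouring
  set B₁ := {b ∈ B | (↑b : Set ℕ) ⊆ X₁} with hB₁
  have hFront₁ : DS10.FrontOn B₁ X₁ := DS10.subFront hFront (hX₁X₀.trans hX₀S)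
  have h0₁ : ∅ ∉ B₁ := fun h => h0 h.1
  set col₂ : Finset ℕ → Finset ℕ → ℕ := fun s t =>
    if istar s = istar t then 0 else if istar s ≤ istar t then 1 else 2 with hcol₂
  have hcol₂lt : ∀ s ∈ B₁, ∀ t ∈ B₁, ShiftExt s t → col₂ s t < 3 := by
    intro s _ t _ _
    rw [hcol₂]; simp only
    split_ifs <;> omega
  obtain ⟨X₂, hX₂X₁, hX₂inf, hstab₂⟩ :=
    DS10.GSL hFront₁ hX₁inf h0₁ (fun b hb => hgα b hb.1)
      (fun b₁ h₁ b₂ h₂ => hgm b₁ h₁.1 b₂ h₂.1) (fun _ => 3) col₂ hcol₂lt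
  set B₂ := {b ∈ B | (↑b : Set ℕ) ⊆ X₂} with hB₂
  have hB₂B₁ : ∀ b ∈ B₂, b ∈ B₁ := fun b hb => ⟨hb.1, hb.2.trans hX₂X₁⟩
  set c3 : Finset ℕ → Fin 3 := fun s =>
    if h : s ∈ B ∧ (↑s : Set ℕ) ⊆ X₂ then
      ⟨(hstab₂ s ⟨h.1, h.2.trans hX₂X₁⟩ h.2).choose,
       (hstab₂ s ⟨h.1, h.2.trans hX₂X₁⟩ h.2).choose_spec.1⟩
    else 0 with hc3
  have hFront₂ : DS10.FrontOn B₂ X₂ :=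
    DS10.subFront hFront ((hX₂X₁.trans hX₁X₀).trans hX₀S)
  obtain ⟨X₃, hX₃X₂, hX₃inf, w, hw⟩ :=
    DS10.NW α X₂ B₂ g c3 hX₂inf hFront₂ (fun b hb => hgα b hb.1)
      (fun b₁ h₁ b₂ h₂ => hgm b₁ h₁.1 b₂ h₂.1)
  set B₃ := {b ∈ B | (↑b : Set ℕ) ⊆ X₃} with hB₃
  have hX₃S : X₃ ⊆ S := ((hX₃X₂.trans hX₂X₁).trans hX₁X₀).trans hX₀S
  have hFront₃ : DS10.FrontOn B₃ X₃ := DS10.subFront hFront hX₃S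
  have h0₃ : ∅ ∉ B₃ := fun h => h0 h.1
  have hB₃B₂ : ∀ b ∈ B₃, b ∈ B₂ := fun b hb => ⟨hb.1, hb.2.trans hX₃X₂⟩
  have hB₃X₁ : ∀ b ∈ B₃, (↑b : Set ℕ) ⊆ X₁ := fun b hb => hb.2.trans (hX₃X₂.trans hX₂X₁)
  -- the colouring is constant on shift pairs of B₃
  have hpaircol : ∀ s ∈ B₃, ∀ t ∈ B₃, ShiftExt s t → col₂ s t = (w : ℕ) := by
    intro s hs t ht hsh
    have hsB₂ : s ∈ B₂ := hB₃B₂ s hs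
    have htB₂ : t ∈ B₂ := hB₃B₂ t ht
    have hspec := (hstab₂ s ⟨hsB₂.1, hsB₂.2.trans hX₂X₁⟩ hsB₂.2).choose_spec
    have h1 : col₂ s t = (hstab₂ s ⟨hsB₂.1, hsB₂.2.trans hX₂X₁⟩ hsB₂.2).choose :=
      hspec.2 t ⟨htB₂.1, htB₂.2.trans hX₂X₁⟩ hsh htB₂.2
    have h2 : c3 s = w := hw s hsB₂ hs.2
    rw [hc3] at h2
    simp only at h2
    rw [dif_pos ⟨hsB₂.1, hsB₂.2⟩] at h2
    rw [h1]
    exact congrArg Fin.val h2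
  have hd0 : ∀ s t : Finset ℕ, col₂ s t = 0 → istar s = istar t := by
    intro s t h
    rw [hcol₂] at h; simp only at h
    by_contra hne
    rw [if_neg hne] at h
    by_cases hle : istar s ≤ istar t
    · rw [if_pos hle] at h; exact absurd h (by norm_num)
    · rw [if_neg hle] at h; exact absurd h (by norm_num)
  have hd1 : ∀ s t : Finset ℕ, col₂ s t = 1 → istar s < istar t := by
    intro s t h
    rw [hcol₂] at h; simp only at h
    by_cases heq : istar s = istar t
    · rw [if_pos heq] at h; exact absurd h (by norm_num)
    · rw [if_neg heq] at h
      by_cases hle : istar s ≤ istar t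
      · exact lt_of_le_of_ne hle heq
      · rw [if_neg hle] at h; exact absurd h (by norm_num)
  have hd2 : ∀ s t : Finset ℕ, col₂ s t = 2 → ¬ istar s ≤ istar t := by
    intro s t h
    rw [hcol₂] at h; simp only at h
    by_cases heq : istar s = istar t
    · rw [if_pos heq] at h; exact absurd h (by norm_num)
    · rw [if_neg heq] at h
      by_cases hle : istar s ≤ istar t
      · rw [if_pos hle] at h; exact absurd h (by norm_num)
      · exact hle
  -- the barrier structure on B₃
  have hBar₃ : IsBarrier B₃ := DS10.front_isBarrier hFront₃ hX₃inf h0₃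
  have hType₃ : BarrierTypeLE B₃ α :=
    ⟨g, fun b hb => hgα b hb.1, fun b₁ h₁ b₂ h₂ => hgm b₁ h₁.1 b₂ h₂.1⟩
  -- case analysis on the colour w
  have hwcases : (w : ℕ) = 0 ∨ (w : ℕ) = 1 ∨ (w : ℕ) = 2 := by omega
  rcases hwcases with hw0 | hw1 | hw2
  · -- istar is constant; use hP
    have hsp : ∀ s ∈ B₃, ∀ t ∈ B₃, ShiftExt s t → istar s = istar t := by
      intro s hs t ht hsh
      exact hd0 s t (by rw [hpaircol s hs t ht hsh, hw0])
    have hconst := DS10.conn hFront₃ hX₃inf h0₃ istar hsp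
    obtain ⟨s₀, hs₀B, -⟩ := hFront₃.2.2 X₃ subset_rfl hX₃inf
    set i₀ := istar s₀ with hi₀
    obtain ⟨s, hsB, t, htB, hsh, hle⟩ :=
      hP i₀ B₃ hBar₃ hType₃ (fun b => (F b).1 i₀)
    have his : istar s = i₀ := hconst s hsB s₀ hs₀B
    have hpp := hPairProp s hsB.1 (hB₃X₁ s hsB) t htB.1 (hB₃X₁ t htB) hsh
    rw [his] at hpp
    exact hpp.2 (lt_of_le_of_ne hle hpp.1.1)
  · -- istar strictly increases along shift pairs : support contradiction
    have hsp : ∀ s ∈ B₃, ∀ t ∈ B₃, ShiftExt s t → istar s < istar t := by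
      intro s hs t ht hsh
      exact hd1 s t (by rw [hpaircol s hs t ht hsh, hw1])
    obtain ⟨u, huB, hush⟩ := DS10.exists_chain hFront₃ hX₃inf h0₃
    have hmono : ∀ k l, k < l → istar (u k) < istar (u l) := by
      intro k l hkl
      induction l with
      | zero => omega
      | succ l ih =>
        rcases Nat.lt_or_ge k l with h | h
        · exact lt_trans (ih h) (hsp (u l) (huB l) (u (l+1)) (huB (l+1)) (hush l))
        · have : k = l := by omega
          subst this
          exact hsp (u k) (huB k) (u (k+1)) (huB (k+1)) (hush k)
    have hproppg : ∀ d k, (F (u k)).1 (istar (u (k+d))) = (F (u (k+d))).1 (istar (u (k+d))) ∨ d = 0 := by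
      intro d
      induction d with
      | zero => intro k; exact Or.inr rfl
      | succ d ih =>
        intro k
        left
        have hstep : (F (u k)).1 (istar (u (k+d+1))) = (F (u (k+1))).1 (istar (u (k+d+1))) := by
          have hpp := hPairProp (u k) (huB k).1 (hB₃X₁ _ (huB k))
            (u (k+1)) (huB (k+1)).1 (hB₃X₁ _ (huB (k+1))) (hush k)
          by_contra hne
          have hlt : istar (u k) < istar (u (k+d+1)) := hmono k (k+d+1) (by omega)
          have := hpp.1.2 hne (le_of_lt hlt)
          exact absurd (lt_of_lt_of_le hlt this) (lt_irrefl _)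
        rcases ih (k+1) with h | h
        · have hE : k + 1 + d = k + d + 1 := by omega
          rw [hE] at h
          show (F (u k)).1 (istar (u (k+d+1))) = (F (u (k+d+1))).1 (istar (u (k+d+1)))
          rw [hstep, h]
        · subst h
          simpa using hstep
    have hin : ∀ l, 0 < l → (F (u 0)).1 (istar (u l)) ≠ ⊥ := by
      intro l hl
      rcases hproppg l 0 with h | h
      · rw [show (0:ℕ) + l = l by omega] at h
        rw [h]
        exact hsupp (u l) (huB l).1 (hB₃X₁ _ (huB l))
      · omega
    have hinj : Function.Injective (fun l : ℕ => istar (u (l+1))) := by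
      intro a b hab
      by_contra hne
      rcases Nat.lt_or_ge a b with h | h
      · exact (hmono (a+1) (b+1) (by omega)).ne hab
      · have : b < a := by omega
        exact (hmono (b+1) (a+1) (by omega)).ne hab.symm
    have hrange : Set.range (fun l : ℕ => istar (u (l+1))) ⊆ {i | (F (u 0)).1 i ≠ ⊥} := by
      rintro i ⟨l, rfl⟩
      exact hin (l+1) (by omega)
    exact Set.infinite_range_of_injective hinj ((F (u 0)).2.subset hrange)
  · -- istar is a bad array : contradicts hI
    obtain ⟨s, hsB, t, htB, hsh, hle⟩ := hI B₃ hBar₃ hType₃ istar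
    exact hd2 s t (by rw [hpaircol s hsB t htB hsh, hw2]) hle
end

section
/- If the index poset I is bqo and each poset P_i (i ∈ I, each with least element 0_i) is bqo, then the Dress–Schiffels product ⊗^{DS}_{i∈I} P_i is bqo. -/
universe u v

open Set

namespace BqoProof

open Set

/-! ### Basic facts about initial segments and barriers -/

def base (B : Set (Finset ℕ)) : Set ℕ := ⋃ b ∈ B, (↑b : Set ℕ)

lemma subset_base {B : Set (Finset ℕ)} {b : Finset ℕ} (hb : b ∈ B) : ↑b ⊆ base B := by
  intro x hx
  exact Set.mem_biUnion hb hx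

lemma base_mono {B B' : Set (Finset ℕ)} (h : B ⊆ B') : base B ⊆ base B' := by
  intro x hx
  rcases Set.mem_iUnion₂.1 hx with ⟨b, hb, hxb⟩
  exact Set.mem_biUnion (h hb) hxb

lemma initSeg_comparable {r s : Finset ℕ} {X : Set ℕ}
    (hr : NatInitSeg r X) (hs : NatInitSeg s X) : r ⊆ s ∨ s ⊆ r := by
  by_contra h
  push_neg at h
  obtain ⟨h1, h2⟩ := h
  obtain ⟨a, ha, has⟩ := Finset.not_subset.1 h1
  obtain ⟨b, hb, hbr⟩ := Finset.not_subset.1 h2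
  have hab : a < b := hr.2 b (hs.1 hb) hbr a ha
  have hba : b < a := hs.2 a (hr.1 ha) has b hb
  omega

lemma barrier_initSeg_unique {B : Set (Finset ℕ)} (hB : IsBarrier B) {r s : Finset ℕ} {X : Set ℕ}
    (hrB : r ∈ B) (hsB : s ∈ B) (hr : NatInitSeg r X) (hs : NatInitSeg s X) : r = s := by
  rcases initSeg_comparable hr hs with h | h
  · exact hB.2.1 r hrB s hsB h
  · exact (hB.2.1 s hsB r hrB h).symm

lemma barrier_empty_not_mem {B : Set (Finset ℕ)} (hB : IsBarrier B) : (∅ : Finset ℕ) ∉ B := by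
  intro h
  obtain ⟨b, hb⟩ := (hB.1.diff (Set.finite_singleton ∅)).nonempty
  have : (∅ : Finset ℕ) = b := hB.2.1 ∅ h b hb.1 (Finset.empty_subset b)
  exact hb.2 (by simp [← this])

lemma barrier_mem_nonempty {B : Set (Finset ℕ)} (hB : IsBarrier B) {b : Finset ℕ} (hb : b ∈ B) :
    b.Nonempty := by
  rcases b.eq_empty_or_nonempty with rfl | h
  · exact absurd hb (barrier_empty_not_mem hB)
  · exact h

/-- The canonical initial segment of an infinite set `X` in a barrier `B`. -/
noncomputable def sig (B : Set (Finset ℕ)) (X : Set ℕ) : Finset ℕ := by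
  classical
  exact if h : ∃ r ∈ B, NatInitSeg r X then h.choose else ∅

lemma sig_spec {B : Set (Finset ℕ)} (hB : IsBarrier B) {X : Set ℕ}
    (hX : X ⊆ base B) (hXi : X.Infinite) : sig B X ∈ B ∧ NatInitSeg (sig B X) X := by
  have h : ∃ r ∈ B, NatInitSeg r X := hB.2.2 X hX hXi
  rw [sig, dif_pos h]
  exact ⟨h.choose_spec.1, h.choose_spec.2⟩

lemma sig_eq_of_initSeg {B : Set (Finset ℕ)} (hB : IsBarrier B) {X : Set ℕ}
    (hX : X ⊆ base B) (hXi : X.Infinite) {u : Finset ℕ} (hu : u ∈ B)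
    (hseg : NatInitSeg u X) : sig B X = u := by
  obtain ⟨h1, h2⟩ := sig_spec hB hX hXi
  exact barrier_initSeg_unique hB h1 hu h2 hseg

/-- Remove the least element of an infinite subset of `ℕ`. -/
def stl (X : Set ℕ) : Set ℕ := X \ {sInf X}

lemma stl_subset (X : Set ℕ) : stl X ⊆ X := Set.diff_subset

lemma stl_infinite {X : Set ℕ} (hX : X.Infinite) : (stl X).Infinite :=
  hX.diff (Set.finite_singleton _)

lemma mem_stl {X : Set ℕ} {x : ℕ} : x ∈ stl X ↔ x ∈ X ∧ x ≠ sInf X := by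
  simp [stl]

lemma sInf_lt_of_mem_stl {X : Set ℕ} {x : ℕ} (hx : x ∈ stl X) : sInf X < x := by
  rcases mem_stl.1 hx with ⟨h1, h2⟩
  exact lt_of_le_of_ne (Nat.sInf_le h1) (Ne.symm h2)

def tln (k : ℕ) (X : Set ℕ) : Set ℕ := stl^[k] X

lemma tln_zero (X : Set ℕ) : tln 0 X = X := rfl

lemma tln_succ (k : ℕ) (X : Set ℕ) : tln (k+1) X = stl (tln k X) :=
  Function.iterate_succ_apply' _ _ _

lemma tln_subset (k : ℕ) (X : Set ℕ) : tln k X ⊆ X := by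
  induction k with
  | zero => exact subset_rfl
  | succ n ih => rw [tln_succ]; exact (stl_subset _).trans ih

lemma tln_infinite (k : ℕ) {X : Set ℕ} (hX : X.Infinite) : (tln k X).Infinite := by
  induction k with
  | zero => exact hX
  | succ n ih => rw [tln_succ]; exact stl_infinite ih

lemma tln_mono {k l : ℕ} (h : k ≤ l) (X : Set ℕ) : tln l X ⊆ tln k X := by
  induction l with
  | zero => simpa [Nat.le_zero.1 h] using subset_rfl
  | succ n ih =>
    rcases Nat.lt_or_ge k (n+1) with h' | h'
    · rw [tln_succ]; exact (stl_subset _).trans (ih (Nat.lt_succ_iff.1 h'))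
    · have : k = n + 1 := le_antisymm h h'
      simp [this]

lemma sInf_tln_lt (k : ℕ) {X : Set ℕ} (hX : X.Infinite) :
    sInf (tln k X) < sInf (tln (k+1) X) := by
  rw [tln_succ]
  have h1 : sInf (stl (tln k X)) ∈ stl (tln k X) :=
    Nat.sInf_mem (stl_infinite (tln_infinite k hX)).nonempty
  exact sInf_lt_of_mem_stl h1

lemma sInf_tln_strictMono {X : Set ℕ} (hX : X.Infinite) :
    StrictMono (fun k => sInf (tln k X)) :=
  strictMono_nat_of_lt_succ (fun n => sInf_tln_lt n hX)

/-- A finite set whose elements are all below an infinite tail is an initial segment of the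
union. -/
lemma natInitSeg_union_tail {u : Finset ℕ} {T : Set ℕ} (h : ∀ x ∈ T, ∀ y ∈ u, y < x) :
    NatInitSeg u (↑u ∪ T) := by
  refine ⟨Set.subset_union_left, ?_⟩
  intro x hx hxu y hy
  rcases hx with hx | hx
  · exact absurd hx hxu
  · exact h x hx y hy

end BqoProof
namespace BqoProof

open Set

/-! ### The canonical shift-extension pair of an infinite set -/

lemma sInf_mem_initSeg {B : Set (Finset ℕ)} (hB : IsBarrier B) {X : Set ℕ}
    (hXi : X.Infinite) {r : Finset ℕ} (hr : r ∈ B) (hseg : NatInitSeg r X) :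
    sInf X ∈ r := by
  by_contra h
  have hne : r.Nonempty := barrier_mem_nonempty hB hr
  obtain ⟨y, hy⟩ := hne
  have h1 : sInf X ∈ X := Nat.sInf_mem hXi.nonempty
  have h2 : y < sInf X := hseg.2 (sInf X) h1 h y hy
  have h3 : sInf X ≤ y := Nat.sInf_le (hseg.1 hy)
  omega

lemma natInitSeg_erase {r : Finset ℕ} {X : Set ℕ} (hseg : NatInitSeg r X) :
    NatInitSeg (r.erase (sInf X)) (stl X) := by
  constructor
  · intro x hx
    have hx' := Finset.mem_erase.1 (by exact_mod_cast hx)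
    exact mem_stl.2 ⟨hseg.1 (by exact_mod_cast hx'.2), hx'.1⟩
  · intro x hx hxr y hy
    have hy' := Finset.mem_erase.1 hy
    have hxX : x ∈ X := (stl_subset X) hx
    by_cases hxr' : x ∈ r
    · exact absurd (Finset.mem_erase.2 ⟨(mem_stl.1 hx).2, hxr'⟩) hxr
    · exact hseg.2 x hxX hxr' y hy'.2

/-- The two canonical segments `sig B X` and `sig B (stl X)` form a shift-extension pair. -/
lemma shiftExt_sig_stl {B : Set (Finset ℕ)} (hB : IsBarrier B) {X : Set ℕ}
    (hX : X ⊆ base B) (hXi : X.Infinite) :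
    ShiftExt (sig B X) (sig B (stl X)) := by
  classical
  obtain ⟨hsB, hseg⟩ := sig_spec hB hX hXi
  set s := sig B X with hs
  set m := sInf X with hm
  have hstlX : stl X ⊆ base B := (stl_subset X).trans hX
  have hstli : (stl X).Infinite := stl_infinite hXi
  obtain ⟨htB, htseg⟩ := sig_spec hB hstlX hstli
  set t := sig B (stl X) with ht
  have hmem : m ∈ s := sInf_mem_initSeg hB hXi hsB hseg
  have hmin : ∀ x ∈ s, m ≤ x := fun x hx => Nat.sInf_le (hseg.1 hx)
  have hlt : ∀ y ∈ t, m < y := fun y hy => sInf_lt_of_mem_stl (htseg.1 hy)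
  have heseg : NatInitSeg (s.erase m) (stl X) := natInitSeg_erase hseg
  have hsub : s.erase m ⊆ t := by
    rcases initSeg_comparable heseg htseg with h | h
    · exact h
    · -- t ⊆ s.erase m would force t = s, impossible since m ∈ s but m ∉ t
      have hts : t ⊆ s := h.trans (Finset.erase_subset _ _)
      have : t = s := hB.2.1 t htB s hsB hts
      have : m ∈ t := this ▸ hmem
      exact absurd (hlt m this) (lt_irrefl m)
  have hne : s.erase m ≠ t := by
    intro hEq
    have hts : t ⊆ s := hEq ▸ Finset.erase_subset _ _
    have : t = s := hB.2.1 t htB s hsB hts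
    have : m ∈ t := this ▸ hmem
    exact absurd (hlt m this) (lt_irrefl m)
  refine ⟨m, hmem, hmin, hlt, hsub, hne, ?_⟩
  intro x hx hxe y hy
  exact heseg.2 x (htseg.1 hx) hxe y hy

/-! ### Generic consequences of `ShiftExt` -/

lemma shiftExt_min {s t : Finset ℕ} (h : ShiftExt s t) :
    ∃ m, m ∈ s ∧ (∀ x ∈ s, m ≤ x) ∧ (∀ y ∈ t, m < y) ∧ s.erase m ⊆ t ∧
      s ∪ t = insert m t := by
  obtain ⟨m, hm, hmin, hlt, hsub, hne, hseg⟩ := h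
  refine ⟨m, hm, hmin, hlt, hsub, ?_⟩
  ext x
  simp only [Finset.mem_union, Finset.mem_insert]
  constructor
  · rintro (hx | hx)
    · by_cases hxm : x = m
      · exact Or.inl hxm
      · exact Or.inr (hsub (Finset.mem_erase.2 ⟨hxm, hx⟩))
    · exact Or.inr hx
  · rintro (rfl | hx)
    · exact Or.inl hm
    · exact Or.inr hx

lemma shiftExt_nonempty {s t : Finset ℕ} (h : ShiftExt s t) : s.Nonempty := by
  obtain ⟨m, hm, _⟩ := h
  exact ⟨m, hm⟩

/-- `s` is an initial segment of `↑(s ∪ t)` when `ShiftExt s t`. -/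
lemma shiftExt_initSeg_union {s t : Finset ℕ} (h : ShiftExt s t) :
    NatInitSeg s (↑(s ∪ t)) := by
  obtain ⟨m, hm, hmin, hlt, hsub, hne, hseg⟩ := h
  constructor
  · intro x hx
    exact_mod_cast Finset.mem_union_left t (by exact_mod_cast hx)
  · intro x hx hxs y hy
    have hx' : x ∈ s ∪ t := by exact_mod_cast hx
    rcases Finset.mem_union.1 hx' with h1 | h1
    · exact absurd h1 hxs
    · -- x ∈ t, x ∉ s
      have hxm : m < x := hlt x h1
      have hxe : x ∉ s.erase m := fun hc => hxs (Finset.mem_erase.1 hc).2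
      by_cases hym : y = m
      · omega
      · exact hseg x h1 hxe y (Finset.mem_erase.2 ⟨hym, hy⟩)

/-! ### Restriction of a barrier to an infinite subset of its base -/

def restrict (B : Set (Finset ℕ)) (M : Set ℕ) : Set (Finset ℕ) := {b ∈ B | ↑b ⊆ M}

lemma restrict_subset (B : Set (Finset ℕ)) (M : Set ℕ) : restrict B M ⊆ B :=
  fun _ h => h.1

lemma base_restrict_subset (B : Set (Finset ℕ)) (M : Set ℕ) : base (restrict B M) ⊆ M := by
  intro x hx
  rcases Set.mem_iUnion₂.1 hx with ⟨b, hb, hxb⟩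
  exact hb.2 hxb

lemma isBarrier_restrict {B : Set (Finset ℕ)} (hB : IsBarrier B) {M : Set ℕ}
    (hM : M ⊆ base B) (hMi : M.Infinite) : IsBarrier (restrict B M) := by
  refine ⟨?_, ?_, ?_⟩
  · -- infinite: the canonical segments of the tails of M are distinct
    have hinj : Function.Injective (fun k => sig B (tln k M)) := by
      intro k l hkl
      by_contra hne
      wlog hlt' : k < l generalizing k l
      · exact this hkl.symm (Ne.symm hne) (by omega)
      have h1 := sig_spec hB ((tln_subset k M).trans hM) (tln_infinite k hMi)
      have h2 := sig_spec hB ((tln_subset l M).trans hM) (tln_infinite l hMi)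
      have hm1 : sInf (tln k M) ∈ sig B (tln k M) :=
        sInf_mem_initSeg hB (tln_infinite k hMi) h1.1 h1.2
      have hm2 : sInf (tln l M) ∈ sig B (tln l M) :=
        sInf_mem_initSeg hB (tln_infinite l hMi) h2.1 h2.2
      have hmono := sInf_tln_strictMono hMi hlt'
      simp only at hmono
      -- sInf (tln l M) ∈ sig B (tln k M), so sInf (tln k M) ≤ ... but also
      have hle : sInf (tln k M) ≤ sInf (tln l M) := le_of_lt hmono
      -- the element sInf (tln k M) belongs to sig B (tln k M) = sig B (tln l M) ⊆ tln l M
      have : (sInf (tln k M)) ∈ sig B (tln l M) := by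
        have hkl' : sig B (tln k M) = sig B (tln l M) := hkl
        rw [← hkl']; exact hm1
      have hin : (sInf (tln k M)) ∈ tln l M := h2.2.1 this
      have : sInf (tln l M) ≤ sInf (tln k M) := Nat.sInf_le hin
      omega
    have hmem : ∀ k, (fun k => sig B (tln k M)) k ∈ restrict B M := by
      intro k
      have h1 := sig_spec hB ((tln_subset k M).trans hM) (tln_infinite k hMi)
      exact ⟨h1.1, (Set.Subset.trans h1.2.1 (tln_subset k M))⟩
    exact Set.infinite_of_injective_forall_mem hinj hmem
  · intro x hx y hy hxy
    exact hB.2.1 x hx.1 y hy.1 hxy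
  · intro X hX hXi
    have hXM : X ⊆ M := hX.trans (base_restrict_subset B M)
    have hXb : X ⊆ base B := hXM.trans hM
    obtain ⟨h1, h2⟩ := sig_spec hB hXb hXi
    exact ⟨sig B X, ⟨h1, h2.1.trans hXM⟩, h2⟩

end BqoProof
namespace BqoProof

open Set

/-! ### The pair barrier `B(2)` -/

def pairSet (B : Set (Finset ℕ)) : Set (Finset ℕ) :=
  {u | ∃ s t, s ∈ B ∧ t ∈ B ∧ ShiftExt s t ∧ u = s ∪ t}

lemma base_pairSet_subset (B : Set (Finset ℕ)) : base (pairSet B) ⊆ base B := by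
  intro x hx
  rcases Set.mem_iUnion₂.1 hx with ⟨u, ⟨s, t, hs, ht, _, rfl⟩, hxu⟩
  rcases Finset.mem_union.1 (by exact_mod_cast hxu) with h | h
  · exact subset_base hs h
  · exact subset_base ht h

/-- Decomposition of an element of `pairSet B` is unique. -/
lemma pair_decomp_unique {B : Set (Finset ℕ)} (hB : IsBarrier B) {s t s' t' : Finset ℕ}
    (hs : s ∈ B) (ht : t ∈ B) (hst : ShiftExt s t)
    (hs' : s' ∈ B) (ht' : t' ∈ B) (hst' : ShiftExt s' t')
    (huv : s ∪ t = s' ∪ t') : s = s' ∧ t = t' := by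
  obtain ⟨m, hm, hmin, hlt, hsub, hins⟩ := shiftExt_min hst
  obtain ⟨m', hm', hmin', hlt', hsub', hins'⟩ := shiftExt_min hst'
  -- both unions equal `insert m t = insert m' t'`; m and m' are the minima, hence equal
  have hmm : m = m' := by
    have h1 : m ∈ s' ∪ t' := huv ▸ Finset.mem_union_left t hm
    have h2 : m' ∈ s ∪ t := huv ▸ Finset.mem_union_left t' hm'
    have hle1 : m ≤ m' := by
      rcases Finset.mem_union.1 h2 with h | h
      · exact hmin m' h
      · exact le_of_lt (hlt m' h)
    have hle2 : m' ≤ m := by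
      rcases Finset.mem_union.1 h1 with h | h
      · exact hmin' m h
      · exact le_of_lt (hlt' m h)
    omega
  subst hmm
  have htt : t = t' := by
    have h1 : insert m t = insert m t' := by rw [← hins, ← hins', huv]
    have hmt : m ∉ t := fun hc => absurd (hlt m hc) (lt_irrefl m)
    have hmt' : m ∉ t' := fun hc => absurd (hlt' m hc) (lt_irrefl m)
    ext x
    constructor
    · intro hx
      have : x ∈ insert m t' := h1 ▸ Finset.mem_insert_of_mem hx
      rcases Finset.mem_insert.1 this with rfl | h
      · exact absurd hx hmt
      · exact h
    · intro hx
      have : x ∈ insert m t := h1 ▸ Finset.mem_insert_of_mem hx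
      rcases Finset.mem_insert.1 this with rfl | h
      · exact absurd hx hmt'
      · exact h
  subst htt
  refine ⟨?_, rfl⟩
  -- s and s' are both initial segments of ↑(s ∪ t)
  have h1 : NatInitSeg s ↑(s ∪ t) := shiftExt_initSeg_union hst
  have h2 : NatInitSeg s' ↑(s' ∪ t) := shiftExt_initSeg_union hst'
  rw [← huv] at h2
  exact barrier_initSeg_unique hB hs hs' h1 h2

lemma base_infinite {B : Set (Finset ℕ)} (hB : IsBarrier B) : (base B).Infinite := by
  by_contra h
  rw [Set.not_infinite] at h
  have : B ⊆ (fun b : Finset ℕ => (↑b : Set ℕ)) ⁻¹' {Y : Set ℕ | Y ⊆ base B} := by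
    intro b hb
    exact subset_base hb
  have hfin : ((fun b : Finset ℕ => (↑b : Set ℕ)) ⁻¹' {Y : Set ℕ | Y ⊆ base B} : Set (Finset ℕ)).Finite := by
    have h2 : ({Y : Set ℕ | Y ⊆ base B}).Finite := Set.Finite.finite_subsets h
    exact Set.Finite.preimage (Set.injOn_of_injective Finset.coe_injective) h2
  exact hB.1 (hfin.subset this)

lemma isBarrier_pairSet {B : Set (Finset ℕ)} (hB : IsBarrier B) : IsBarrier (pairSet B) := by
  have hbase : (base B).Infinite := base_infinite hB
  constructor
  · -- infinite
    set X := base B with hX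
    have hXi : X.Infinite := hbase
    have hmem : ∀ k, sig B (tln k X) ∪ sig B (tln (k+1) X) ∈ pairSet B := by
      intro k
      have h1 := sig_spec hB ((tln_subset k X).trans subset_rfl) (tln_infinite k hXi)
      have hse := shiftExt_sig_stl hB ((tln_subset k X).trans subset_rfl) (tln_infinite k hXi)
      have h2 := sig_spec hB ((tln_subset (k+1) X).trans subset_rfl) (tln_infinite (k+1) hXi)
      rw [← tln_succ] at hse
      exact ⟨_, _, h1.1, h2.1, hse, rfl⟩
    have hinj : Function.Injective (fun k => sig B (tln k X) ∪ sig B (tln (k+1) X)) := by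
      intro k l hkl
      by_contra hne
      wlog hlt' : k < l generalizing k l
      · exact this hkl.symm (Ne.symm hne) (by omega)
      simp only at hkl
      -- the minimum of the union is sInf (tln k X)
      have hmin : ∀ j, (∀ x ∈ sig B (tln j X) ∪ sig B (tln (j+1) X), sInf (tln j X) ≤ x) ∧
          sInf (tln j X) ∈ sig B (tln j X) ∪ sig B (tln (j+1) X) := by
        intro j
        have h1 := sig_spec hB ((tln_subset j X).trans subset_rfl) (tln_infinite j hXi)
        have h2 := sig_spec hB ((tln_subset (j+1) X).trans subset_rfl) (tln_infinite (j+1) hXi)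
        constructor
        · intro x hx
          rcases Finset.mem_union.1 hx with h | h
          · exact Nat.sInf_le (h1.2.1 h)
          · have : x ∈ tln (j+1) X := h2.2.1 h
            exact Nat.sInf_le ((tln_mono (Nat.le_succ j) X) this)
        · exact Finset.mem_union_left _ (sInf_mem_initSeg hB (tln_infinite j hXi) h1.1 h1.2)
      obtain ⟨hk1, hk2⟩ := hmin k
      obtain ⟨hl1, hl2⟩ := hmin l
      have e1 : sInf (tln k X) ≤ sInf (tln l X) := hk1 _ (hkl ▸ hl2)
      have e2 : sInf (tln l X) ≤ sInf (tln k X) := hl1 _ (hkl ▸ hk2)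
      have := sInf_tln_strictMono hXi hlt'
      simp only at this
      omega
    exact Set.infinite_of_injective_forall_mem hinj hmem
  constructor
  · -- antichain
    rintro u ⟨s, t, hs, ht, hst, rfl⟩ u' ⟨s', t', hs', ht', hst', rfl⟩ hsub
    obtain ⟨m, hm, hmin, hlt, hsub1, hins⟩ := shiftExt_min hst
    obtain ⟨m', hm', hmin', hlt', hsub1', hins'⟩ := shiftExt_min hst'
    have humem : ∀ x ∈ s ∪ t, m ≤ x := by
      intro x hx
      rcases Finset.mem_union.1 hx with h | h
      · exact hmin x h
      · exact le_of_lt (hlt x h)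
    have humem' : ∀ x ∈ s' ∪ t', m' ≤ x := by
      intro x hx
      rcases Finset.mem_union.1 hx with h | h
      · exact hmin' x h
      · exact le_of_lt (hlt' x h)
    have hmm' : m' ≤ m := humem' m (hsub (Finset.mem_union_left t hm))
    rcases eq_or_lt_of_le hmm' with hEq | hLt
    · -- same minimum: u = insert m t, u' = insert m t', and t ⊆ t' forces t = t'
      subst hEq
      have htt' : t ⊆ t' := by
        intro x hx
        have hx' : x ∈ s' ∪ t' := hsub (Finset.mem_union_right s hx)
        rcases Finset.mem_union.1 hx' with h | h
        · -- x ∈ s'; note x ∈ t so m' < x, so x ∈ s'.erase m' ⊆ t'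
          exact hsub1' (Finset.mem_erase.2 ⟨fun hc => absurd (hlt x hx) (by omega : ¬ m' < x), h⟩)
        · exact h
      have : t = t' := hB.2.1 t ht t' ht' htt'
      rw [hins, hins', this]
    · -- m' < m : then s ⊆ t', forcing s = t', then t ⊆ s forcing contradiction
      exfalso
      have hsnotm' : m' ∉ s ∪ t := by
        intro hc
        exact absurd (humem m' hc) (by omega)
      have hst'sub : s ⊆ t' := by
        intro x hx
        have hx' : x ∈ s' ∪ t' := hsub (Finset.mem_union_left t hx)
        rw [hins'] at hx'
        rcases Finset.mem_insert.1 hx' with rfl | h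
        · exact absurd (Finset.mem_union_left t hx) hsnotm'
        · exact h
      have hseq : s = t' := hB.2.1 s hs t' ht' hst'sub
      have htsub : t ⊆ s := by
        intro x hx
        have hx' : x ∈ s' ∪ t' := hsub (Finset.mem_union_right s hx)
        rw [hins'] at hx'
        rcases Finset.mem_insert.1 hx' with rfl | h
        · exact absurd (Finset.mem_union_right s hx) hsnotm'
        · exact hseq ▸ h
      have hteq : t = s := hB.2.1 t ht s hs htsub
      have : m ∈ t := hteq ▸ hm
      exact absurd (hlt m this) (lt_irrefl m)
  · -- every infinite subset of the base has an initial segment in pairSet B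
    intro X hX hXi
    have hXb : X ⊆ base B := hX.trans (base_pairSet_subset B)
    obtain ⟨h1, h2⟩ := sig_spec hB hXb hXi
    have hstl : stl X ⊆ base B := (stl_subset X).trans hXb
    obtain ⟨h3, h4⟩ := sig_spec hB hstl (stl_infinite hXi)
    have hse := shiftExt_sig_stl hB hXb hXi
    refine ⟨sig B X ∪ sig B (stl X), ⟨_, _, h1, h3, hse, rfl⟩, ?_, ?_⟩
    · intro x hx
      rcases Finset.mem_union.1 (by exact_mod_cast hx) with h | h
      · exact h2.1 h
      · exact (stl_subset X) (h4.1 h)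
    · intro x hx hxu y hy
      have hxs : x ∉ sig B X := fun hc => hxu (by exact_mod_cast Finset.mem_union_left _ hc)
      have hxt : x ∉ sig B (stl X) := fun hc => hxu (by exact_mod_cast Finset.mem_union_right _ hc)
      have hxm : x ≠ sInf X := by
        intro hc
        exact hxs (hc ▸ sInf_mem_initSeg hB hXi h1 h2)
      have hxstl : x ∈ stl X := mem_stl.2 ⟨hx, hxm⟩
      rcases Finset.mem_union.1 hy with h | h
      · exact h2.2 x hx hxs y h
      · exact h4.2 x hxstl hxt y h

lemma mem_pairSet_of {B : Set (Finset ℕ)} {s t : Finset ℕ} (hs : s ∈ B) (ht : t ∈ B)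
    (hst : ShiftExt s t) : s ∪ t ∈ pairSet B := ⟨s, t, hs, ht, hst, rfl⟩

/-- The canonical segment of the pair barrier is the union of the two canonical segments. -/
lemma sig_pairSet {B : Set (Finset ℕ)} (hB : IsBarrier B) {X : Set ℕ}
    (hX : X ⊆ base (pairSet B)) (hXi : X.Infinite) :
    sig (pairSet B) X = sig B X ∪ sig B (stl X) := by
  have hBp := isBarrier_pairSet hB
  obtain ⟨r, hr, hrseg⟩ := hBp.2.2 X hX hXi
  have hXb : X ⊆ base B := hX.trans (base_pairSet_subset B)
  obtain ⟨h1, h2⟩ := sig_spec hB hXb hXi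
  obtain ⟨h3, h4⟩ := sig_spec hB ((stl_subset X).trans hXb) (stl_infinite hXi)
  have hse := shiftExt_sig_stl hB hXb hXi
  apply sig_eq_of_initSeg hBp hX hXi (mem_pairSet_of h1 h3 hse)
  constructor
  · intro x hx
    rcases Finset.mem_union.1 (by exact_mod_cast hx) with h | h
    · exact h2.1 h
    · exact (stl_subset X) (h4.1 h)
  · intro x hx hxu y hy
    have hxs : x ∉ sig B X := fun hc => hxu (by exact_mod_cast Finset.mem_union_left _ hc)
    have hxt : x ∉ sig B (stl X) := fun hc => hxu (by exact_mod_cast Finset.mem_union_right _ hc)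
    have hxm : x ≠ sInf X := fun hc => hxs (hc ▸ sInf_mem_initSeg hB hXi h1 h2)
    have hxstl : x ∈ stl X := mem_stl.2 ⟨hx, hxm⟩
    rcases Finset.mem_union.1 hy with h | h
    · exact h2.2 x hx hxs y h
    · exact h4.2 x hxstl hxt y h

/-- First component of the canonical decomposition of an element of `pairSet B`. -/
noncomputable def pFst (B : Set (Finset ℕ)) (u : Finset ℕ) : Finset ℕ := by
  classical
  exact if h : ∃ s t, s ∈ B ∧ t ∈ B ∧ ShiftExt s t ∧ u = s ∪ t then h.choose else ∅

noncomputable def pSnd (B : Set (Finset ℕ)) (u : Finset ℕ) : Finset ℕ := by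
  classical
  exact if h : ∃ s t, s ∈ B ∧ t ∈ B ∧ ShiftExt s t ∧ u = s ∪ t then h.choose_spec.choose else ∅

lemma pFst_pSnd_spec {B : Set (Finset ℕ)} {u : Finset ℕ} (hu : u ∈ pairSet B) :
    pFst B u ∈ B ∧ pSnd B u ∈ B ∧ ShiftExt (pFst B u) (pSnd B u) ∧ u = pFst B u ∪ pSnd B u := by
  have h : ∃ s t, s ∈ B ∧ t ∈ B ∧ ShiftExt s t ∧ u = s ∪ t := hu
  rw [pFst, pSnd, dif_pos h, dif_pos h]
  obtain ⟨h1, h2, h3, h4⟩ := h.choose_spec.choose_spec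
  exact ⟨h1, h2, h3, h4⟩

lemma pFst_eq {B : Set (Finset ℕ)} (hB : IsBarrier B) {s t : Finset ℕ}
    (hs : s ∈ B) (ht : t ∈ B) (hst : ShiftExt s t) :
    pFst B (s ∪ t) = s ∧ pSnd B (s ∪ t) = t := by
  have hu : s ∪ t ∈ pairSet B := mem_pairSet_of hs ht hst
  obtain ⟨h1, h2, h3, h4⟩ := pFst_pSnd_spec hu
  obtain ⟨e1, e2⟩ := pair_decomp_unique hB h1 h2 h3 hs ht hst h4.symm
  exact ⟨e1, e2⟩

end BqoProof
namespace BqoProof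

open Set

/-! ### Galvin's dichotomy (Nash–Williams partition theorem) -/

section Galvin

variable (F : Set (Finset ℕ))

/-- `M` accepts `s`: every infinite subset of `M` beyond `s` produces an `F`-set extending
`s` as an initial segment. -/
def GAcc (M : Set ℕ) (s : Finset ℕ) : Prop :=
  ∀ X : Set ℕ, X ⊆ M → X.Infinite → (∀ x ∈ X, ∀ y ∈ s, y < x) →
    ∃ b ∈ F, s ⊆ b ∧ NatInitSeg b (↑s ∪ X)

/-- `M` rejects `s`: no infinite subset of `M` accepts `s`. -/
def GRej (M : Set ℕ) (s : Finset ℕ) : Prop :=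
  ∀ M', M' ⊆ M → M'.Infinite → ¬ GAcc F M' s

variable {F}

lemma GAcc.mono {M M' : Set ℕ} {s : Finset ℕ} (h : GAcc F M s) (hsub : M' ⊆ M) :
    GAcc F M' s := fun X hX => h X (hX.trans hsub)

lemma GRej.mono {M M' : Set ℕ} {s : Finset ℕ} (h : GRej F M s) (hsub : M' ⊆ M) :
    GRej F M' s := fun M'' hM'' => h M'' (hM''.trans hsub)

lemma tallSet_infinite {M : Set ℕ} (hM : M.Infinite) (s : Finset ℕ) :
    ({x ∈ M | ∀ y ∈ s, y < x}).Infinite := by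
  have hsub : M \ Set.Iic (s.sup id) ⊆ {x ∈ M | ∀ y ∈ s, y < x} := by
    intro x hx
    refine ⟨hx.1, fun y hy => ?_⟩
    have h1 : y ≤ s.sup id := Finset.le_sup (f := id) hy
    have h2 : ¬ x ≤ s.sup id := hx.2
    omega
  exact (hM.diff (Set.finite_Iic _)).mono hsub

lemma exists_decide {M : Set ℕ} (hM : M.Infinite) (s : Finset ℕ) :
    ∃ M', M' ⊆ M ∧ M'.Infinite ∧ (GAcc F M' s ∨ GRej F M' s) := by
  by_cases h : GRej F M s
  · exact ⟨M, subset_rfl, hM, Or.inr h⟩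
  · simp only [GRej, not_forall, not_not] at h
    obtain ⟨M', h1, h2, h3⟩ := h
    exact ⟨M', h1, h2, Or.inl h3⟩

lemma decide_finset {M : Set ℕ} (hM : M.Infinite) (l : Finset (Finset ℕ)) :
    ∃ M', M' ⊆ M ∧ M'.Infinite ∧ ∀ s ∈ l, GAcc F M' s ∨ GRej F M' s := by
  classical
  induction l using Finset.induction_on generalizing M with
  | empty => exact ⟨M, subset_rfl, hM, by simp⟩
  | insert _ _ hnotin ih =>
    rename_i a l'
    obtain ⟨M1, h1, h2, h3⟩ := ih hM
    obtain ⟨M2, g1, g2, g3⟩ := exists_decide (F := F) h2 a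
    refine ⟨M2, g1.trans h1, g2, ?_⟩
    intro s hs
    rcases Finset.mem_insert.1 hs with rfl | hs'
    · exact g3
    · rcases h3 s hs' with h | h
      · exact Or.inl (h.mono g1)
      · exact Or.inr (h.mono g1)

lemma inter_Ioi_infinite {M : Set ℕ} (hM : M.Infinite) (n : ℕ) :
    (M ∩ Set.Ioi n).Infinite := by
  have : M \ Set.Iic n ⊆ M ∩ Set.Ioi n := by
    intro x hx
    exact ⟨hx.1, by simpa using hx.2⟩
  exact (hM.diff (Set.finite_Iic n)).mono this

variable (F)

lemma step_ex (M : Set ℕ) (hM : M.Infinite) (pts : Finset ℕ) :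
    ∃ M', M' ⊆ M ∩ Set.Ioi (sInf M) ∧ M'.Infinite ∧
      ∀ s ∈ (insert (sInf M) pts).powerset, GAcc F M' s ∨ GRej F M' s := by
  obtain ⟨M', h1, h2, h3⟩ := decide_finset (F := F) (inter_Ioi_infinite hM (sInf M))
    (insert (sInf M) pts).powerset
  exact ⟨M', h1, h2, h3⟩

/-- One step of the first fusion. -/
noncomputable def gstep (p : {p : Set ℕ × Finset ℕ // p.1.Infinite}) :
    {q : Set ℕ × Finset ℕ // q.1.Infinite} :=
  ⟨((step_ex F p.1.1 p.2 p.1.2).choose, insert (sInf p.1.1) p.1.2),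
    (step_ex F p.1.1 p.2 p.1.2).choose_spec.2.1⟩

noncomputable def gchain (N : Set ℕ) (hN : N.Infinite) : ℕ → {p : Set ℕ × Finset ℕ // p.1.Infinite}
  | 0 => ⟨(((decide_finset (F := F) hN {∅}).choose), ∅),
      (decide_finset (F := F) hN {∅}).choose_spec.2.1⟩
  | (k+1) => gstep F (gchain N hN k)

noncomputable def gM (F : Set (Finset ℕ)) (N : Set ℕ) (hN : N.Infinite) (k : ℕ) : Set ℕ :=
  (gchain F N hN k).1.1

noncomputable def gpts (F : Set (Finset ℕ)) (N : Set ℕ) (hN : N.Infinite) (k : ℕ) : Finset ℕ :=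
  (gchain F N hN k).1.2

noncomputable def gseq (F : Set (Finset ℕ)) (N : Set ℕ) (hN : N.Infinite) (k : ℕ) : ℕ :=
  sInf (gM F N hN k)

variable {N : Set ℕ}

lemma gM_infinite (F : Set (Finset ℕ)) (hN : N.Infinite) (k : ℕ) : (gM F N hN k).Infinite :=
  (gchain F N hN k).2

lemma gchain_zero_subset (F : Set (Finset ℕ)) (hN : N.Infinite) : gM F N hN 0 ⊆ N :=
  (decide_finset (F := F) hN {∅}).choose_spec.1

lemma gchain_zero_decide (F : Set (Finset ℕ)) (hN : N.Infinite) :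
    GAcc F (gM F N hN 0) ∅ ∨ GRej F (gM F N hN 0) ∅ := by
  have := (decide_finset (F := F) hN {∅}).choose_spec.2.2
  exact this ∅ (by simp)

lemma gchain_succ_subset (F : Set (Finset ℕ)) (hN : N.Infinite) (k : ℕ) :
    gM F N hN (k+1) ⊆ gM F N hN k ∩ Set.Ioi (sInf (gM F N hN k)) :=
  (step_ex F ((gchain F N hN k).1.1) (gchain F N hN k).2 ((gchain F N hN k).1.2)).choose_spec.1

lemma gchain_succ_pts (F : Set (Finset ℕ)) (hN : N.Infinite) (k : ℕ) :
    gpts F N hN (k+1) = insert (sInf (gM F N hN k)) (gpts F N hN k) := rfl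

lemma gchain_succ_decide (F : Set (Finset ℕ)) (hN : N.Infinite) (k : ℕ) :
    ∀ s ∈ (insert (sInf (gM F N hN k)) (gpts F N hN k)).powerset,
      GAcc F (gM F N hN (k+1)) s ∨ GRej F (gM F N hN (k+1)) s :=
  (step_ex F ((gchain F N hN k).1.1) (gchain F N hN k).2 ((gchain F N hN k).1.2)).choose_spec.2.2

lemma gseq_mem (F : Set (Finset ℕ)) (hN : N.Infinite) (k : ℕ) : gseq F N hN k ∈ gM F N hN k :=
  Nat.sInf_mem (gM_infinite F hN k).nonempty

lemma gchain_mono (F : Set (Finset ℕ)) (hN : N.Infinite) {k l : ℕ} (h : k ≤ l) :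
    gM F N hN l ⊆ gM F N hN k := by
  induction l with
  | zero => simp [Nat.le_zero.1 h]
  | succ n ih =>
    rcases Nat.lt_or_ge k (n+1) with h' | h'
    · exact ((gchain_succ_subset F hN n).trans Set.inter_subset_left).trans (ih (by omega))
    · have : k = n+1 := by omega
      simp [this]

lemma gseq_strictMono (F : Set (Finset ℕ)) (hN : N.Infinite) : StrictMono (gseq F N hN) := by
  apply strictMono_nat_of_lt_succ
  intro n
  have h1 : gseq F N hN (n+1) ∈ gM F N hN (n+1) := gseq_mem F hN (n+1)
  have h2 := (gchain_succ_subset F hN n) h1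
  exact h2.2

lemma gseq_mem_of_le (F : Set (Finset ℕ)) (hN : N.Infinite) {k l : ℕ} (h : k ≤ l) :
    gseq F N hN l ∈ gM F N hN k :=
  gchain_mono F hN h (gseq_mem F hN l)

lemma gpts_eq (F : Set (Finset ℕ)) (hN : N.Infinite) (k : ℕ) :
    gpts F N hN k = Finset.image (gseq F N hN) (Finset.range k) := by
  induction k with
  | zero => rfl
  | succ n ih =>
    rw [gchain_succ_pts, ih, Finset.range_add_one, Finset.image_insert]
    rfl

/-- The first fusion: an infinite subset all of whose finite subsets are decided. -/
lemma fusion1 (F : Set (Finset ℕ)) (hN : N.Infinite) : ∃ M, M ⊆ N ∧ M.Infinite ∧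
    ∀ s : Finset ℕ, ↑s ⊆ M → (GAcc F M s ∨ GRej F M s) := by
  classical
  set M := Set.range (gseq F N hN) with hM
  have hMN : M ⊆ N := by
    rintro x ⟨k, rfl⟩
    exact gchain_zero_subset F hN (gseq_mem_of_le F hN (Nat.zero_le k))
  have hMi : M.Infinite :=
    Set.infinite_of_injective_forall_mem (gseq_strictMono F hN).injective
      (fun k => Set.mem_range_self k)
  refine ⟨M, hMN, hMi, ?_⟩
  intro s hs
  rcases s.eq_empty_or_nonempty with rfl | hne
  · rcases gchain_zero_decide F hN with h | h
    · exact Or.inl (h.mono (by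
        rintro x ⟨k, rfl⟩
        exact gseq_mem_of_le F hN (Nat.zero_le k)))
    · exact Or.inr (h.mono (by
        rintro x ⟨k, rfl⟩
        exact gseq_mem_of_le F hN (Nat.zero_le k)))
  · -- the maximum of s is some gseq j
    obtain ⟨j, hj⟩ : ∃ j, gseq F N hN j = s.max' hne := hs (s.max'_mem hne)
    have hssub : s ⊆ gpts F N hN (j+1) := by
      rw [gpts_eq F hN (j+1)]
      intro x hx
      obtain ⟨i, hi⟩ : ∃ i, gseq F N hN i = x := hs hx
      have hle : x ≤ s.max' hne := s.le_max' x hx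
      have : i ≤ j := by
        by_contra hc
        have := gseq_strictMono F hN (show j < i by omega)
        omega
      exact Finset.mem_image.2 ⟨i, Finset.mem_range.2 (by omega), hi⟩
    have hdec := gchain_succ_decide F hN j s (by
      rw [Finset.mem_powerset]
      rw [gchain_succ_pts F hN j] at hssub
      exact hssub)
    have hpoint : ∀ x ∈ M, (∀ y ∈ s, y < x) → x ∈ gM F N hN (j+1) := by
      rintro x ⟨l, rfl⟩ hlt
      have h1 : gseq F N hN j < gseq F N hN l := by
        apply hlt
        rw [hj]; exact s.max'_mem hne
      have h2 : j < l := by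
        by_contra hc
        have : gseq F N hN l ≤ gseq F N hN j := (gseq_strictMono F hN).le_iff_le.2 (by omega)
        omega
      exact gseq_mem_of_le F hN h2
    rcases hdec with h | h
    · left
      intro X hX hXi htall
      have : X ⊆ gM F N hN (j+1) := fun x hx => hpoint x (hX hx) (htall x hx)
      exact h X this hXi htall
    · right
      intro M'' hM'' hM''i hacc
      have h3 : ({x ∈ M'' | ∀ y ∈ s, y < x}).Infinite := tallSet_infinite hM''i s
      have h4 : {x ∈ M'' | ∀ y ∈ s, y < x} ⊆ gM F N hN (j+1) := by
        intro x hx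
        exact hpoint x (hM'' hx.1) hx.2
      exact h _ h4 h3 (hacc.mono (Set.sep_subset _ _))

end Galvin

end BqoProof
namespace BqoProof

open Set

section Galvin2

/-- Every `F`-set accepts itself. -/
lemma gacc_self {F : Set (Finset ℕ)} {b : Finset ℕ} (hb : b ∈ F) (M : Set ℕ) : GAcc F M b := by
  intro X hX hXi htall
  exact ⟨b, hb, subset_rfl, natInitSeg_union_tail htall⟩

/-- Fact D: if a deciding set rejects `s`, only finitely many one-point extensions of `s`
are accepted. -/
lemma rej_step {F : Set (Finset ℕ)} {M : Set ℕ} (hM : M.Infinite)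
    {s : Finset ℕ} (hrej : GRej F M s) :
    ({x | x ∈ M ∧ (∀ y ∈ s, y < x) ∧ GAcc F M (insert x s)}).Finite := by
  by_contra hinf
  replace hinf := Set.not_infinite.1.mt hinf
  simp only [not_not] at hinf
  set Nn := {x | x ∈ M ∧ (∀ y ∈ s, y < x) ∧ GAcc F M (insert x s)} with hNn
  have hsub : Nn ⊆ M := fun x hx => hx.1
  apply hrej Nn hsub hinf
  -- Nn accepts s
  intro X hX hXi htall
  have hx₁ : sInf X ∈ X := Nat.sInf_mem hXi.nonempty
  have hx₁N : sInf X ∈ Nn := hX hx₁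
  obtain ⟨hx₁M, hx₁tall, hx₁acc⟩ := hx₁N
  set x₁ := sInf X
  have hX' : (X \ {x₁}).Infinite := hXi.diff (Set.finite_singleton _)
  have hXsub : X \ {x₁} ⊆ M := (Set.diff_subset).trans (hX.trans hsub)
  have htall' : ∀ x ∈ X \ {x₁}, ∀ y ∈ insert x₁ s, y < x := by
    intro x hx y hy
    rcases Finset.mem_insert.1 hy with rfl | hy'
    · exact lt_of_le_of_ne (Nat.sInf_le hx.1) (Ne.symm hx.2)
    · exact htall x hx.1 y hy'
  obtain ⟨b, hbF, hbsub, hbseg⟩ := hx₁acc (X \ {x₁}) hXsub hX' htall'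
  refine ⟨b, hbF, (Finset.subset_insert _ _).trans hbsub, ?_⟩
  have hset : (↑(insert x₁ s) : Set ℕ) ∪ (X \ {x₁}) = ↑s ∪ X := by
    ext z
    simp only [Finset.coe_insert, Set.mem_union, Set.mem_insert_iff, Set.mem_diff,
      Set.mem_singleton_iff, Finset.mem_coe]
    constructor
    · rintro (⟨rfl | hz⟩ | ⟨hz, _⟩)
      · exact Or.inr hx₁
      · exact Or.inl ‹z ∈ s›
      · exact Or.inr hz
    · rintro (hz | hz)
      · exact Or.inl (Or.inr hz)
      · by_cases hzx : z = x₁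
        · exact Or.inl (Or.inl hzx)
        · exact Or.inr ⟨hz, hzx⟩
  rw [hset] at hbseg
  exact hbseg

/-- The set of points to be removed at a fusion-2 stage. -/
def badU (F : Set (Finset ℕ)) (M : Set ℕ) (pts : Finset ℕ) : Set ℕ :=
  {x | ∃ s : Finset ℕ, s ⊆ pts ∧ GRej F M s ∧ x ∈ M ∧ (∀ y ∈ s, y < x) ∧ GAcc F M (insert x s)}

lemma badU_finite (F : Set (Finset ℕ)) {M : Set ℕ} (hM : M.Infinite) (pts : Finset ℕ) :
    (badU F M pts).Finite := by
  classical
  have hsub : badU F M pts ⊆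
      ⋃ s ∈ pts.powerset,
        {x | GRej F M s ∧ x ∈ M ∧ (∀ y ∈ s, y < x) ∧ GAcc F M (insert x s)} := by
    rintro x ⟨s, hs1, hs2, hs3, hs4, hs5⟩
    exact Set.mem_biUnion (Finset.mem_powerset.2 hs1) ⟨hs2, hs3, hs4, hs5⟩
  refine Set.Finite.subset ?_ hsub
  refine Set.Finite.biUnion (pts.powerset : Finset (Finset ℕ)).finite_toSet ?_
  intro s _
  by_cases hrej : GRej F M s
  · have := rej_step hM hrej
    refine this.subset ?_
    rintro x ⟨_, h2, h3, h4⟩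
    exact ⟨h2, h3, h4⟩
  · have : {x | GRej F M s ∧ x ∈ M ∧ (∀ y ∈ s, y < x) ∧ GAcc F M (insert x s)} = ∅ := by
      ext x
      simp only [Set.mem_setOf_eq, Set.mem_empty_iff_false, iff_false]
      rintro ⟨h, _⟩
      exact hrej h
    rw [this]
    exact Set.finite_empty

/-- One step of the second fusion. -/
noncomputable def kstep (F : Set (Finset ℕ)) (M : Set ℕ)
    (p : {p : Set ℕ × Finset ℕ // p.1.Infinite}) : {q : Set ℕ × Finset ℕ // q.1.Infinite} := by
  classical
  refine ⟨((p.1.1 ∩ Set.Ioi (sInf p.1.1)) \ badU F M (insert (sInf p.1.1) p.1.2),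
    insert (sInf p.1.1) p.1.2), ?_⟩
  by_cases hM : M.Infinite
  · exact (inter_Ioi_infinite p.2 _).diff (badU_finite F hM _)
  · -- if M is finite then badU is finite anyway (subset of M)
    have : (badU F M (insert (sInf p.1.1) p.1.2)).Finite := by
      rw [Set.not_infinite] at hM
      refine hM.subset ?_
      rintro x ⟨s, _, _, h3, _⟩
      exact h3
    exact (inter_Ioi_infinite p.2 _).diff this

noncomputable def kchain (F : Set (Finset ℕ)) (M : Set ℕ) (hM : M.Infinite) :
    ℕ → {p : Set ℕ × Finset ℕ // p.1.Infinite}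
  | 0 => ⟨(M \ badU F M ∅, ∅), hM.diff (badU_finite F hM ∅)⟩
  | (k+1) => kstep F M (kchain F M hM k)

noncomputable def kM (F : Set (Finset ℕ)) (M : Set ℕ) (hM : M.Infinite) (k : ℕ) : Set ℕ :=
  (kchain F M hM k).1.1

noncomputable def kseq (F : Set (Finset ℕ)) (M : Set ℕ) (hM : M.Infinite) (k : ℕ) : ℕ :=
  sInf (kM F M hM k)

lemma kM_infinite (F : Set (Finset ℕ)) {M : Set ℕ} (hM : M.Infinite) (k : ℕ) :
    (kM F M hM k).Infinite := (kchain F M hM k).2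

lemma kpts_eq (F : Set (Finset ℕ)) {M : Set ℕ} (hM : M.Infinite) (k : ℕ) :
    (kchain F M hM k).1.2 = Finset.image (kseq F M hM) (Finset.range k) := by
  induction k with
  | zero => rfl
  | succ n ih =>
    show insert (sInf (kM F M hM n)) (kchain F M hM n).1.2 = _
    rw [ih, Finset.range_add_one, Finset.image_insert]
    rfl

lemma kM_succ (F : Set (Finset ℕ)) {M : Set ℕ} (hM : M.Infinite) (k : ℕ) :
    kM F M hM (k+1) =
      (kM F M hM k ∩ Set.Ioi (kseq F M hM k)) \
        badU F M (insert (kseq F M hM k) (kchain F M hM k).1.2) := rfl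

lemma kseq_mem (F : Set (Finset ℕ)) {M : Set ℕ} (hM : M.Infinite) (k : ℕ) :
    kseq F M hM k ∈ kM F M hM k := Nat.sInf_mem (kM_infinite F hM k).nonempty

lemma kM_zero_subset (F : Set (Finset ℕ)) {M : Set ℕ} (hM : M.Infinite) :
    kM F M hM 0 ⊆ M := Set.diff_subset

lemma kM_mono (F : Set (Finset ℕ)) {M : Set ℕ} (hM : M.Infinite) {k l : ℕ} (h : k ≤ l) :
    kM F M hM l ⊆ kM F M hM k := by
  induction l with
  | zero => simp [Nat.le_zero.1 h]
  | succ n ih =>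
    rcases Nat.lt_or_ge k (n+1) with h' | h'
    · rw [kM_succ]
      exact (Set.diff_subset.trans Set.inter_subset_left).trans (ih (by omega))
    · have : k = n+1 := by omega
      simp [this]

lemma kseq_strictMono (F : Set (Finset ℕ)) {M : Set ℕ} (hM : M.Infinite) :
    StrictMono (kseq F M hM) := by
  apply strictMono_nat_of_lt_succ
  intro n
  have h1 := kseq_mem F hM (n+1)
  rw [kM_succ] at h1
  exact h1.1.2

lemma kseq_mem_M (F : Set (Finset ℕ)) {M : Set ℕ} (hM : M.Infinite) (k : ℕ) :
    kseq F M hM k ∈ M :=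
  kM_zero_subset F hM (kM_mono F hM (Nat.zero_le k) (kseq_mem F hM k))

/-- The second fusion: rejection is hereditary on `K`. -/
lemma fusion2 {F : Set (Finset ℕ)} {M : Set ℕ} (hM : M.Infinite)
    (hdec : ∀ s : Finset ℕ, ↑s ⊆ M → (GAcc F M s ∨ GRej F M s)) :
    ∃ K, K ⊆ M ∧ K.Infinite ∧
      ∀ s : Finset ℕ, ↑s ⊆ K → GRej F M s → ∀ x ∈ K, (∀ y ∈ s, y < x) →
        GRej F M (insert x s) := by
  classical
  set K := Set.range (kseq F M hM) with hK
  have hKM : K ⊆ M := by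
    rintro x ⟨k, rfl⟩
    exact kseq_mem_M F hM k
  have hKi : K.Infinite :=
    Set.infinite_of_injective_forall_mem (kseq_strictMono F hM).injective
      (fun k => Set.mem_range_self k)
  refine ⟨K, hKM, hKi, ?_⟩
  intro s hs hrej x hxK htall
  obtain ⟨l, rfl⟩ := hxK
  -- s ⊆ points with smaller index
  have hspts : s ⊆ (kchain F M hM l).1.2 := by
    rw [kpts_eq F hM l]
    intro y hy
    obtain ⟨i, hi⟩ : ∃ i, kseq F M hM i = y := hs hy
    have hlt : y < kseq F M hM l := htall y hy
    have : i < l := by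
      by_contra hc
      have : kseq F M hM l ≤ kseq F M hM i := (kseq_strictMono F hM).le_iff_le.2 (by omega)
      omega
    exact Finset.mem_image.2 ⟨i, Finset.mem_range.2 this, hi⟩
  have hnotacc : ¬ GAcc F M (insert (kseq F M hM l) s) := by
    intro hacc
    -- then kseq l lies in the bad set removed at stage l
    rcases Nat.eq_zero_or_pos l with rfl | hl
    · -- stage 0: kseq 0 ∈ M \ badU F M ∅, but s ⊆ ∅
      have h0 : kseq F M hM 0 ∈ kM F M hM 0 := kseq_mem F hM 0
      have hse : s = ∅ := Finset.subset_empty.1 hspts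
      apply h0.2
      exact ⟨s, by simp [hse], hrej, h0.1, htall, hacc⟩
    · obtain ⟨j, rfl⟩ : ∃ j, l = j + 1 := ⟨l - 1, by omega⟩
      have h0 : kseq F M hM (j+1) ∈ kM F M hM (j+1) := kseq_mem F hM (j+1)
      rw [kM_succ] at h0
      apply h0.2
      refine ⟨s, ?_, hrej, ?_, htall, hacc⟩
      · -- s ⊆ insert (kseq j) (pts j)
        have : (kchain F M hM (j+1)).1.2 = insert (kseq F M hM j) (kchain F M hM j).1.2 := rfl
        rw [this] at hspts
        exact hspts
      · exact kseq_mem_M F hM (j+1)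
  have hsubM : ↑(insert (kseq F M hM l) s) ⊆ M := by
    intro y hy
    rcases Finset.mem_insert.1 (by exact_mod_cast hy) with rfl | hy'
    · exact kseq_mem_M F hM l
    · exact hKM (hs hy')
  rcases hdec _ hsubM with h | h
  · exact absurd h hnotacc
  · exact h

/-- Galvin's dichotomy. -/
theorem galvin_dichotomy (F : Set (Finset ℕ)) {N : Set ℕ} (hN : N.Infinite) :
    ∃ M, M ⊆ N ∧ M.Infinite ∧
      ((∀ X : Set ℕ, X ⊆ M → X.Infinite → ∃ b ∈ F, NatInitSeg b X) ∨
        (∀ b ∈ F, ¬ (↑b : Set ℕ) ⊆ M)) := by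
  classical
  obtain ⟨M, hMN, hMi, hdec⟩ := fusion1 F hN
  rcases hdec ∅ (by simp) with hacc | hrej
  · refine ⟨M, hMN, hMi, Or.inl ?_⟩
    intro X hX hXi
    obtain ⟨b, hbF, _, hseg⟩ := hacc X hX hXi (by simp)
    refine ⟨b, hbF, ?_⟩
    simpa using hseg
  · obtain ⟨K, hKM, hKi, hstep⟩ := fusion2 hMi hdec
    refine ⟨K, hKM.trans hMN, hKi, Or.inr ?_⟩
    intro b hbF hbK
    -- every finite subset of K is rejected by M
    have hrejall : ∀ n : ℕ, ∀ s : Finset ℕ, s.card = n → ↑s ⊆ K → GRej F M s := by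
      intro n
      induction n with
      | zero =>
        intro s hcard _
        rw [Finset.card_eq_zero.1 hcard]
        exact hrej
      | succ m ih =>
        intro s hcard hsK
        have hne : s.Nonempty := Finset.card_pos.1 (by omega)
        set x := s.max' hne with hx
        have hxs : x ∈ s := s.max'_mem hne
        have h1 : (s.erase x).card = m := by
          rw [Finset.card_erase_of_mem hxs]; omega
        have h2 : ↑(s.erase x) ⊆ K := by
          intro y hy
          exact hsK (Finset.coe_subset.2 (Finset.erase_subset x s) hy)
        have h3 : GRej F M (s.erase x) := ih _ h1 h2
        have h4 : x ∈ K := hsK hxs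
        have h5 : ∀ y ∈ s.erase x, y < x := by
          intro y hy
          have := Finset.mem_erase.1 hy
          exact lt_of_le_of_ne (s.le_max' y this.2) this.1
        have := hstep (s.erase x) h2 h3 x h4 h5
        rwa [Finset.insert_erase hxs] at this
    have hbrej : GRej F M b := hrejall b.card b rfl hbK
    exact hbrej K hKM hKi (gacc_self hbF K)

/-- The Nash–Williams partition theorem for barriers. -/
theorem barrier_partition {B : Set (Finset ℕ)} (hB : IsBarrier B) (Q : Finset ℕ → Prop) :
    ∃ M, M ⊆ base B ∧ M.Infinite ∧
      ((∀ b ∈ B, (↑b : Set ℕ) ⊆ M → Q b) ∨ (∀ b ∈ B, (↑b : Set ℕ) ⊆ M → ¬ Q b)) := by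
  classical
  set F : Set (Finset ℕ) := {b | b ∈ B ∧ Q b} with hF
  obtain ⟨M, hMN, hMi, hdi⟩ := galvin_dichotomy F (base_infinite hB)
  refine ⟨M, hMN, hMi, ?_⟩
  rcases hdi with hacc | hrej
  · left
    intro b hbB hbM
    -- extend b to an infinite subset of M
    set X := (↑b : Set ℕ) ∪ {x ∈ M | ∀ y ∈ b, y < x} with hX
    have hXM : X ⊆ M := by
      intro x hx
      rcases hx with hx | hx
      · exact hbM hx
      · exact hx.1
    have hXi : X.Infinite := (tallSet_infinite hMi b).mono Set.subset_union_right
    obtain ⟨b', hb'F, hb'seg⟩ := hacc X hXM hXi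
    have hbseg : NatInitSeg b X := by
      refine ⟨Set.subset_union_left, ?_⟩
      intro x hx hxb y hy
      rcases hx with hx | hx
      · exact absurd hx hxb
      · exact hx.2 y hy
    have : b = b' := barrier_initSeg_unique hB hbB hb'F.1 hbseg hb'seg
    exact this ▸ hb'F.2
  · right
    intro b hbB hbM hQ
    exact hrej b ⟨hbB, hQ⟩ hbM

end Galvin2

end BqoProof
namespace BqoProof

open Set

/-- Perfect subarray lemma: a bqo-valued map on a barrier is monotone along shift-extensions
after restriction to a suitable infinite set. -/
lemma perfect {α : Type*} {le : α → α → Prop} (hle : IsBqoRel le)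
    {C : Set (Finset ℕ)} (hC : IsBarrier C) (h : Finset ℕ → α) :
    ∃ M, M ⊆ base C ∧ M.Infinite ∧
      ∀ u ∈ C, ∀ v ∈ C, (↑u : Set ℕ) ⊆ M → (↑v : Set ℕ) ⊆ M → ShiftExt u v →
        le (h u) (h v) := by
  classical
  have hCp : IsBarrier (pairSet C) := isBarrier_pairSet hC
  obtain ⟨M, hM, hMi, hmono⟩ := barrier_partition hCp
    (fun w => le (h (pFst C w)) (h (pSnd C w)))
  have hMC : M ⊆ base C := hM.trans (base_pairSet_subset C)
  rcases hmono with hpos | hneg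
  · refine ⟨M, hMC, hMi, ?_⟩
    intro u hu v hv huM hvM huv
    have hw : u ∪ v ∈ pairSet C := mem_pairSet_of hu hv huv
    have hwM : (↑(u ∪ v) : Set ℕ) ⊆ M := by
      rw [Finset.coe_union]
      exact Set.union_subset huM hvM
    have := hpos (u ∪ v) hw hwM
    obtain ⟨e1, e2⟩ := pFst_eq hC hu hv huv
    rwa [e1, e2] at this
  · exfalso
    have hCM : IsBarrier (restrict C M) := isBarrier_restrict hC hMC hMi
    obtain ⟨s, hs, t, ht, hst, hle'⟩ := hle (restrict C M) hCM h
    have hw : s ∪ t ∈ pairSet C := mem_pairSet_of hs.1 ht.1 hst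
    have hwM : (↑(s ∪ t) : Set ℕ) ⊆ M := by
      rw [Finset.coe_union]
      exact Set.union_subset hs.2 ht.2
    have := hneg (s ∪ t) hw hwM
    obtain ⟨e1, e2⟩ := pFst_eq hC hs.1 ht.1 hst
    rw [e1, e2] at this
    exact this hle'

/-- Tail-constancy: a barrier map constant along shift-extensions is constant. -/
lemma const_of_shiftExt_const {α : Type*} {C : Set (Finset ℕ)} (hC : IsBarrier C)
    (g : Finset ℕ → α) {M : Set ℕ} (hM : M ⊆ base C) (hMi : M.Infinite)
    (hcon : ∀ u ∈ C, ∀ v ∈ C, (↑u : Set ℕ) ⊆ M → (↑v : Set ℕ) ⊆ M → ShiftExt u v → g u = g v) :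
    ∀ u ∈ C, ∀ v ∈ C, (↑u : Set ℕ) ⊆ M → (↑v : Set ℕ) ⊆ M → g u = g v := by
  classical
  have hstep : ∀ X : Set ℕ, X ⊆ M → X.Infinite → g (sig C X) = g (sig C (stl X)) := by
    intro X hX hXi
    have hXb : X ⊆ base C := hX.trans hM
    obtain ⟨h1, h2⟩ := sig_spec hC hXb hXi
    obtain ⟨h3, h4⟩ := sig_spec hC ((stl_subset X).trans hXb) (stl_infinite hXi)
    exact hcon _ h1 _ h3 (h2.1.trans hX) (h4.1.trans ((stl_subset X).trans hX))
      (shiftExt_sig_stl hC hXb hXi)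
  have hval : ∀ n : ℕ, ∀ s : Finset ℕ, s.card = n → (↑s : Set ℕ) ⊆ M →
      ∀ T : Set ℕ, T ⊆ M → T.Infinite → (∀ x ∈ T, ∀ y ∈ s, y < x) →
        g (sig C (↑s ∪ T)) = g (sig C T) := by
    intro n
    induction n with
    | zero =>
      intro s hcard _ T _ _ _
      rw [Finset.card_eq_zero.1 hcard]
      simp
    | succ m ih =>
      intro s hcard hsM T hT hTi htall
      have hne : s.Nonempty := Finset.card_pos.1 (by omega)
      set mn := s.min' hne with hmn
      have hmns : mn ∈ s := s.min'_mem hne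
      have hsT : (↑s : Set ℕ) ∪ T ⊆ M := Set.union_subset hsM hT
      have hsTi : ((↑s : Set ℕ) ∪ T).Infinite := hTi.mono Set.subset_union_right
      have hinf : sInf ((↑s : Set ℕ) ∪ T) = mn := by
        apply le_antisymm
        · exact Nat.sInf_le (Or.inl hmns)
        · apply le_csInf (hsTi.nonempty)
          intro z hz
          rcases hz with hz | hz
          · exact s.min'_le z hz
          · exact le_of_lt (htall z hz mn hmns)
      have hstl : stl ((↑s : Set ℕ) ∪ T) = (↑(s.erase mn) : Set ℕ) ∪ T := by
        rw [stl, hinf]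
        ext x
        simp only [Set.mem_diff, Set.mem_union, Finset.mem_coe, Set.mem_singleton_iff,
          Finset.coe_erase, Set.mem_diff]
        constructor
        · rintro ⟨hx | hx, hxm⟩
          · exact Or.inl ⟨hx, hxm⟩
          · exact Or.inr hx
        · rintro (⟨hx, hxm⟩ | hx)
          · exact ⟨Or.inl hx, hxm⟩
          · refine ⟨Or.inr hx, ?_⟩
            intro hc
            exact absurd (htall x hx mn hmns) (by omega)
      have e1 : g (sig C ((↑s : Set ℕ) ∪ T)) = g (sig C (stl ((↑s : Set ℕ) ∪ T))) :=
        hstep _ hsT hsTi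
      rw [e1, hstl]
      apply ih
      · rw [Finset.card_erase_of_mem hmns]; omega
      · intro y hy
        exact hsM (Finset.coe_subset.2 (Finset.erase_subset mn s) hy)
      · exact hT
      · exact hTi
      · intro x hx y hy
        exact htall x hx y (Finset.erase_subset mn s hy)
  intro u hu v hv huM hvM
  set T := {x ∈ M | ∀ y ∈ u ∪ v, y < x} with hT
  have hTM : T ⊆ M := Set.sep_subset _ _
  have hTi : T.Infinite := tallSet_infinite hMi (u ∪ v)
  have htallu : ∀ x ∈ T, ∀ y ∈ u, y < x := fun x hx y hy =>
    hx.2 y (Finset.mem_union_left v hy)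
  have htallv : ∀ x ∈ T, ∀ y ∈ v, y < x := fun x hx y hy =>
    hx.2 y (Finset.mem_union_right u hy)
  have hgu : sig C ((↑u : Set ℕ) ∪ T) = u := by
    apply sig_eq_of_initSeg hC ((Set.union_subset huM hTM).trans hM)
      (hTi.mono Set.subset_union_right) hu
    exact natInitSeg_union_tail htallu
  have hgv : sig C ((↑v : Set ℕ) ∪ T) = v := by
    apply sig_eq_of_initSeg hC ((Set.union_subset hvM hTM).trans hM)
      (hTi.mono Set.subset_union_right) hv
    exact natInitSeg_union_tail htallv
  calc g u = g (sig C ((↑u : Set ℕ) ∪ T)) := by rw [hgu]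
    _ = g (sig C T) := hval u.card u rfl huM T hTM hTi htallu
    _ = g (sig C ((↑v : Set ℕ) ∪ T)) := (hval v.card v rfl hvM T hTM hTi htallv).symm
    _ = g v := by rw [hgv]

end BqoProof
/-- If `I` is bqo and every `P i` is bqo, then the Dress–Schiffels product is bqo. -/
theorem stmt_11 {I : Type u} [PartialOrder I] {P : I → Type v} [∀ i, PartialOrder (P i)]
    [∀ i, OrderBot (P i)]
    (hI : IsBqoRel ((· ≤ ·) : I → I → Prop))
    (hP : ∀ i, IsBqoRel ((· ≤ ·) : P i → P i → Prop)) :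
    IsBqoRel (fun f g : DSProd I P => DSle f.1 g.1) := by
  classical
  open BqoProof in
  intro B hB f
  by_contra hbad
  have hbad' : ∀ s ∈ B, ∀ t ∈ B, ShiftExt s t → ¬ DSle (f s).1 (f t).1 := by
    intro s hs t ht hst hle
    exact hbad ⟨s, hs, t, ht, hst, hle⟩
  have hbi : (base B).Infinite := base_infinite hB
  by_cases hneI : Nonempty I
  swap
  · -- I is empty: every pair is related by DSle
    apply hbad
    obtain ⟨h1, h2⟩ := sig_spec hB subset_rfl hbi
    obtain ⟨h3, h4⟩ := sig_spec hB (stl_subset _) (stl_infinite hbi)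
    exact ⟨_, h1, _, h3, shiftExt_sig_stl hB subset_rfl hbi,
      fun i _ => absurd ⟨i⟩ hneI⟩
  haveI : Nonempty I := hneI
  set C2 := pairSet B with hC2def
  have hC2 : IsBarrier C2 := isBarrier_pairSet hB
  -- choose the failing maximal coordinate of each consecutive pair
  have hwit : ∀ u, u ∈ C2 → ∃ i : I,
      Maximal (fun j => (f (pFst B u)).1 j ≠ (f (pSnd B u)).1 j) i ∧
      ¬ ((f (pFst B u)).1 i ≤ (f (pSnd B u)).1 i) := by
    intro u hu
    obtain ⟨h1, h2, h3, _⟩ := pFst_pSnd_spec hu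
    have hnle := hbad' _ h1 _ h2 h3
    rw [DSle] at hnle
    push_neg at hnle
    obtain ⟨i, hmax, hlt⟩ := hnle
    exact ⟨i, hmax, fun hle => hlt (lt_of_le_of_ne hle hmax.prop)⟩
  choose! χ hχmax hχnle using hwit
  -- make χ monotone along shift-extensions
  obtain ⟨M₁, hM₁b, hM₁i, hmono⟩ := perfect hI hC2 χ
  have hC' : IsBarrier (restrict C2 M₁) := isBarrier_restrict hC2 hM₁b hM₁i
  have hD : IsBarrier (pairSet (restrict C2 M₁)) := isBarrier_pairSet hC'
  obtain ⟨M₂, hM₂b, hM₂i, hdi⟩ := barrier_partition hD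
    (fun w => χ (pFst (restrict C2 M₁) w) = χ (pSnd (restrict C2 M₁) w))
  have hM₂C' : M₂ ⊆ base (restrict C2 M₁) := hM₂b.trans (base_pairSet_subset _)
  have hM₂M₁ : M₂ ⊆ M₁ := hM₂C'.trans (base_restrict_subset _ _)
  have hM₂C2 : M₂ ⊆ base C2 := hM₂C'.trans (base_mono (restrict_subset C2 M₁))
  have hM₂B : M₂ ⊆ base B := hM₂C2.trans (base_pairSet_subset B)
  -- membership translation
  have hmemC' : ∀ u, u ∈ C2 → (↑u : Set ℕ) ⊆ M₂ → u ∈ restrict C2 M₁ :=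
    fun u hu huM => ⟨hu, huM.trans hM₂M₁⟩
  rcases hdi with heq | hneq
  · -- χ is constant on M₂, contradiction with hP
    have hcon : ∀ u ∈ restrict C2 M₁, ∀ v ∈ restrict C2 M₁,
        (↑u : Set ℕ) ⊆ M₂ → (↑v : Set ℕ) ⊆ M₂ → ShiftExt u v → χ u = χ v := by
      intro u hu v hv huM hvM huv
      have hw : u ∪ v ∈ pairSet (restrict C2 M₁) := mem_pairSet_of hu hv huv
      have hwM : (↑(u ∪ v) : Set ℕ) ⊆ M₂ := by
        rw [Finset.coe_union]; exact Set.union_subset huM hvM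
      have := heq (u ∪ v) hw hwM
      obtain ⟨e1, e2⟩ := pFst_eq hC' hu hv huv
      rwa [e1, e2] at this
    have hconst := const_of_shiftExt_const hC' χ hM₂C' hM₂i hcon
    obtain ⟨hu₀, hu₀seg⟩ := sig_spec hC' hM₂C' hM₂i
    set u₀ := sig (restrict C2 M₁) M₂ with hu₀def
    set i₀ := χ u₀ with hi₀
    have hBM₂ : IsBarrier (restrict B M₂) := isBarrier_restrict hB hM₂B hM₂i
    obtain ⟨s, hs, t, ht, hst, hle⟩ := hP i₀ (restrict B M₂) hBM₂ (fun b => (f b).1 i₀)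
    have huC2 : s ∪ t ∈ C2 := mem_pairSet_of hs.1 ht.1 hst
    have huM₂ : (↑(s ∪ t) : Set ℕ) ⊆ M₂ := by
      rw [Finset.coe_union]; exact Set.union_subset hs.2 ht.2
    have huC' : s ∪ t ∈ restrict C2 M₁ := hmemC' _ huC2 huM₂
    have hχeq : χ (s ∪ t) = i₀ := hconst _ huC' _ hu₀ huM₂ hu₀seg.1
    have hnle := hχnle (s ∪ t) huC2
    obtain ⟨e1, e2⟩ := pFst_eq hB hs.1 ht.1 hst
    rw [e1, e2, hχeq] at hnle
    exact hnle hle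
  · -- χ strictly increases along consecutive pairs: infinite support, contradiction
    have hstrict : ∀ u ∈ C2, ∀ v ∈ C2, (↑u : Set ℕ) ⊆ M₂ → (↑v : Set ℕ) ⊆ M₂ →
        ShiftExt u v → χ u < χ v := by
      intro u hu v hv huM hvM huv
      have hle := hmono u hu v hv (huM.trans hM₂M₁) (hvM.trans hM₂M₁) huv
      have hu' := hmemC' u hu huM
      have hv' := hmemC' v hv hvM
      have hw : u ∪ v ∈ pairSet (restrict C2 M₁) := mem_pairSet_of hu' hv' huv
      have hwM : (↑(u ∪ v) : Set ℕ) ⊆ M₂ := by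
        rw [Finset.coe_union]; exact Set.union_subset huM hvM
      have hne := hneq (u ∪ v) hw hwM
      obtain ⟨e1, e2⟩ := pFst_eq hC' hu' hv' huv
      rw [e1, e2] at hne
      exact lt_of_le_of_ne hle hne
    -- the canonical chain of M₂
    have htsub : ∀ m : ℕ, tln m M₂ ⊆ M₂ := fun m => tln_subset m M₂
    have htinf : ∀ m : ℕ, (tln m M₂).Infinite := fun m => tln_infinite m hM₂i
    have htB : ∀ m : ℕ, tln m M₂ ⊆ base B := fun m => (htsub m).trans hM₂B
    have htC2 : ∀ m : ℕ, tln m M₂ ⊆ base C2 := fun m => (htsub m).trans hM₂C2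
    set sF : ℕ → Finset ℕ := fun m => sig B (tln m M₂) with hsF
    set uF : ℕ → Finset ℕ := fun m => sig C2 (tln m M₂) with huF
    have hsspec : ∀ m, sF m ∈ B ∧ NatInitSeg (sF m) (tln m M₂) :=
      fun m => sig_spec hB (htB m) (htinf m)
    have huspec : ∀ m, uF m ∈ C2 ∧ NatInitSeg (uF m) (tln m M₂) :=
      fun m => sig_spec hC2 (htC2 m) (htinf m)
    have hudec : ∀ m, uF m = sF m ∪ sF (m+1) := by
      intro m
      show sig C2 (tln m M₂) = sig B (tln m M₂) ∪ sig B (tln (m+1) M₂)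
      rw [tln_succ]
      exact sig_pairSet hB (htC2 m) (htinf m)
    have hsse : ∀ m, ShiftExt (sF m) (sF (m+1)) := by
      intro m
      have := shiftExt_sig_stl hB (htB m) (htinf m)
      rwa [← tln_succ] at this
    have huse : ∀ m, ShiftExt (uF m) (uF (m+1)) := by
      intro m
      have := shiftExt_sig_stl hC2 (htC2 m) (htinf m)
      rwa [← tln_succ] at this
    have huM₂ : ∀ m, (↑(uF m) : Set ℕ) ⊆ M₂ :=
      fun m => (huspec m).2.1.trans (htsub m)
    set iF : ℕ → I := fun m => χ (uF m) with hiF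
    have histep : ∀ m, iF m < iF (m+1) := by
      intro m
      exact hstrict _ (huspec m).1 _ (huspec (m+1)).1 (huM₂ m) (huM₂ (m+1)) (huse m)
    have hichain : ∀ k m : ℕ, k < m → iF k < iF m := by
      intro k m
      induction m with
      | zero => omega
      | succ n ih =>
        intro h
        rcases Nat.lt_or_ge k n with h' | h'
        · exact lt_trans (ih h') (histep n)
        · have : k = n := by omega
          rw [this]; exact histep n
    -- the defining properties of iF m relative to the pair (sF m, sF (m+1))
    have hpq : ∀ m, pFst B (uF m) = sF m ∧ pSnd B (uF m) = sF (m+1) := by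
      intro m
      rw [hudec m]
      exact pFst_eq hB (hsspec m).1 (hsspec (m+1)).1 (hsse m)
    have hmaxm : ∀ m, Maximal (fun j => (f (sF m)).1 j ≠ (f (sF (m+1))).1 j) (iF m) := by
      intro m
      have := hχmax (uF m) (huspec m).1
      rwa [(hpq m).1, (hpq m).2] at this
    have hnlem : ∀ m, ¬ ((f (sF m)).1 (iF m) ≤ (f (sF (m+1))).1 (iF m)) := by
      intro m
      have := hχnle (uF m) (huspec m).1
      rwa [(hpq m).1, (hpq m).2] at this
    -- one-step propagation above the witness
    have honestep : ∀ k : ℕ, ∀ j : I, iF k < j → (f (sF k)).1 j = (f (sF (k+1))).1 j := by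
      intro k j hj
      by_contra hne
      have := (hmaxm k).2 hne (le_of_lt hj)
      exact absurd (lt_of_lt_of_le hj this) (lt_irrefl _)
    have hprop : ∀ d k : ℕ, (f (sF k)).1 (iF (k+d)) = (f (sF (k+d))).1 (iF (k+d)) := by
      intro d
      induction d with
      | zero => intro k; rfl
      | succ n ih =>
        intro k
        have h1 : iF k < iF (k+(n+1)) := hichain k (k+(n+1)) (by omega)
        have h2 : (f (sF k)).1 (iF (k+(n+1))) = (f (sF (k+1))).1 (iF (k+(n+1))) :=
          honestep k _ h1
        have h3 := ih (k+1)
        rw [h2]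
        have he : k + 1 + n = k + (n+1) := by omega
        rw [he] at h3
        exact h3
    have hbot : ∀ m, (f (sF m)).1 (iF m) ≠ ⊥ := by
      intro m hc
      exact hnlem m (hc ▸ bot_le)
    have hmem0 : ∀ m, iF m ∈ {j | (f (sF 0)).1 j ≠ ⊥} := by
      intro m
      have h := hprop m 0
      have e : (0:ℕ) + m = m := by omega
      rw [e] at h
      rw [Set.mem_setOf_eq, h]
      exact hbot m
    have hinj : Function.Injective iF := by
      intro k m hkm
      by_contra hne
      wlog hlt : k < m generalizing k m
      · exact this hkm.symm (Ne.symm hne) (by omega)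
      exact absurd hkm (ne_of_lt (hichain k m hlt))
    exact (f (sF 0)).2.not_infinite (Set.infinite_of_injective_forall_mem hinj hmem0)
end

section
/- Let P be a wqo poset whose cardinality κ is an infinite cardinal of cofinality ℵ₀. If every subset Q ⊆ P of cardinality < κ, with the order induced from P, is σ-bqo, then P is σ-bqo. -/
universe u v

open Set

theorem bqo_transfer {A : Type*} {B : Type*} (lea : A → A → Prop) (leb : B → B → Prop)
    (e : A ≃ B) (h : ∀ x y, leb (e x) (e y) ↔ lea x y) (hb : IsBqoRel lea) : IsBqoRel leb := by
  intro Bar hBar f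
  obtain ⟨s, hs, t, ht, hst, hle⟩ := hb Bar hBar (fun r => e.symm (f r))
  refine ⟨s, hs, t, ht, hst, ?_⟩
  have := (h _ _).2 hle
  simpa using this

/-- If `P` is a wqo of infinite cardinality `κ` with `cf(κ) = ℵ₀` and every subset of
cardinality `< κ` is `σ`-bqo in the induced order, then `P` is `σ`-bqo. -/
theorem stmt_16 {P : Type u} [PartialOrder P] [Infinite P]
    (hcof : (Cardinal.mk P).ord.cof = Cardinal.aleph0)
    (hwqo : IsWqoRel ((· ≤ ·) : P → P → Prop))
    (hsmall : ∀ Q : Set P, Cardinal.mk Q < Cardinal.mk P →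
      IsSigmaBqoRel (fun x y : Q => x.1 ≤ y.1)) :
    IsSigmaBqoRel ((· ≤ ·) : P → P → Prop) := by
  classical
  set κ := Cardinal.mk P with hκ
  set o := κ.ord with ho
  -- countable cofinal sequence
  obtain ⟨ι, fι, hlsub, hι⟩ := Ordinal.exists_lsub_cof o
  rw [hcof] at hι
  have : Nonempty (Denumerable ι) := Cardinal.denumerable_iff.2 hι
  obtain ⟨d⟩ := this
  let eN : ι ≃ ℕ := @Denumerable.eqv ι d
  let g : ℕ → Ordinal.{u} := fun n => fι (eN.symm n)
  have hg : ∀ n, g n < o := fun n => hlsub ▸ Ordinal.lt_lsub fι _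
  -- identify P with o.toType
  have hcard : Cardinal.mk o.ToType = Cardinal.mk P := by
    rw [ho]; exact Cardinal.mk_ord_toType κ
  obtain ⟨e⟩ : Nonempty (P ≃ o.ToType) := Cardinal.eq.1 hcard.symm
  let x : ℕ → o.ToType := fun n => Ordinal.ToType.mk (o := o) ⟨g n, hg n⟩
  let Q : ℕ → Set P := fun n => {p | e p ≤ x n}
  have hQcover : ∀ p : P, ∃ n, p ∈ Q n := by
    intro p
    set β := (Ordinal.ToType.mk (o := o)).symm (e p) with hβ
    have hβo : (β : Ordinal) < Ordinal.lsub fι := by rw [hlsub]; exact β.2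
    obtain ⟨i, hi⟩ := Ordinal.lt_lsub_iff.1 hβo
    refine ⟨eN i, ?_⟩
    have hgi : g (eN i) = fι i := by simp [g]
    have : β ≤ ⟨g (eN i), hg _⟩ := by
      show (β : Ordinal) ≤ g (eN i)
      rw [hgi]; exact hi
    have := (Ordinal.ToType.mk (o := o)).le_iff_le.2 this
    simpa [Q, x, hβ] using this
  have hQlt : ∀ n, Cardinal.mk (Q n) < Cardinal.mk P := by
    intro n
    have hinj : Function.Injective (fun p : Q n => (⟨e p.1, p.2⟩ : Set.Iic (x n))) := by
      intro a b hab
      simp only [Subtype.mk.injEq] at hab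
      exact Subtype.ext (e.injective (congrArg Subtype.val hab))
    have h1 : Cardinal.mk (Q n) ≤ Cardinal.mk (Set.Iic (x n)) :=
      Cardinal.mk_le_of_injective hinj
    have h2 : (Set.Iic (x n)) = insert (x n) (Set.Iio (x n)) := by
      rw [Set.Iio_insert]
    have h3 : Cardinal.mk (Set.Iic (x n)) ≤ Cardinal.mk (Set.Iio (x n)) + 1 := by
      rw [h2]; exact Cardinal.mk_insert_le
    have h4 : Cardinal.mk (Set.Iio (x n)) < κ := Cardinal.mk_Iio_ord_toType (x n)
    have h5 : (1 : Cardinal) < κ := by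
      have := Cardinal.aleph0_le_mk P
      exact lt_of_lt_of_le Cardinal.one_lt_aleph0 (by rwa [hκ])
    calc Cardinal.mk (Q n) ≤ Cardinal.mk (Set.Iio (x n)) + 1 := h1.trans h3
      _ < κ := Cardinal.add_lt_of_lt (by rw [hκ]; exact Cardinal.aleph0_le_mk P) h4 h5
  -- decompose each Q n
  choose S hSu hSb using fun n => (hsmall (Q n) (hQlt n)).2
  refine ⟨hwqo, fun k => Subtype.val '' (S k.unpair.1 k.unpair.2), ?_, ?_⟩
  · ext p
    simp only [Set.mem_iUnion, Set.mem_univ, iff_true]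
    obtain ⟨n, hn⟩ := hQcover p
    have : (⟨p, hn⟩ : Q n) ∈ ⋃ m, S n m := by rw [hSu n]; trivial
    obtain ⟨m, hm⟩ := Set.mem_iUnion.1 this
    refine ⟨Nat.pair n m, ?_⟩
    have hup : (Nat.pair n m).unpair = (n, m) := Nat.unpair_pair n m
    rw [hup]
    exact ⟨⟨p, hn⟩, hm, rfl⟩
  · intro k
    refine bqo_transfer _ _
      (Equiv.Set.image Subtype.val (S k.unpair.1 k.unpair.2) Subtype.val_injective) ?_
      (hSb k.unpair.1 k.unpair.2)
    intro a b
    rfl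
end

section
/- Let f be a function from a barrier U into a poset P. Then there is a sub-barrier V ⊆ U such that the restriction f↾V is either bad or perfect. -/
universe u v

open Set

namespace NW

def Accepts (F : Set (Finset ℕ)) (s : Finset ℕ) (Z : Set ℕ) : Prop :=
  ∀ W : Set ℕ, W ⊆ Z → W.Infinite → (∀ w ∈ W, ∀ y ∈ s, y < w) →
    ∃ r ∈ F, NatInitSeg r (↑s ∪ W)

def Rejects (F : Set (Finset ℕ)) (s : Finset ℕ) (Z : Set ℕ) : Prop :=
  ∀ Y ⊆ Z, Y.Infinite → ¬ Accepts F s Y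

theorem Accepts.mono {F s} {Z Z' : Set ℕ} (h : Accepts F s Z) (hZ : Z' ⊆ Z) :
    Accepts F s Z' := fun W hW => h W (hW.trans hZ)

theorem Rejects.mono {F s} {Z Z' : Set ℕ} (h : Rejects F s Z) (hZ : Z' ⊆ Z) :
    Rejects F s Z' := fun Y hY => h Y (hY.trans hZ)

/-- every infinite set has an infinite subset deciding `s`. -/
theorem exists_decide (F : Set (Finset ℕ)) (s : Finset ℕ) (X : Set ℕ) (hX : X.Infinite) :
    ∃ Z ⊆ X, Z.Infinite ∧ (Accepts F s Z ∨ Rejects F s Z) := by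
  by_cases h : ∃ Z ⊆ X, Z.Infinite ∧ Accepts F s Z
  · obtain ⟨Z, h1, h2, h3⟩ := h
    exact ⟨Z, h1, h2, Or.inl h3⟩
  · push_neg at h
    exact ⟨X, subset_rfl, hX, Or.inr fun Y hY hYi hacc => h Y hY hYi hacc⟩

/-- dependent-choice sequence builder. -/
theorem seq_choice {α : Type*} (P : α → Prop) (R : α → α → Prop) (a0 : α) (h0 : P a0)
    (step : ∀ a, P a → ∃ b, P b ∧ R a b) :
    ∃ u : ℕ → α, u 0 = a0 ∧ (∀ n, P (u n)) ∧ ∀ n, R (u n) (u (n + 1)) := by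
  have step' : ∀ a : {a // P a}, ∃ b : {a // P a}, R a.1 b.1 := by
    rintro ⟨a, ha⟩
    obtain ⟨b, hb, hr⟩ := step a ha
    exact ⟨⟨b, hb⟩, hr⟩
  choose f hf using step'
  refine ⟨fun n => (f^[n] ⟨a0, h0⟩).1, rfl, fun n => (f^[n] ⟨a0, h0⟩).2, fun n => ?_⟩
  simp only []
  rw [show n + 1 = n + 1 from rfl, Function.iterate_succ_apply']
  exact hf _

theorem infinite_tail {Y : Set ℕ} (hY : Y.Infinite) (n : ℕ) :
    (Y ∩ {x | n < x}).Infinite := by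
  refine (hY.diff (Set.finite_le_nat n)).mono fun x hx => ?_
  exact ⟨hx.1, show n < x from lt_of_not_ge (show ¬ x ≤ n from hx.2)⟩

theorem reject_extend (F : Set (Finset ℕ)) (s : Finset ℕ) (X : Set ℕ) (hX : X.Infinite)
    (hrej : Rejects F s X) :
    ∃ Z ⊆ X, Z.Infinite ∧ ∀ n ∈ Z, Rejects F (insert n s) Z := by
  classical
  -- invariant for states (z, Z)
  set P : ℕ × Set ℕ → Prop := fun p =>
    p.1 ∈ X ∧ p.2 ⊆ X ∧ p.2.Infinite ∧ (∀ x ∈ p.2, p.1 < x) ∧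
      (Accepts F (insert p.1 s) p.2 ∨ Rejects F (insert p.1 s) p.2) with hP
  set R : ℕ × Set ℕ → ℕ × Set ℕ → Prop := fun p q => q.1 ∈ p.2 ∧ q.2 ⊆ p.2 with hR
  have mkstate : ∀ Y : Set ℕ, Y ⊆ X → Y.Infinite → ∃ p : ℕ × Set ℕ,
      P p ∧ p.1 ∈ Y ∧ p.2 ⊆ Y := by
    intro Y hYX hYi
    set z := sInf Y with hz
    have hzY : z ∈ Y := Nat.sInf_mem hYi.nonempty
    have htail : (Y ∩ {x | z < x}).Infinite := infinite_tail hYi z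
    obtain ⟨Z, hZ1, hZ2, hZ3⟩ := exists_decide F (insert z s) _ htail
    refine ⟨(z, Z), ⟨hYX hzY, (hZ1.trans (Set.inter_subset_left)).trans hYX, hZ2,
      fun x hx => (hZ1 hx).2, hZ3⟩, hzY, hZ1.trans Set.inter_subset_left⟩
  obtain ⟨p0, hp0, -, -⟩ := mkstate X subset_rfl hX
  have step : ∀ p, P p → ∃ q, P q ∧ R p q := by
    intro p hp
    obtain ⟨q, hq, hq1, hq2⟩ := mkstate p.2 hp.2.1 hp.2.2.1
    exact ⟨q, hq, hq1, hq2⟩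
  obtain ⟨u, -, hu, hur⟩ := seq_choice P R p0 hp0 step
  set z : ℕ → ℕ := fun n => (u n).1 with hzdef
  set Z : ℕ → Set ℕ := fun n => (u n).2 with hZdef
  have hsub : ∀ {n m}, n ≤ m → Z m ⊆ Z n := by
    intro n m h
    induction h with
    | refl => exact subset_rfl
    | step h ih => exact (hur _).2.trans ih
  have hmem : ∀ {n m}, n < m → z m ∈ Z n := by
    intro n m h
    have : z m ∈ Z (m - 1) := by
      have := (hur (m-1)).1
      have hm : m - 1 + 1 = m := Nat.succ_pred_eq_of_pos (Nat.zero_lt_of_lt h)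
      rwa [hm] at this
    exact hsub (Nat.le_pred_of_lt h) this
  have hzlt : ∀ {n m}, n < m → z n < z m := fun {n m} h => (hu n).2.2.2.1 _ (hmem h)
  have hzinj : Function.Injective z := by
    intro a b hab
    rcases lt_trichotomy a b with h | h | h
    · exact absurd hab (hzlt h).ne
    · exact h
    · exact absurd hab.symm (hzlt h).ne
  have hzX : ∀ n, z n ∈ X := fun n => (hu n).1
  set I : Set ℕ := {i | Accepts F (insert (z i) s) (Z i)} with hI
  rcases Set.finite_or_infinite I with hIfin | hIinf
  · -- rejection case: use tail beyond a bound of I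
    obtain ⟨N, hN⟩ : ∃ N, ∀ i ∈ I, i < N := by
      rcases hIfin.bddAbove with ⟨N, hN⟩
      exact ⟨N + 1, fun i hi => Nat.lt_succ_of_le (hN hi)⟩
    refine ⟨z '' {i | N ≤ i}, ?_, ?_, ?_⟩
    · rintro x ⟨i, -, rfl⟩; exact hzX i
    · exact (Set.Ioi_infinite N).mono (fun i (hi : N < i) => le_of_lt hi) |>.image
        (Set.injOn_of_injective hzinj)
    · rintro n ⟨i, (hi : N ≤ i), rfl⟩ Y hY hYi hacc
      have hrejZi : Rejects F (insert (z i) s) (Z i) := by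
        rcases (hu i).2.2.2.2 with h | h
        · exact absurd (hN i h) (not_lt.mpr hi)
        · exact h
      have htail : (Y ∩ {x | z i < x}).Infinite := infinite_tail hYi (z i)
      have hsubZ : Y ∩ {x | z i < x} ⊆ Z i := by
        rintro x ⟨hx1, hx2⟩
        obtain ⟨j, -, rfl⟩ := hY hx1
        have hx2' : z i < z j := hx2
        have hij : i < j := by
          by_contra h
          rcases (Nat.le_of_not_lt h).lt_or_eq with h' | h'
          · exact absurd hx2' (not_lt.mpr (hzlt h').le)
          · exact absurd hx2' (by simp [h'])
        exact hmem hij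
      exact hrejZi _ hsubZ htail (hacc.mono Set.inter_subset_left)
  · -- acceptance case: contradiction with hrej
    exfalso
    set Y := z '' I with hY
    have hYX : Y ⊆ X := by rintro x ⟨i, -, rfl⟩; exact hzX i
    have hYi : Y.Infinite := hIinf.image (Set.injOn_of_injective hzinj)
    refine hrej Y hYX hYi ?_
    intro W hW hWi hWgt
    set m := sInf W with hm
    have hmW : m ∈ W := Nat.sInf_mem hWi.nonempty
    obtain ⟨i, hiI, hmi⟩ := hW hmW
    have hacc : Accepts F (insert (z i) s) (Z i) := hiI
    have hW' : W \ {m} ⊆ Z i := by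
      rintro x ⟨hx1, hx2⟩
      obtain ⟨j, -, rfl⟩ := hW hx1
      have hgt : m < z j := lt_of_le_of_ne (Nat.sInf_le hx1) (Ne.symm hx2)
      rw [← hmi] at hgt
      have : i < j := by
        by_contra h
        rcases (Nat.le_of_not_lt h).lt_or_eq with h' | h'
        · exact (hzlt h').not_gt hgt
        · exact hgt.ne' (by rw [h'])
      exact hmem this
    have hW'i : (W \ {m}).Infinite := hWi.diff (Set.finite_singleton m)
    have hW'gt : ∀ w ∈ W \ {m}, ∀ y ∈ insert (z i) s, y < w := by
      rintro w ⟨hw1, hw2⟩ y hy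
      rcases Finset.mem_insert.mp hy with rfl | hy
      · rw [hmi]; exact lt_of_le_of_ne (Nat.sInf_le hw1) (Ne.symm (by simpa using hw2))
      · exact hWgt w hw1 y hy
    obtain ⟨r, hr, hseg⟩ := hacc _ hW' hW'i hW'gt
    refine ⟨r, hr, ?_⟩
    have : (↑(insert (z i) s) : Set ℕ) ∪ (W \ {m}) = ↑s ∪ W := by
      rw [Finset.coe_insert]
      ext x
      simp only [Set.mem_union, Set.mem_insert_iff, Set.mem_diff, Set.mem_singleton_iff,
        Finset.coe_insert]
      constructor
      · rintro (⟨rfl | h⟩ | ⟨h, -⟩)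
        · right; rwa [hmi]
        · left; exact h
        · right; exact h
      · rintro (h | h)
        · exact Or.inl (Or.inr h)
        · by_cases hxm : x = m
          · subst hxm; exact Or.inl (Or.inl hmi.symm)
          · exact Or.inr ⟨h, hxm⟩
    rwa [this] at hseg

theorem reject_extend_finset (F : Set (Finset ℕ)) (S : Finset (Finset ℕ)) (X : Set ℕ)
    (hX : X.Infinite) (h : ∀ s ∈ S, Rejects F s X) :
    ∃ Z ⊆ X, Z.Infinite ∧ ∀ s ∈ S, Rejects F s Z ∧ ∀ n ∈ Z, Rejects F (insert n s) Z := by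
  classical
  induction S using Finset.induction generalizing X with
  | empty => exact ⟨X, subset_rfl, hX, by simp⟩
  | @insert a S ha ih =>
    obtain ⟨Z₁, hZ₁X, hZ₁i, hZ₁⟩ := ih X hX (fun s hs => h s (Finset.mem_insert_of_mem hs))
    have hra : Rejects F a Z₁ := (h a (Finset.mem_insert_self a S)).mono hZ₁X
    obtain ⟨Z, hZZ₁, hZi, hZ⟩ := reject_extend F a Z₁ hZ₁i hra
    refine ⟨Z, hZZ₁.trans hZ₁X, hZi, fun s hs => ?_⟩
    rcases Finset.mem_insert.mp hs with rfl | hs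
    · exact ⟨hra.mono hZZ₁, hZ⟩
    · exact ⟨(hZ₁ s hs).1.mono hZZ₁, fun n hn => ((hZ₁ s hs).2 n (hZZ₁ hn)).mono hZZ₁⟩

theorem master (F : Set (Finset ℕ)) (M : Set ℕ) (hM : M.Infinite) (h0 : Rejects F ∅ M) :
    ∃ X ⊆ M, X.Infinite ∧
      ∀ s : Finset ℕ, ↑s ⊆ X → ∀ Y ⊆ X, Y.Infinite → ¬ Accepts F s Y := by
  classical
  set P : Finset ℕ × Set ℕ → Prop := fun p =>
    ↑p.1 ⊆ M ∧ p.2 ⊆ M ∧ p.2.Infinite ∧ (∀ x ∈ p.2, ∀ e ∈ p.1, e < x) ∧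
      ∀ s ∈ p.1.powerset, Rejects F s p.2 with hPdef
  set R : Finset ℕ × Set ℕ → Finset ℕ × Set ℕ → Prop := fun p q =>
    ∃ x ∈ p.2, q.1 = insert x p.1 ∧ q.2 ⊆ p.2 ∧ ∀ y ∈ q.2, x < y with hRdef
  have hp0 : P (∅, M) := ⟨by simp, subset_rfl, hM, by simp, by simpa using h0⟩
  have step : ∀ p, P p → ∃ q, P q ∧ R p q := by
    rintro ⟨E, X⟩ ⟨hEM, hXM, hXi, hEX, hrejs⟩
    obtain ⟨Z, hZX, hZi, hZ⟩ := reject_extend_finset F E.powerset X hXi hrejs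
    set x := sInf Z with hx
    have hxZ : x ∈ Z := Nat.sInf_mem hZi.nonempty
    set X' := Z ∩ {y | x < y} with hX'
    have hX'Z : X' ⊆ Z := Set.inter_subset_left
    have hX'i : X'.Infinite := infinite_tail hZi x
    refine ⟨(insert x E, X'), ⟨?_, (hX'Z.trans hZX).trans hXM, hX'i, ?_, ?_⟩,
      x, hZX hxZ, rfl, hX'Z.trans hZX, fun y hy => hy.2⟩
    · rw [Finset.coe_insert]
      exact Set.insert_subset (hXM (hZX hxZ)) hEM
    · intro y hy e he
      rcases Finset.mem_insert.mp he with rfl | he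
      · exact hy.2
      · exact hEX y (hZX (hX'Z hy)) e he
    · intro s hs
      rw [Finset.mem_powerset] at hs
      by_cases hxs : x ∈ s
      · have h1 : s.erase x ∈ E.powerset := by
          rw [Finset.mem_powerset]
          intro a ha
          rcases Finset.mem_insert.mp (hs (Finset.mem_of_mem_erase ha)) with rfl | h
          · exact absurd rfl (Finset.ne_of_mem_erase ha)
          · exact h
        have := (hZ _ h1).2 x hxZ
        rw [Finset.insert_erase hxs] at this
        exact this.mono hX'Z
      · have h1 : s ∈ E.powerset := by
          rw [Finset.mem_powerset]
          intro a ha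
          rcases Finset.mem_insert.mp (hs ha) with rfl | h
          · exact absurd ha hxs
          · exact h
        exact (hZ s h1).1.mono hX'Z
  obtain ⟨u, hu0, hu, hur⟩ := seq_choice P R (∅, M) hp0 step
  set E : ℕ → Finset ℕ := fun n => (u n).1 with hEdef
  set X : ℕ → Set ℕ := fun n => (u n).2 with hXdef
  choose x hxX hEsucc hXsucc hXgt using hur
  have hXsub : ∀ {n m}, n ≤ m → X m ⊆ X n := by
    intro n m h
    induction h with
    | refl => exact subset_rfl
    | step h ih => exact (hXsucc _).trans ih
  have hxmem : ∀ {n m}, n ≤ m → x m ∈ X n := fun {n m} h => hXsub h (hxX m)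
  have hxlt : ∀ {n m}, n < m → x n < x m := by
    intro n m h
    exact hXgt n (x m) (hXsub h (hxX m))
  have hEeq : ∀ n, (↑(E n) : Set ℕ) = x '' {j | j < n} := by
    intro n
    induction n with
    | zero =>
      have : E 0 = ∅ := by show (u 0).1 = ∅; rw [hu0]
      simp [this]
    | succ n ih =>
      have : E (n+1) = insert (x n) (E n) := hEsucc n
      rw [this, Finset.coe_insert, ih]
      ext a
      simp only [Set.mem_insert_iff, Set.mem_image, Set.mem_setOf_eq]
      constructor
      · rintro (rfl | ⟨j, hj, rfl⟩)
        · exact ⟨n, Nat.lt_succ_self n, rfl⟩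
        · exact ⟨j, Nat.lt_succ_of_lt hj, rfl⟩
      · rintro ⟨j, hj, rfl⟩
        rcases Nat.lt_succ_iff_lt_or_eq.mp hj with h | rfl
        · exact Or.inr ⟨j, h, rfl⟩
        · exact Or.inl rfl
  refine ⟨Set.range x, ?_, ?_, ?_⟩
  · rintro y ⟨n, rfl⟩; exact (hu n).2.1 (hxX n)
  · refine Set.infinite_range_of_injective ?_
    intro a b hab
    rcases lt_trichotomy a b with h | h | h
    · exact absurd hab (hxlt h).ne
    · exact h
    · exact absurd hab.symm (hxlt h).ne
  · intro s hs Y hY hYi hacc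
    -- find n with s ⊆ E n
    have hchoice : ∀ a ∈ s, ∃ j, a = x j ∧ True := by
      intro a ha
      obtain ⟨j, rfl⟩ := hs ha
      exact ⟨j, rfl, trivial⟩
    choose g hg _ using hchoice
    set n := (s.sup fun a => if h : a ∈ s then g a h else 0) + 1 with hn
    have hsE : s ∈ (E n).powerset := by
      rw [Finset.mem_powerset]
      intro a ha
      have h1 : (↑(E n) : Set ℕ) = x '' {j | j < n} := hEeq n
      have h2 : g a ha < n := by
        have : g a ha ≤ s.sup fun a => if h : a ∈ s then g a h else 0 := by
          have := Finset.le_sup (f := fun a => if h : a ∈ s then g a h else 0) ha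
          simpa [ha] using this
        omega
      have : a ∈ (↑(E n) : Set ℕ) := by
        rw [h1]
        exact ⟨g a ha, h2, (hg a ha).symm⟩
      exact this
    have hrej : Rejects F s (X n) := (hu n).2.2.2.2 s hsE
    set Y' := Y ∩ {y | x n ≤ y} with hY'
    have hY'i : Y'.Infinite := by
      refine (infinite_tail hYi (x n)).mono ?_
      rintro a ⟨h1, h2⟩
      exact ⟨h1, show x n ≤ a from le_of_lt (show x n < a from h2)⟩
    have hY'X : Y' ⊆ X n := by
      rintro a ⟨h1, h2⟩
      obtain ⟨j, rfl⟩ := hY h1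
      have hnj : n ≤ j := by
        by_contra h
        exact absurd h2 (not_le.mpr (hxlt (Nat.lt_of_not_le h)))
      exact hxmem hnj
    exact hrej Y' hY'X hY'i (hacc.mono Set.inter_subset_left)

theorem nashWilliams (F : Set (Finset ℕ)) (M : Set ℕ) (hM : M.Infinite) :
    ∃ X ⊆ M, X.Infinite ∧
      ((∀ Y ⊆ X, Y.Infinite → ∃ r ∈ F, NatInitSeg r Y) ∨
       (∀ Y ⊆ X, Y.Infinite → ¬ ∃ r ∈ F, NatInitSeg r Y)) := by
  obtain ⟨Z, hZM, hZi, hdec⟩ := exists_decide F ∅ M hM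
  rcases hdec with hacc | hrej
  · refine ⟨Z, hZM, hZi, Or.inl fun Y hY hYi => ?_⟩
    obtain ⟨r, hr, hseg⟩ := hacc Y hY hYi (by simp)
    refine ⟨r, hr, ?_⟩
    simpa using hseg
  · obtain ⟨X, hXZ, hXi, hmain⟩ := master F Z hZi hrej
    refine ⟨X, hXZ.trans hZM, hXi, Or.inr fun Y hY hYi => ?_⟩
    rintro ⟨r, hrF, hseg⟩
    have hrY : ↑r ⊆ Y := hseg.1
    have hYr : (Y \ ↑r).Infinite := hYi.diff r.finite_toSet
    refine hmain r (hrY.trans hY) (Y \ ↑r) ((Set.diff_subset).trans hY) hYr ?_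
    intro W hW hWi hWgt
    refine ⟨r, hrF, ?_, ?_⟩
    · exact Set.subset_union_left
    · intro a ha har y hy
      rcases ha with ha | ha
      · exact absurd ha har
      · exact hWgt a ha y hy

end NW


namespace NW

theorem initSeg_comparable {r r' : Finset ℕ} {Y : Set ℕ}
    (h : NatInitSeg r Y) (h' : NatInitSeg r' Y) : r ⊆ r' ∨ r' ⊆ r := by
  by_contra hc
  push_neg at hc
  obtain ⟨a, ha, ha'⟩ := Finset.not_subset.mp hc.1
  obtain ⟨b, hb, hb'⟩ := Finset.not_subset.mp hc.2
  have h1 : b < a := h'.2 a (h.1 ha) ha' b hb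
  have h2 : a < b := h.2 b (h'.1 hb) hb' a ha
  omega

theorem initSeg_unique {U : Set (Finset ℕ)} (hanti : ∀ x ∈ U, ∀ y ∈ U, x ⊆ y → x = y)
    {r r' : Finset ℕ} {Y : Set ℕ} (hr : r ∈ U) (hr' : r' ∈ U)
    (h : NatInitSeg r Y) (h' : NatInitSeg r' Y) : r = r' := by
  rcases initSeg_comparable h h' with hc | hc
  · exact hanti r hr r' hr' hc
  · exact (hanti r' hr' r hr hc).symm

theorem barrier_empty_not_mem {U : Set (Finset ℕ)} (hU : IsBarrier U) : ∅ ∉ U := by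
  intro h
  refine hU.1 (Set.Finite.subset (Set.finite_singleton ∅) fun b hb => ?_)
  exact (hU.2.1 ∅ h b hb (Finset.empty_subset b)).symm

theorem barrier_base_infinite {U : Set (Finset ℕ)} (hU : IsBarrier U) :
    (⋃ b ∈ U, (↑b : Set ℕ)).Infinite := by
  by_contra h
  rw [Set.not_infinite] at h
  refine hU.1 (Set.Finite.subset (h.toFinset.powerset.finite_toSet) fun b hb => ?_)
  simp only [Finset.coe_powerset, Set.mem_preimage, Set.mem_powerset_iff]
  intro a ha
  simp only [Finset.coe_sort_coe, Set.Finite.coe_toFinset]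
  exact Set.mem_biUnion hb ha

/-- elements of `t` not in `s` dominate `s`, when `s ◁ t`. -/
theorem shiftExt_dominate {s t : Finset ℕ} (h : ShiftExt s t) :
    ∀ x ∈ t, x ∉ s → ∀ y ∈ s, y < x := by
  obtain ⟨m, hm, hmin, hmt, hsub, -, hseg⟩ := h
  intro x hx hxs y hy
  by_cases hym : y = m
  · subst hym; exact hmt x hx
  · exact hseg x hx (fun hc => hxs (Finset.mem_of_mem_erase hc)) y
      (Finset.mem_erase.mpr ⟨hym, hy⟩)

/-- the canonical infinite extension of `s ∪ t` inside `X`. -/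
def extSet (s t : Finset ℕ) (X : Set ℕ) : Set ℕ :=
  ↑s ∪ ↑t ∪ (X ∩ {x | ∀ y ∈ s ∪ t, y < x})

theorem extSet_subset {s t : Finset ℕ} {X : Set ℕ} (hs : ↑s ⊆ X) (ht : ↑t ⊆ X) :
    extSet s t X ⊆ X := by
  rintro x ((h | h) | h)
  · exact hs h
  · exact ht h
  · exact h.1

theorem extSet_infinite {s t : Finset ℕ} {X : Set ℕ} (hX : X.Infinite) :
    (extSet s t X).Infinite := by
  refine ((infinite_tail hX ((s ∪ t).sup id)).mono ?_).mono
    (Set.subset_union_right)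
  rintro x ⟨h1, h2⟩
  exact ⟨h1, fun y hy => lt_of_le_of_lt (Finset.le_sup (f := id) hy) h2⟩

theorem extSet_initSeg_union {s t : Finset ℕ} {X : Set ℕ} :
    NatInitSeg (s ∪ t) (extSet s t X) := by
  constructor
  · rw [Finset.coe_union]
    exact Set.subset_union_left
  · rintro x ((h | h) | h) hx y hy
    · exact absurd (Finset.mem_union_left t h) hx
    · exact absurd (Finset.mem_union_right s h) hx
    · exact h.2 y hy

/-- from an initial segment `s' ∪ t'` (with `s' ◁ t'`), extract that `s'` is an initial
segment. -/
theorem initSeg_left {s' t' : Finset ℕ} {Y : Set ℕ} (h : ShiftExt s' t')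
    (hseg : NatInitSeg (s' ∪ t') Y) : NatInitSeg s' Y := by
  constructor
  · exact fun a ha => hseg.1 (by simp [Finset.coe_union]; exact Or.inl ha)
  · intro x hx hxs y hy
    by_cases hst : x ∈ s' ∪ t'
    · rcases Finset.mem_union.mp hst with hc | hc
      · exact absurd hc hxs
      · exact shiftExt_dominate h x hc hxs y hy
    · exact hseg.2 x hx hst y (Finset.mem_union_left t' hy)

/-- similarly `t'` is an initial segment of `Y` minus the least point. -/
theorem initSeg_right {s' t' : Finset ℕ} {Y : Set ℕ} {m : ℕ} (hm : m ∈ s')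
    (hmin : ∀ x ∈ s', m ≤ x) (hmt : ∀ y ∈ t', m < y)
    (hsub : s'.erase m ⊆ t')
    (hseg : NatInitSeg (s' ∪ t') Y) : NatInitSeg t' (Y \ {m}) := by
  constructor
  · intro a ha
    refine ⟨hseg.1 (by rw [Finset.coe_union]; exact Or.inr ha), ?_⟩
    simp only [Set.mem_singleton_iff]
    exact (hmt a ha).ne'
  · rintro x ⟨hx, hxm⟩ hxt y hy
    simp only [Set.mem_singleton_iff] at hxm
    by_cases hst : x ∈ s' ∪ t'
    · rcases Finset.mem_union.mp hst with hc | hc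
      · exact absurd (hsub (Finset.mem_erase.mpr ⟨hxm, hc⟩)) hxt
      · exact absurd hc hxt
    · exact hseg.2 x hx hst y (Finset.mem_union_right s' hy)

end NW

namespace NW

theorem restrict_barrier {U : Set (Finset ℕ)} (hU : IsBarrier U) {X : Set ℕ}
    (hX : X ⊆ (⋃ b ∈ U, (↑b : Set ℕ))) (hXi : X.Infinite) :
    IsBarrier {b ∈ U | ↑b ⊆ X} := by
  set V := {b ∈ U | ↑b ⊆ X} with hVdef
  have hthird : ∀ Y : Set ℕ, Y ⊆ X → Y.Infinite → ∃ r ∈ V, NatInitSeg r Y := by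
    intro Y hYX hYi
    obtain ⟨r, hrU, hseg⟩ := hU.2.2 Y (hYX.trans hX) hYi
    exact ⟨r, ⟨hrU, (hseg.1).trans hYX⟩, hseg⟩
  refine ⟨?_, fun a ha b hb => hU.2.1 a ha.1 b hb.1, fun Y hYbase hYi => ?_⟩
  · by_contra hfin
    rw [Set.not_infinite] at hfin
    have hbase : (⋃ b ∈ V, (↑b : Set ℕ)).Finite :=
      hfin.biUnion (fun b _ => b.finite_toSet)
    obtain ⟨N, hN⟩ := hbase.bddAbove
    obtain ⟨r, hrV, hseg⟩ := hthird (X ∩ {x | N < x}) Set.inter_subset_left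
      (infinite_tail hXi N)
    have hrne : r.Nonempty := Finset.nonempty_of_ne_empty
      (by rintro rfl; exact barrier_empty_not_mem hU hrV.1)
    obtain ⟨a, ha⟩ := hrne
    have h1 : N < a := (hseg.1 ha).2
    have h2 : a ≤ N := hN (Set.mem_biUnion hrV ha)
    omega
  · refine hthird Y ?_ hYi
    refine hYbase.trans ?_
    rintro y hy
    simp only [Set.mem_iUnion] at hy
    obtain ⟨b, hb, hyb⟩ := hy
    exact hb.2 hyb

end NW


/-- For every map `f` from a barrier `U` into a poset `P` there is a sub-barrier `V ⊆ U`
on which `f` is either bad or perfect. -/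
theorem stmt_17 {P : Type u} [PartialOrder P] (U : Set (Finset ℕ)) (hU : IsBarrier U)
    (f : Finset ℕ → P) :
    ∃ V ⊆ U, IsBarrier V ∧
      ((∀ s ∈ V, ∀ t ∈ V, ShiftExt s t → ¬ f s ≤ f t) ∨
       (∀ s ∈ V, ∀ t ∈ V, ShiftExt s t → f s ≤ f t)) := by
  classical
  set M := ⋃ b ∈ U, (↑b : Set ℕ) with hMdef
  have hMi := NW.barrier_base_infinite hU
  set F : Set (Finset ℕ) :=
    {r | ∃ s t : Finset ℕ, s ∈ U ∧ t ∈ U ∧ ShiftExt s t ∧ f s ≤ f t ∧ r = s ∪ t} with hFdef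
  obtain ⟨X, hXM, hXi, hbranch⟩ := NW.nashWilliams F M hMi
  set V := {b ∈ U | ↑b ⊆ X} with hVdef
  have hVb : IsBarrier V := NW.restrict_barrier hU hXM hXi
  have hext : ∀ s ∈ V, ∀ t ∈ V, NW.extSet s t X ⊆ X ∧ (NW.extSet s t X).Infinite :=
    fun s hs t ht => ⟨NW.extSet_subset hs.2 ht.2, NW.extSet_infinite hXi⟩
  have key : ∀ s ∈ V, ∀ t ∈ V, ShiftExt s t →
      (f s ≤ f t ↔ ∃ r ∈ F, NatInitSeg r (NW.extSet s t X)) := by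
    intro s hs t ht hst
    constructor
    · intro hle
      exact ⟨s ∪ t, ⟨s, t, hs.1, ht.1, hst, hle, rfl⟩, NW.extSet_initSeg_union⟩
    · rintro ⟨r, ⟨s', t', hs', ht', hst', hle', rfl⟩, hseg⟩
      have hsY : NatInitSeg s (NW.extSet s t X) :=
        NW.initSeg_left hst NW.extSet_initSeg_union
      have hs'Y : NatInitSeg s' (NW.extSet s t X) := NW.initSeg_left hst' hseg
      have hss : s' = s := NW.initSeg_unique hU.2.1 hs' hs.1 hs'Y hsY
      obtain ⟨m, hm, hmin, hmt, hsub⟩ := hst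
      obtain ⟨m', hm', hmin', hmt', hsub'⟩ := hst'
      have hmm : m' = m := by
        rw [hss] at hm' hmin'
        exact le_antisymm (hmin' m hm) (hmin m' hm')
      have htY : NatInitSeg t (NW.extSet s t X \ {m}) :=
        NW.initSeg_right hm hmin hmt hsub.1 NW.extSet_initSeg_union
      have ht'Y : NatInitSeg t' (NW.extSet s t X \ {m'}) :=
        NW.initSeg_right hm' hmin' hmt' hsub'.1 hseg
      rw [hmm] at ht'Y
      have htt : t' = t := NW.initSeg_unique hU.2.1 ht' ht.1 ht'Y htY
      rwa [hss, htt] at hle'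
  refine ⟨V, fun b hb => hb.1, hVb, ?_⟩
  rcases hbranch with hall | hnone
  · right
    intro s hs t ht hst
    exact (key s hs t ht hst).2
      (hall _ (hext s hs t ht).1 (hext s hs t ht).2)
  · left
    intro s hs t ht hst hle
    exact hnone _ (hext s hs t ht).1 (hext s hs t ht).2 ((key s hs t ht hst).1 hle)
end
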